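/- arXiv:1306.1931 — 9 statements merged into one kernel-verified Lean document; each statement's English description precedes it below -/
import Mathlib

section
/- The operators π̄₁,...,π̄_{n-1} defined on the Stanley-Reisner ring F[Bₙ] of the Boolean algebra by π̄ᵢ(y_M) = -y_M if p_i(M) > p_{i+1}(M), π̄ᵢ(y_M) = 0 if p_i(M) = p_{i+1}(M), and π̄ᵢ(y_M) = s_i(y_M) if p_i(M) < p_{i+1}(M), satisfy the 0-Hecke algebra relations: π̄ᵢ² = -π̄ᵢ, π̄ᵢπ̄ⱼ = π̄ⱼπ̄ᵢ for |i-j| > 1, and π̄ᵢπ̄_{i+1}π̄ᵢ = π̄_{i+1}π̄ᵢπ̄_{i+1}. -/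
set_option synthInstance.maxHeartbeats 1000000
set_option maxHeartbeats 1000000

open scoped Classical

/-- Multichains in the Boolean algebra `Bₙ`: multisets of pairwise comparable subsets of
`[n]`.  These index the monomial basis `{y_M}` of the Stanley-Reisner ring `F[Bₙ]`. -/
def MChain (n : ℕ) : Type :=
  {m : Multiset (Finset (Fin n)) // ∀ A ∈ m, ∀ B ∈ m, A ⊆ B ∨ B ⊆ A}

/-- The action of a permutation on a multichain, permuting the elements `1,…,n`. -/
def permChain {n : ℕ} (σ : Equiv.Perm (Fin n)) (m : MChain n) : MChain n :=
  ⟨m.1.map (Finset.image σ), by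
    intro A hA B hB
    obtain ⟨A', hA', rfl⟩ := Multiset.mem_map.mp hA
    obtain ⟨B', hB', rfl⟩ := Multiset.mem_map.mp hB
    rcases m.2 A' hA' B' hB' with h | h
    · exact Or.inl (Finset.image_subset_image h)
    · exact Or.inr (Finset.image_subset_image h)⟩

/-- The operator `π̄ᵢ` on the Stanley-Reisner ring `F[Bₙ]` (realized as the free
`F`-module on multichains):  `π̄ᵢ(y_M) = -y_M` if `p_i(M) > p_{i+1}(M)`,
`π̄ᵢ(y_M) = 0` if `p_i(M) = p_{i+1}(M)`, and `π̄ᵢ(y_M) = sᵢ(y_M)` if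
`p_i(M) < p_{i+1}(M)`.  Here indices are 0-based: `pibarOp i` is the paper's `π̄_{i+1}`,
and `p_i(M) > p_{i+1}(M)` holds iff some member of `M` contains `i+1` but not `i`. -/
noncomputable def pibarOp {F : Type*} [Field F] {n : ℕ} (i : ℕ) (hi : i + 1 < n) :
    (MChain n →₀ F) →ₗ[F] (MChain n →₀ F) :=
  Finsupp.lsum F (fun m : MChain n =>
    if ∃ A ∈ m.1, (⟨i + 1, hi⟩ : Fin n) ∈ A ∧ (⟨i, Nat.lt_of_succ_lt hi⟩ : Fin n) ∉ A then
      -(Finsupp.lsingle m)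
    else if ∀ A ∈ m.1,
        ((⟨i, Nat.lt_of_succ_lt hi⟩ : Fin n) ∈ A ↔ (⟨i + 1, hi⟩ : Fin n) ∈ A) then
      0
    else
      Finsupp.lsingle
        (permChain (Equiv.swap ⟨i, Nat.lt_of_succ_lt hi⟩ ⟨i + 1, hi⟩) m))



noncomputable def cnt {n : ℕ} (x : Fin n) (m : MChain n) : ℕ :=
  (m.1.filter (fun A => x ∉ A)).card

lemma cnt_perm {n : ℕ} (σ : Equiv.Perm (Fin n)) (x : Fin n) (m : MChain n) :
    cnt x (permChain σ m) = cnt (σ.symm x) m := by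
  show ((m.1.map (Finset.image σ)).filter _).card = _
  rw [Multiset.filter_map, Multiset.card_map]
  unfold cnt
  congr 1
  apply Multiset.filter_congr
  intro A _
  simp [Function.comp, Finset.mem_image, Equiv.apply_eq_iff_eq_symm_apply]

lemma card_filter_split {α : Type*} (p q : α → Prop) [DecidablePred p] [DecidablePred q]
    (s : Multiset α) :
    (s.filter p).card =
      (s.filter (fun a => p a ∧ q a)).card + (s.filter (fun a => p a ∧ ¬ q a)).card := by
  induction s using Multiset.induction with
  | empty => simp
  | cons a s ih =>
    by_cases hp : p a <;> by_cases hq : q a <;>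
      simp [Multiset.filter_cons, hp, hq, ih] <;> omega

lemma permChain_permChain {n : ℕ} (σ τ : Equiv.Perm (Fin n)) (m : MChain n) :
    permChain σ (permChain τ m) = permChain (σ * τ) m := by
  apply Subtype.ext
  show (m.1.map _).map _ = m.1.map _
  rw [Multiset.map_map]
  congr 1
  funext A
  simp [Function.comp, Finset.image_image]

lemma chain_cross {n : ℕ} (m : MChain n) (x y : Fin n)
    (h : ∃ A ∈ m.1, y ∈ A ∧ x ∉ A) : ∀ B ∈ m.1, x ∈ B → y ∈ B := by
  obtain ⟨A, hA, hyA, hxA⟩ := h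
  intro B hB hxB
  rcases m.2 A hA B hB with hs | hs
  · exact hs hyA
  · exact absurd (hs hxB) hxA

lemma cnt_lt_iff {n : ℕ} (m : MChain n) (x y : Fin n) :
    (∃ A ∈ m.1, y ∈ A ∧ x ∉ A) ↔ cnt y m < cnt x m := by
  have e1 : cnt x m = (m.1.filter (fun A => x ∉ A ∧ y ∈ A)).card
      + (m.1.filter (fun A => x ∉ A ∧ ¬ y ∈ A)).card :=
    card_filter_split (fun A => x ∉ A) (fun A => y ∈ A) m.1
  have e2 : cnt y m = (m.1.filter (fun A => y ∉ A ∧ x ∈ A)).card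
      + (m.1.filter (fun A => y ∉ A ∧ ¬ x ∈ A)).card :=
    card_filter_split (fun A => y ∉ A) (fun A => x ∈ A) m.1
  have e3 : (m.1.filter (fun A => x ∉ A ∧ ¬ y ∈ A)).card
      = (m.1.filter (fun A => y ∉ A ∧ ¬ x ∈ A)).card := by
    congr 1
    apply Multiset.filter_congr
    intro A _
    tauto
  constructor
  · intro h
    have hc := chain_cross m x y h
    have h0 : (m.1.filter (fun A => y ∉ A ∧ x ∈ A)).card = 0 := by
      rw [Multiset.card_eq_zero, Multiset.filter_eq_nil]
      rintro A hA ⟨hy, hx⟩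
      exact hy (hc A hA hx)
    have h1 : 0 < (m.1.filter (fun A => x ∉ A ∧ y ∈ A)).card := by
      obtain ⟨A, hA, hyA, hxA⟩ := h
      rw [Multiset.card_pos_iff_exists_mem]
      exact ⟨A, Multiset.mem_filter.mpr ⟨hA, hxA, hyA⟩⟩
    omega
  · intro h
    have h1 : 0 < (m.1.filter (fun A => x ∉ A ∧ y ∈ A)).card := by omega
    rw [Multiset.card_pos_iff_exists_mem] at h1
    obtain ⟨A, hA⟩ := h1
    rw [Multiset.mem_filter] at hA
    exact ⟨A, hA.1, hA.2.2, hA.2.1⟩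

lemma cnt_eq_iff {n : ℕ} (m : MChain n) (x y : Fin n) :
    (∀ A ∈ m.1, x ∈ A ↔ y ∈ A) ↔ cnt x m = cnt y m := by
  constructor
  · intro h
    unfold cnt
    congr 1
    apply Multiset.filter_congr
    intro A hA
    rw [h A hA]
  · intro h A hA
    constructor
    · intro hx
      by_contra hy
      have := (cnt_lt_iff m y x).mp ⟨A, hA, hx, hy⟩
      omega
    · intro hy
      by_contra hx
      have := (cnt_lt_iff m x y).mp ⟨A, hA, hy, hx⟩
      omega

lemma pibar_single {F : Type*} [Field F] {n : ℕ} (i : ℕ) (hi : i + 1 < n) (m : MChain n) :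
    pibarOp (F := F) i hi (Finsupp.single m 1) =
      (if cnt (⟨i + 1, hi⟩ : Fin n) m < cnt (⟨i, Nat.lt_of_succ_lt hi⟩ : Fin n) m then
        -(Finsupp.single m 1)
      else if cnt (⟨i, Nat.lt_of_succ_lt hi⟩ : Fin n) m = cnt (⟨i + 1, hi⟩ : Fin n) m then 0
      else Finsupp.single
        (permChain (Equiv.swap ⟨i, Nat.lt_of_succ_lt hi⟩ ⟨i + 1, hi⟩) m) 1) := by
  unfold pibarOp
  rw [Finsupp.lsum_single]
  simp only [cnt_lt_iff, cnt_eq_iff]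
  split_ifs <;> simp

lemma lhom_ext1 {F : Type*} [Field F] {n : ℕ}
    {φ ψ : (MChain n →₀ F) →ₗ[F] (MChain n →₀ F)}
    (h : ∀ m, φ (Finsupp.single m 1) = ψ (Finsupp.single m 1)) : φ = ψ := by
  apply Finsupp.lhom_ext
  intro m b
  have hb : (Finsupp.single m b : MChain n →₀ F) = b • Finsupp.single m 1 := by
    simp
  rw [hb, map_smul, map_smul, h]

lemma swap_comm_of_ne {α : Type*} [DecidableEq α] {a b c d : α}
    (h1 : a ≠ c) (h2 : a ≠ d) (h3 : b ≠ c) (h4 : b ≠ d) :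
    Equiv.swap a b * Equiv.swap c d = Equiv.swap c d * Equiv.swap a b := by
  ext x
  simp only [Equiv.Perm.mul_apply, Equiv.swap_apply_def]
  split_ifs <;> simp_all

lemma swap_braid1 {α : Type*} [DecidableEq α] {x y z : α}
    (hxy : x ≠ y) (hyz : y ≠ z) (hxz : x ≠ z) :
    Equiv.swap x y * (Equiv.swap y z * Equiv.swap x y) = Equiv.swap x z := by
  ext w
  simp only [Equiv.Perm.mul_apply, Equiv.swap_apply_def]
  split_ifs <;> simp_all

lemma swap_braid2 {α : Type*} [DecidableEq α] {x y z : α}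
    (hxy : x ≠ y) (hyz : y ≠ z) (hxz : x ≠ z) :
    Equiv.swap y z * (Equiv.swap x y * Equiv.swap y z) = Equiv.swap x z := by
  ext w
  simp only [Equiv.Perm.mul_apply, Equiv.swap_apply_def]
  split_ifs <;> simp_all

lemma perm_symm_mul_apply {α : Type*} (σ τ : Equiv.Perm α) (w : α) :
    (σ * τ).symm w = τ.symm (σ.symm w) := rfl

/-- The operators `π̄₁,…,π̄_{n-1}` on the Stanley-Reisner ring of the Boolean algebra
satisfy the 0-Hecke relations: `π̄ᵢ² = -π̄ᵢ`, `π̄ᵢπ̄ⱼ = π̄ⱼπ̄ᵢ` for `|i-j| > 1`, and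
`π̄ᵢπ̄_{i+1}π̄ᵢ = π̄_{i+1}π̄ᵢπ̄_{i+1}`. -/
theorem stmt_3 {F : Type*} [Field F] (n : ℕ) :
    (∀ (i : ℕ) (hi : i + 1 < n),
      (pibarOp (F := F) i hi) ∘ₗ (pibarOp i hi) = -(pibarOp (F := F) i hi)) ∧
    (∀ (i j : ℕ) (hi : i + 1 < n) (hj : j + 1 < n), (i + 1 < j ∨ j + 1 < i) →
      (pibarOp (F := F) i hi) ∘ₗ (pibarOp j hj) = (pibarOp j hj) ∘ₗ (pibarOp i hi)) ∧
    (∀ (i : ℕ) (hi : i + 2 < n),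
      (pibarOp (F := F) i (by omega)) ∘ₗ (pibarOp (i + 1) hi) ∘ₗ (pibarOp i (by omega))
        = (pibarOp (i + 1) hi) ∘ₗ (pibarOp i (by omega)) ∘ₗ (pibarOp (i + 1) hi)) := by
  refine ⟨?_, ?_, ?_⟩
  · intro i hi
    apply lhom_ext1
    intro m
    have hab : (⟨i, Nat.lt_of_succ_lt hi⟩ : Fin n) ≠ ⟨i + 1, hi⟩ := by
      simp [Fin.ext_iff]
    simp only [LinearMap.comp_apply, LinearMap.neg_apply, pibar_single,
      apply_ite (pibarOp (F := F) i hi),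
      map_neg, map_zero, cnt_perm, Equiv.symm_swap, Equiv.swap_apply_left,
      Equiv.swap_apply_right, neg_neg, neg_zero]
    split_ifs <;> first | rfl | omega | simp
  · intro i j hi hj hij
    apply lhom_ext1
    intro m
    have hac : (⟨i, Nat.lt_of_succ_lt hi⟩ : Fin n) ≠ ⟨j, Nat.lt_of_succ_lt hj⟩ := by
      simp only [ne_eq, Fin.mk.injEq]; omega
    have had : (⟨i, Nat.lt_of_succ_lt hi⟩ : Fin n) ≠ ⟨j + 1, hj⟩ := by
      simp only [ne_eq, Fin.mk.injEq]; omega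
    have hbc : (⟨i + 1, hi⟩ : Fin n) ≠ ⟨j, Nat.lt_of_succ_lt hj⟩ := by
      simp only [ne_eq, Fin.mk.injEq]; omega
    have hbd : (⟨i + 1, hi⟩ : Fin n) ≠ ⟨j + 1, hj⟩ := by
      simp only [ne_eq, Fin.mk.injEq]; omega
    have hcomm : Equiv.swap (⟨i, Nat.lt_of_succ_lt hi⟩ : Fin n) ⟨i + 1, hi⟩ *
        Equiv.swap (⟨j, Nat.lt_of_succ_lt hj⟩ : Fin n) ⟨j + 1, hj⟩ =
        Equiv.swap (⟨j, Nat.lt_of_succ_lt hj⟩ : Fin n) ⟨j + 1, hj⟩ *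
        Equiv.swap (⟨i, Nat.lt_of_succ_lt hi⟩ : Fin n) ⟨i + 1, hi⟩ :=
      swap_comm_of_ne hac had hbc hbd
    have e1 : (Equiv.swap (⟨i, Nat.lt_of_succ_lt hi⟩ : Fin n) ⟨i + 1, hi⟩)
        ⟨j, Nat.lt_of_succ_lt hj⟩ = ⟨j, Nat.lt_of_succ_lt hj⟩ :=
      Equiv.swap_apply_of_ne_of_ne hac.symm hbc.symm
    have e2 : (Equiv.swap (⟨i, Nat.lt_of_succ_lt hi⟩ : Fin n) ⟨i + 1, hi⟩)
        ⟨j + 1, hj⟩ = ⟨j + 1, hj⟩ :=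
      Equiv.swap_apply_of_ne_of_ne had.symm hbd.symm
    have e3 : (Equiv.swap (⟨j, Nat.lt_of_succ_lt hj⟩ : Fin n) ⟨j + 1, hj⟩)
        ⟨i, Nat.lt_of_succ_lt hi⟩ = ⟨i, Nat.lt_of_succ_lt hi⟩ :=
      Equiv.swap_apply_of_ne_of_ne hac had
    have e4 : (Equiv.swap (⟨j, Nat.lt_of_succ_lt hj⟩ : Fin n) ⟨j + 1, hj⟩)
        ⟨i + 1, hi⟩ = ⟨i + 1, hi⟩ :=
      Equiv.swap_apply_of_ne_of_ne hbc hbd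
    simp only [LinearMap.comp_apply, pibar_single,
      apply_ite (pibarOp (F := F) i hi), apply_ite (pibarOp (F := F) j hj),
      map_neg, map_zero, cnt_perm, Equiv.symm_swap,
      Equiv.swap_apply_left, Equiv.swap_apply_right,
      e1, e2, e3, e4,
      permChain_permChain, hcomm, neg_neg, neg_zero]
    split_ifs <;> first | rfl | omega | simp
  · intro i hi
    show (pibarOp (F := F) i (Nat.lt_of_succ_lt hi)) ∘ₗ (pibarOp (i + 1) hi) ∘ₗ
        (pibarOp i (Nat.lt_of_succ_lt hi))
        = (pibarOp (i + 1) hi) ∘ₗ (pibarOp i (Nat.lt_of_succ_lt hi)) ∘ₗ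
          (pibarOp (i + 1) hi)
    have hii : i + 1 < n := Nat.lt_of_succ_lt hi
    set x : Fin n := ⟨i, Nat.lt_of_succ_lt hii⟩ with hx
    set y : Fin n := ⟨i + 1, hii⟩ with hy
    set z : Fin n := ⟨i + 1 + 1, hi⟩ with hz
    have hxy : x ≠ y := by simp only [hx, hy, ne_eq, Fin.mk.injEq]; omega
    have hyz : y ≠ z := by simp only [hy, hz, ne_eq, Fin.mk.injEq]; omega
    have hxz : x ≠ z := by simp only [hx, hz, ne_eq, Fin.mk.injEq]; omega
    have e1 : (Equiv.swap x y) z = z := Equiv.swap_apply_of_ne_of_ne hxz.symm hyz.symm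
    have e2 : (Equiv.swap y z) x = x := Equiv.swap_apply_of_ne_of_ne hxy hxz
    have b1 : Equiv.swap x y * (Equiv.swap y z * Equiv.swap x y) = Equiv.swap x z :=
      swap_braid1 hxy hyz hxz
    have b2 : Equiv.swap y z * (Equiv.swap x y * Equiv.swap y z) = Equiv.swap x z :=
      swap_braid2 hxy hyz hxz
    apply lhom_ext1
    intro m
    simp only [LinearMap.comp_apply, pibar_single,
      apply_ite (pibarOp (F := F) i (Nat.lt_of_succ_lt hi)),
      apply_ite (pibarOp (F := F) (i + 1) hi),
      map_neg, map_zero, ← hx, ← hy, ← hz, cnt_perm, perm_symm_mul_apply, Equiv.symm_swap,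
      Equiv.swap_apply_left, Equiv.swap_apply_right, e1, e2,
      permChain_permChain, b1, b2, neg_neg, neg_zero]
    split_ifs <;> first | rfl | omega | simp
end

section
/- The invariant algebra F[Bₙ]^{Sₙ} of the Sₙ-action on the Stanley-Reisner ring of the Boolean algebra Bₙ equals the polynomial subalgebra F[Θ] generated by the rank polynomials θ₀, θ₁, ..., θₙ, where θᵢ = Σ_{|A|=i} y_A. -/
noncomputable section
open scoped Classical

/-- The Stanley-Reisner ideal of the Boolean algebra `Bₙ`: generated by the products
`y_A y_B` for incomparable `A, B ⊆ [n]`. -/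
def SRIdeal (F : Type*) [Field F] (n : ℕ) :
    Ideal (MvPolynomial (Finset (Fin n)) F) :=
  Ideal.span {p | ∃ A B : Finset (Fin n),
    ¬(A ⊆ B ∨ B ⊆ A) ∧ p = MvPolynomial.X A * MvPolynomial.X B}

/-- The Stanley-Reisner ring `F[Bₙ]` of the Boolean algebra. -/
abbrev SRRing (F : Type*) [Field F] (n : ℕ) :=
  MvPolynomial (Finset (Fin n)) F ⧸ SRIdeal F n

/-- The `Sₙ`-action on `F[Bₙ]` induced by permuting the elements `1,…,n`. -/
def srPerm (F : Type*) [Field F] (n : ℕ) (σ : Equiv.Perm (Fin n)) :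
    SRRing F n →ₐ[F] SRRing F n :=
  Ideal.Quotient.liftₐ (SRIdeal F n)
    ((Ideal.Quotient.mkₐ F (SRIdeal F n)).comp
      (MvPolynomial.rename (Finset.image σ)))
    (by
      intro a ha
      have h : SRIdeal F n ≤ RingHom.ker
          ((Ideal.Quotient.mkₐ F (SRIdeal F n)).comp
            (MvPolynomial.rename (Finset.image σ))).toRingHom := by
        rw [SRIdeal, Ideal.span_le]
        rintro p ⟨A, B, hAB, rfl⟩
        simp only [SetLike.mem_coe, RingHom.mem_ker, AlgHom.toRingHom_eq_coe,
          RingHom.coe_coe, AlgHom.coe_comp, Function.comp_apply, map_mul,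
          MvPolynomial.rename_X, Ideal.Quotient.mkₐ_eq_mk]
        rw [← map_mul, Ideal.Quotient.eq_zero_iff_mem]
        refine Ideal.subset_span ⟨Finset.image σ A, Finset.image σ B, ?_, rfl⟩
        rw [Finset.image_subset_image_iff σ.injective,
          Finset.image_subset_image_iff σ.injective]
        exact hAB
      exact h ha)

/-- The rank polynomial `θᵢ = Σ_{|A| = i} y_A` in `F[Bₙ]`. -/
def theta (F : Type*) [Field F] (n : ℕ) (i : ℕ) : SRRing F n :=
  Ideal.Quotient.mk (SRIdeal F n)
    (∑ A ∈ Finset.univ.filter (fun A : Finset (Fin n) => A.card = i),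
      MvPolynomial.X A)

namespace SRAux

open MvPolynomial Finset

variable {F : Type*} [Field F] {n : ℕ}

/-- An exponent vector is a "chain monomial" if its support is a chain in `Bₙ`. -/
def Ch (m : Finset (Fin n) →₀ ℕ) : Prop :=
  ∀ A ∈ m.support, ∀ B ∈ m.support, A ⊆ B ∨ B ⊆ A

lemma Ch.mono {m m' : Finset (Fin n) →₀ ℕ} (h : m.support ⊆ m'.support) (h' : Ch m') : Ch m :=
  fun A hA B hB => h' A (h hA) B (h hB)

lemma mem_SRIdeal_of_nonchain (p : MvPolynomial (Finset (Fin n)) F)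
    (h : ∀ d ∈ p.support, ¬ Ch d) : p ∈ SRIdeal F n := by
  rw [← MvPolynomial.support_sum_monomial_coeff p]
  refine Ideal.sum_mem _ (fun d hd => ?_)
  have hd' := h d hd
  rw [Ch] at hd'; push_neg at hd'
  obtain ⟨A, hA, B, hB, hAB'⟩ := hd'
  have hAB : ¬(A ⊆ B ∨ B ⊆ A) := by rintro (h | h); exacts [hAB'.1 h, hAB'.2 h]
  have hA1 : 1 ≤ d A := Nat.one_le_iff_ne_zero.2 (Finsupp.mem_support_iff.1 hA)
  have hB1 : 1 ≤ d B := Nat.one_le_iff_ne_zero.2 (Finsupp.mem_support_iff.1 hB)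
  have hAne : A ≠ B := by rintro rfl; exact hAB'.1 subset_rfl
  have key : Finsupp.single A 1 + Finsupp.single B 1
      + (d - Finsupp.single A 1 - Finsupp.single B 1) = d := by
    ext D
    simp only [Finsupp.add_apply, Finsupp.tsub_apply, Finsupp.single_apply]
    by_cases h1 : A = D
    · subst h1
      rw [if_pos rfl, if_neg (fun h => hAne h.symm)]
      omega
    · rw [if_neg h1]
      by_cases h2 : B = D
      · subst h2
        rw [if_pos rfl]
        omega
      · rw [if_neg h2]
        omega
  have hmon : (MvPolynomial.monomial d) (p.coeff d)
      = (MvPolynomial.X A * MvPolynomial.X B)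
        * MvPolynomial.monomial (d - Finsupp.single A 1 - Finsupp.single B 1) (p.coeff d) := by
    rw [MvPolynomial.X, MvPolynomial.X, MvPolynomial.monomial_mul, MvPolynomial.monomial_mul,
      one_mul, one_mul, key]
  rw [hmon]
  exact Ideal.mul_mem_right _ _ (Ideal.subset_span ⟨A, B, hAB, rfl⟩)

lemma nonchain_of_mem_SRIdeal {p : MvPolynomial (Finset (Fin n)) F}
    (hp : p ∈ SRIdeal F n) : ∀ d ∈ p.support, ¬ Ch d := by
  refine Submodule.span_induction (p := fun x _ => ∀ d ∈ x.support, ¬ Ch d)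
    ?_ ?_ ?_ ?_ hp
  · rintro x ⟨A, B, hAB, rfl⟩ d hd hch
    have hAne : A ≠ B := by rintro rfl; exact hAB (Or.inl subset_rfl)
    have hX : (MvPolynomial.X A * MvPolynomial.X B : MvPolynomial (Finset (Fin n)) F)
        = MvPolynomial.monomial (Finsupp.single A 1 + Finsupp.single B 1) 1 := by
      rw [MvPolynomial.X, MvPolynomial.X, MvPolynomial.monomial_mul, one_mul]
    rw [hX, MvPolynomial.support_monomial] at hd
    simp only [one_ne_zero, if_false] at hd
    rw [Finset.mem_singleton] at hd
    subst hd
    have hmemA : A ∈ (Finsupp.single A 1 + Finsupp.single B 1).support := by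
      simp [Finsupp.single_apply, hAne]
    have hmemB : B ∈ (Finsupp.single A 1 + Finsupp.single B 1).support := by
      simp [Finsupp.single_apply, hAne]
    exact hAB (hch A hmemA B hmemB)
  · intro d hd; simp at hd
  · intro x y _ _ hx hy d hd
    rcases Finset.mem_union.1 (MvPolynomial.support_add hd) with h | h
    · exact hx d h
    · exact hy d h
  · intro a x _ hx d hd hch
    rw [smul_eq_mul] at hd
    have := MvPolynomial.support_mul a x hd
    rw [Finset.mem_add] at this
    obtain ⟨u, hu, v, hv, rfl⟩ := this
    refine hx v hv (Ch.mono ?_ hch)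
    intro C hC
    rw [Finsupp.mem_support_iff] at hC ⊢
    simp only [Finsupp.add_apply]
    omega

/-- The chain part of a polynomial: keep only the monomials whose support is a chain. -/
def cp (p : MvPolynomial (Finset (Fin n)) F) : MvPolynomial (Finset (Fin n)) F :=
  ∑ d ∈ p.support.filter Ch, MvPolynomial.monomial d (p.coeff d)

lemma coeff_cp (p : MvPolynomial (Finset (Fin n)) F) (d : Finset (Fin n) →₀ ℕ) :
    (cp p).coeff d = if Ch d then p.coeff d else 0 := by
  rw [cp, MvPolynomial.coeff_sum]
  simp_rw [MvPolynomial.coeff_monomial]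
  rw [Finset.sum_ite_eq' (p.support.filter Ch) d (fun e => p.coeff e)]
  by_cases hch : Ch d <;> by_cases hd : d ∈ p.support <;>
    simp_all [Finset.mem_filter, MvPolynomial.mem_support_iff]

lemma sub_cp_mem (p : MvPolynomial (Finset (Fin n)) F) : p - cp p ∈ SRIdeal F n := by
  apply mem_SRIdeal_of_nonchain
  intro d hd hch
  rw [MvPolynomial.mem_support_iff, MvPolynomial.coeff_sub, coeff_cp, if_pos hch,
    sub_self] at hd
  exact hd rfl

lemma eq_zero_of_chain_mem {p : MvPolynomial (Finset (Fin n)) F}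
    (hp : p ∈ SRIdeal F n) (h : ∀ d ∈ p.support, Ch d) : p = 0 := by
  by_contra h0
  obtain ⟨d, hd⟩ := MvPolynomial.ne_zero_iff.1 h0
  exact nonchain_of_mem_SRIdeal hp d (MvPolynomial.mem_support_iff.2 hd)
    (h d (MvPolynomial.mem_support_iff.2 hd))

section Rename

lemma image_image_symm (σ : Equiv.Perm (Fin n)) (A : Finset (Fin n)) :
    Finset.image σ (Finset.image σ.symm A) = A := by
  rw [Finset.image_image]
  simp

lemma mapDomain_image_symm (σ : Equiv.Perm (Fin n)) (d : Finset (Fin n) →₀ ℕ) :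
    Finsupp.mapDomain (Finset.image σ) (Finsupp.mapDomain (Finset.image σ.symm) d) = d := by
  rw [← Finsupp.mapDomain_comp]
  have : (Finset.image σ ∘ Finset.image σ.symm) = id := by
    funext A; exact image_image_symm σ A
  rw [this, Finsupp.mapDomain_id]

lemma ch_mapDomain (σ : Equiv.Perm (Fin n)) {d : Finset (Fin n) →₀ ℕ} :
    Ch (Finsupp.mapDomain (Finset.image σ) d) ↔ Ch d := by
  have hinj : Function.Injective (Finset.image σ : Finset (Fin n) → Finset (Fin n)) :=
    Finset.image_injective σ.injective
  rw [Ch, Ch]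
  have hsupp := Finsupp.mapDomain_support_of_injective hinj d
  constructor
  · intro h A hA B hB
    have := h (Finset.image σ A) (by rw [hsupp]; exact Finset.mem_image_of_mem _ hA)
      (Finset.image σ B) (by rw [hsupp]; exact Finset.mem_image_of_mem _ hB)
    rcases this with h' | h'
    · exact Or.inl ((Finset.image_subset_image_iff σ.injective).1 h')
    · exact Or.inr ((Finset.image_subset_image_iff σ.injective).1 h')
  · intro h A hA B hB
    rw [hsupp, Finset.mem_image] at hA hB
    obtain ⟨A', hA', rfl⟩ := hA
    obtain ⟨B', hB', rfl⟩ := hB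
    rcases h A' hA' B' hB' with h' | h'
    · exact Or.inl (Finset.image_subset_image h')
    · exact Or.inr (Finset.image_subset_image h')

lemma cp_rename (σ : Equiv.Perm (Fin n)) (p : MvPolynomial (Finset (Fin n)) F) :
    cp (MvPolynomial.rename (Finset.image σ) p)
      = MvPolynomial.rename (Finset.image σ) (cp p) := by
  have hinj : Function.Injective (Finset.image σ : Finset (Fin n) → Finset (Fin n)) :=
    Finset.image_injective σ.injective
  apply MvPolynomial.ext
  intro d
  set d₀ := Finsupp.mapDomain (Finset.image σ.symm) d with hd₀
  have hd : d = Finsupp.mapDomain (Finset.image σ) d₀ := (mapDomain_image_symm σ d).symm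
  have hiff : Ch d ↔ Ch d₀ := by
    conv_lhs => rw [hd]
    exact ch_mapDomain σ
  have hL : (MvPolynomial.rename (Finset.image σ) p).coeff d = p.coeff d₀ := by
    conv_lhs => rw [hd]
    rw [MvPolynomial.coeff_rename_mapDomain _ hinj]
  have hR : (MvPolynomial.rename (Finset.image σ) (cp p)).coeff d = (cp p).coeff d₀ := by
    conv_lhs => rw [hd]
    rw [MvPolynomial.coeff_rename_mapDomain _ hinj]
  rw [coeff_cp, hL, hR, coeff_cp, if_congr hiff rfl rfl]

end Rename

/-- The rank profile of an exponent vector. -/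
def prof (m : Finset (Fin n) →₀ ℕ) (i : ℕ) : ℕ :=
  ∑ A ∈ Finset.univ.filter (fun A : Finset (Fin n) => A.card = i), m A

lemma prof_apply {m : Finset (Fin n) →₀ ℕ} (hm : Ch m) {A : Finset (Fin n)}
    (hA : A ∈ m.support) : prof m A.card = m A := by
  rw [prof]
  refine Finset.sum_eq_single_of_mem A (by simp) ?_
  intro B hB hBA
  by_contra hB0
  have hBs : B ∈ m.support := Finsupp.mem_support_iff.2 hB0
  rw [Finset.mem_filter] at hB
  rcases hm A hA B hBs with h | h
  · exact hBA (Finset.eq_of_subset_of_card_le h (le_of_eq hB.2)).symm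
  · exact hBA (Finset.eq_of_subset_of_card_le h (le_of_eq hB.2.symm))

lemma exists_of_prof_ne_zero {m : Finset (Fin n) →₀ ℕ} {i : ℕ} (h : prof m i ≠ 0) :
    ∃ A ∈ m.support, A.card = i := by
  obtain ⟨A, hA, hne⟩ := Finset.exists_ne_zero_of_sum_ne_zero h
  rw [Finset.mem_filter] at hA
  exact ⟨A, Finsupp.mem_support_iff.2 hne, hA.2⟩

lemma prof_ne_zero {m : Finset (Fin n) →₀ ℕ} (hm : Ch m) {A : Finset (Fin n)}
    (hA : A ∈ m.support) : prof m A.card ≠ 0 := by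
  rw [prof_apply hm hA]
  exact Finsupp.mem_support_iff.1 hA

lemma card_le_n (A : Finset (Fin n)) : A.card ≤ n := by
  simpa using Finset.card_le_univ A

lemma prof_high {m : Finset (Fin n) →₀ ℕ} {i : ℕ} (hi : n < i) : prof m i = 0 := by
  rw [prof]
  apply Finset.sum_eq_zero
  intro A hA
  rw [Finset.mem_filter] at hA
  exact absurd hA.2 (by have := card_le_n A; omega)

lemma eq_zero_of_prof {m : Finset (Fin n) →₀ ℕ} (hm : Ch m)
    (h : ∀ i < n + 1, prof m i = 0) : m = 0 := by
  by_contra h0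
  obtain ⟨A, hA⟩ := Finsupp.support_nonempty_iff.2 h0
  exact prof_ne_zero hm hA (h A.card (by have := card_le_n A; omega))

end SRAux

namespace SRAux

open MvPolynomial Finset

variable {F : Type*} [Field F] {n : ℕ}

/-- Level function of an exponent vector. -/
def lev (m : Finset (Fin n) →₀ ℕ) (x : Fin n) : ℕ∞ :=
  (m.support.filter (fun A => x ∈ A)).inf (fun A => (A.card : ℕ∞))

lemma lev_le_iff {m : Finset (Fin n) →₀ ℕ} {x : Fin n} {c : ℕ} :
    lev m x ≤ (c : ℕ∞) ↔ ∃ A ∈ m.support, x ∈ A ∧ A.card ≤ c := by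
  rw [lev, Finset.inf_le_iff (by exact_mod_cast WithTop.coe_lt_top c)]
  constructor
  · rintro ⟨A, hA, hle⟩
    rw [Finset.mem_filter] at hA
    exact ⟨A, hA.1, hA.2, by exact_mod_cast hle⟩
  · rintro ⟨A, hA, hx, hle⟩
    exact ⟨A, Finset.mem_filter.2 ⟨hA, hx⟩, by exact_mod_cast hle⟩

lemma mem_iff_lev {m : Finset (Fin n) →₀ ℕ} (hm : Ch m) {A : Finset (Fin n)}
    (hA : A ∈ m.support) (x : Fin n) : x ∈ A ↔ lev m x ≤ (A.card : ℕ∞) := by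
  constructor
  · intro hx
    exact Finset.inf_le (Finset.mem_filter.2 ⟨hA, hx⟩)
  · intro h
    obtain ⟨B, hB, hxB, hle⟩ := lev_le_iff.1 h
    rcases hm B hB A hA with h' | h'
    · exact h' hxB
    · rw [Finset.eq_of_subset_of_card_le h' hle]; exact hxB

lemma supp_eq_cum {m : Finset (Fin n) →₀ ℕ} (hm : Ch m) {A : Finset (Fin n)}
    (hA : A ∈ m.support) :
    A = Finset.univ.filter (fun x => lev m x ≤ (A.card : ℕ∞)) := by
  ext x
  simp only [Finset.mem_filter, Finset.mem_univ, true_and]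
  exact mem_iff_lev hm hA x

/-- The cumulative level set has cardinality determined by the profile. -/
lemma cum_card {m m' : Finset (Fin n) →₀ ℕ} (hm : Ch m) (hm' : Ch m')
    (hprof : ∀ i, prof m i = prof m' i) (c : ℕ) :
    (Finset.univ.filter (fun x : Fin n => lev m x ≤ (c : ℕ∞))).card
      = (Finset.univ.filter (fun x : Fin n => lev m' x ≤ (c : ℕ∞))).card := by
  have key : ∀ (m₀ : Finset (Fin n) →₀ ℕ), Ch m₀ →
      (∀ i, prof m₀ i = prof m i) →
      ((Finset.range (c+1)).filter (fun i => prof m i ≠ 0) = ∅ →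
        (Finset.univ.filter (fun x : Fin n => lev m₀ x ≤ (c : ℕ∞))).card = 0) ∧
      (∀ hne : ((Finset.range (c+1)).filter (fun i => prof m i ≠ 0)).Nonempty,
        (Finset.univ.filter (fun x : Fin n => lev m₀ x ≤ (c : ℕ∞))).card
          = ((Finset.range (c+1)).filter (fun i => prof m i ≠ 0)).max' hne) := by
    intro m₀ hch hpr
    constructor
    · intro hemp
      rw [Finset.card_eq_zero, Finset.filter_eq_empty_iff]
      intro x _
      intro hle
      obtain ⟨A, hA, _, hcard⟩ := lev_le_iff.1 hle
      have hne : prof m A.card ≠ 0 := by rw [← hpr]; exact prof_ne_zero hch hA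
      have : A.card ∈ (Finset.range (c+1)).filter (fun i => prof m i ≠ 0) :=
        Finset.mem_filter.2 ⟨Finset.mem_range.2 (by omega), hne⟩
      rw [hemp] at this
      exact absurd this (Finset.notMem_empty _)
    · intro hne
      set S := (Finset.range (c+1)).filter (fun i => prof m i ≠ 0) with hS
      set j := S.max' hne with hj
      have hjS : j ∈ S := S.max'_mem hne
      rw [hS, Finset.mem_filter, Finset.mem_range] at hjS
      have hj0 : prof m₀ j ≠ 0 := by rw [hpr]; exact hjS.2
      obtain ⟨A, hA, hcard⟩ := exists_of_prof_ne_zero hj0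
      have hset : Finset.univ.filter (fun x : Fin n => lev m₀ x ≤ (c : ℕ∞)) = A := by
        ext x
        simp only [Finset.mem_filter, Finset.mem_univ, true_and]
        constructor
        · intro hle
          obtain ⟨B, hB, hxB, hBc⟩ := lev_le_iff.1 hle
          have hBj : B.card ≤ j := by
            have : B.card ∈ S := Finset.mem_filter.2 ⟨Finset.mem_range.2 (by omega),
              by rw [← hpr]; exact prof_ne_zero hch hB⟩
            exact S.le_max' _ this
          rcases hch B hB A hA with h' | h'
          · exact h' hxB
          · rw [Finset.eq_of_subset_of_card_le h' (by omega)]; exact hxB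
        · intro hx
          exact le_trans (Finset.inf_le (Finset.mem_filter.2 ⟨hA, hx⟩))
            (by exact_mod_cast (by omega : A.card ≤ c))
      rw [hset, hcard]
  have h1 := key m hm (fun i => rfl)
  have h2 := key m' hm' (fun i => (hprof i).symm)
  rcases Finset.eq_empty_or_nonempty
      ((Finset.range (c+1)).filter (fun i => prof m i ≠ 0)) with he | hne
  · rw [h1.1 he, h2.1 he]
  · rw [h1.2 hne, h2.2 hne]

lemma lev_ne_top_iff {m : Finset (Fin n) →₀ ℕ} {x : Fin n} :
    lev m x ≠ ⊤ ↔ lev m x ≤ (n : ℕ∞) := by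
  constructor
  · intro h
    rcases Finset.eq_empty_or_nonempty (m.support.filter (fun A => x ∈ A)) with he | hne
    · rw [lev, he, Finset.inf_empty] at h; exact absurd rfl h
    · obtain ⟨A, hA⟩ := hne
      refine le_trans (Finset.inf_le hA) ?_
      exact_mod_cast card_le_n A
  · intro h htop
    rw [htop] at h
    exact absurd h (by simp)

/-- fibers of the level function have cardinality determined by the profile. -/
lemma fib_card {m m' : Finset (Fin n) →₀ ℕ} (hm : Ch m) (hm' : Ch m')
    (hprof : ∀ i, prof m i = prof m' i) (v : ℕ∞) :
    (Finset.univ.filter (fun x : Fin n => lev m x = v)).card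
      = (Finset.univ.filter (fun x : Fin n => lev m' x = v)).card := by
  have cum := cum_card hm hm' hprof
  have hmono : ∀ (m₀ : Finset (Fin n) →₀ ℕ) (c : ℕ),
      Finset.univ.filter (fun x : Fin n => lev m₀ x ≤ (c : ℕ∞))
        ⊆ Finset.univ.filter (fun x : Fin n => lev m₀ x ≤ ((c+1 : ℕ) : ℕ∞)) := by
    intro m₀ c x hx
    rw [Finset.mem_filter] at hx ⊢
    exact ⟨hx.1, le_trans hx.2 (by exact_mod_cast Nat.le_succ c)⟩
  induction v using ENat.recTopCoe with
  | top =>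
    have hfib : ∀ (m₀ : Finset (Fin n) →₀ ℕ),
        Finset.univ.filter (fun x : Fin n => lev m₀ x = ⊤)
          = Finset.univ \ Finset.univ.filter (fun x : Fin n => lev m₀ x ≤ (n : ℕ∞)) := by
      intro m₀
      rw [← Finset.filter_not]
      apply Finset.filter_congr
      intro x _
      constructor
      · intro h hle
        rw [h] at hle
        exact absurd hle (by simp)
      · intro h
        by_contra hne
        exact h (lev_ne_top_iff.1 hne)
    rw [hfib, hfib, Finset.card_sdiff_of_subset (Finset.filter_subset _ _),
      Finset.card_sdiff_of_subset (Finset.filter_subset _ _), cum n]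
  | coe i =>
    match i with
    | 0 =>
      have hfib : ∀ (m₀ : Finset (Fin n) →₀ ℕ),
          Finset.univ.filter (fun x : Fin n => lev m₀ x = ((0:ℕ):ℕ∞))
            = Finset.univ.filter (fun x : Fin n => lev m₀ x ≤ ((0:ℕ) : ℕ∞)) := by
        intro m₀
        apply Finset.filter_congr
        intro x _
        rw [Nat.cast_zero]
        exact ⟨fun h => le_of_eq h, fun h => le_antisymm h zero_le⟩
      rw [hfib, hfib, cum 0]
    | (i+1) =>
      have hfib : ∀ (m₀ : Finset (Fin n) →₀ ℕ),
          Finset.univ.filter (fun x : Fin n => lev m₀ x = ((i+1 : ℕ) : ℕ∞))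
            = Finset.univ.filter (fun x : Fin n => lev m₀ x ≤ ((i+1 : ℕ) : ℕ∞))
              \ Finset.univ.filter (fun x : Fin n => lev m₀ x ≤ ((i : ℕ) : ℕ∞)) := by
        intro m₀
        ext x
        simp only [Finset.mem_sdiff, Finset.mem_filter, Finset.mem_univ, true_and]
        constructor
        · intro h
          refine ⟨le_of_eq h, ?_⟩
          rw [h]
          intro hle
          have : (i+1 : ℕ) ≤ (i : ℕ) := by exact_mod_cast hle
          omega
        · rintro ⟨h1, h2⟩
          have hlt : ((i : ℕ) : ℕ∞) < lev m₀ x := lt_of_not_ge h2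
          have : ((i : ℕ) : ℕ∞) + 1 ≤ lev m₀ x := (ENat.add_one_le_iff (by simp)).2 hlt
          have h3 : ((i+1 : ℕ) : ℕ∞) ≤ lev m₀ x := by push_cast; exact_mod_cast this
          exact le_antisymm h1 h3
      rw [hfib, hfib, Finset.card_sdiff_of_subset (hmono m i), Finset.card_sdiff_of_subset (hmono m' i),
        cum i, cum (i+1)]

lemma exists_perm_comp {α β : Type*} [Fintype α] [DecidableEq β] (f g : α → β)
    (h : ∀ b, Fintype.card {x // f x = b} = Fintype.card {x // g x = b}) :
    ∃ σ : Equiv.Perm α, ∀ x, g (σ x) = f x := by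
  have e : ∀ b, {x // f x = b} ≃ {x // g x = b} := fun b => Fintype.equivOfCardEq (h b)
  refine ⟨(Equiv.sigmaFiberEquiv f).symm.trans
    ((Equiv.sigmaCongrRight e).trans (Equiv.sigmaFiberEquiv g)), fun x => ?_⟩
  exact (e (f x) ⟨x, rfl⟩).2

lemma exists_perm_mapDomain {m m' : Finset (Fin n) →₀ ℕ} (hm : Ch m) (hm' : Ch m')
    (hp : ∀ i, prof m i = prof m' i) :
    ∃ σ : Equiv.Perm (Fin n), Finsupp.mapDomain (Finset.image σ) m = m' := by
  have hfib : ∀ v : ℕ∞, Fintype.card {x // lev m x = v} = Fintype.card {x // lev m' x = v} := by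
    intro v
    rw [Fintype.card_subtype, Fintype.card_subtype]
    exact fib_card hm hm' hp v
  obtain ⟨σ, hσ⟩ := exists_perm_comp (lev m) (lev m') hfib
  have hinj : Function.Injective (Finset.image σ : Finset (Fin n) → Finset (Fin n)) :=
    Finset.image_injective σ.injective
  have himg : ∀ (c : ℕ),
      Finset.image σ (Finset.univ.filter (fun x => lev m x ≤ (c : ℕ∞)))
        = Finset.univ.filter (fun y => lev m' y ≤ (c : ℕ∞)) := by
    intro c
    ext y
    simp only [Finset.mem_image, Finset.mem_filter, Finset.mem_univ, true_and]
    constructor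
    · rintro ⟨x, hx, rfl⟩
      rw [hσ x]
      exact hx
    · intro hy
      refine ⟨σ.symm y, ?_, by simp⟩
      have h := hσ (σ.symm y)
      rw [Equiv.apply_symm_apply] at h
      rw [← h]
      exact hy
  have key : ∀ A : Finset (Fin n), m' (Finset.image σ A) = m A := by
    intro A
    by_cases hA : A ∈ m.support
    · have hAcum := supp_eq_cum hm hA
      have h1 : Finset.image σ A = Finset.univ.filter (fun y => lev m' y ≤ (A.card : ℕ∞)) := by
        conv_lhs => rw [hAcum]
        exact himg A.card
      have h2 : prof m' A.card ≠ 0 := by rw [← hp]; exact prof_ne_zero hm hA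
      obtain ⟨B, hB, hBcard⟩ := exists_of_prof_ne_zero h2
      have h3 : Finset.image σ A = B := by
        rw [h1, ← hBcard]
        exact (supp_eq_cum hm' hB).symm
      rw [h3]
      have := prof_apply hm' hB
      rw [hBcard] at this
      rw [← this, ← hp, prof_apply hm hA]
    · rw [Finsupp.notMem_support_iff.1 hA]
      by_contra hne
      have hBs : Finset.image σ A ∈ m'.support := Finsupp.mem_support_iff.2 hne
      set B := Finset.image σ A with hBdef
      have hcard : B.card = A.card := Finset.card_image_of_injective _ σ.injective
      have h2 : prof m B.card ≠ 0 := by rw [hp]; exact prof_ne_zero hm' hBs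
      obtain ⟨A', hA', hA'card⟩ := exists_of_prof_ne_zero h2
      have h3 : Finset.image σ A' = B := by
        rw [supp_eq_cum hm hA', himg A'.card, hA'card]
        exact (supp_eq_cum hm' hBs).symm
      have : A' = A := hinj (h3.trans hBdef)
      rw [this] at hA'
      exact hA hA'
  refine ⟨σ, ?_⟩
  ext B
  have hB : B = Finset.image σ (Finset.image σ.symm B) := (image_image_symm σ B).symm
  rw [hB, Finsupp.mapDomain_apply hinj, key]

end SRAux

namespace SRAux

open MvPolynomial Finset

variable {F : Type*} [Field F] {n : ℕ}

/-- The rank polynomial as a polynomial. -/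
def tp (F : Type*) [Field F] (n : ℕ) (i : ℕ) : MvPolynomial (Finset (Fin n)) F :=
  ∑ A ∈ Finset.univ.filter (fun A : Finset (Fin n) => A.card = i), MvPolynomial.X A

/-- Product of powers of rank polynomials. -/
def Th (F : Type*) [Field F] (n : ℕ) (e : ℕ → ℕ) : MvPolynomial (Finset (Fin n)) F :=
  ∏ i ∈ Finset.range (n+1), (tp F n i) ^ (e i)

lemma prof_sub_single {m : Finset (Fin n) →₀ ℕ} {A : Finset (Fin n)}
    (hA : A ∈ m.support) (j : ℕ) :
    prof (m - Finsupp.single A 1) j = if j = A.card then prof m j - 1 else prof m j := by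
  have hterm : ∀ B, (m - Finsupp.single A 1 : Finset (Fin n) →₀ ℕ) B
      = m B - (if A = B then 1 else 0) := by
    intro B
    rw [Finsupp.tsub_apply, Finsupp.single_apply]
  by_cases hj : j = A.card
  · subst hj
    rw [if_pos rfl]
    have hAf : A ∈ Finset.univ.filter (fun B : Finset (Fin n) => B.card = A.card) := by simp
    have e1 : m A + ∑ B ∈ (Finset.univ.filter
        (fun B : Finset (Fin n) => B.card = A.card)).erase A, m B = prof m A.card :=
      Finset.add_sum_erase _ (fun B => m B) hAf
    have e2 : (m - Finsupp.single A 1 : Finset (Fin n) →₀ ℕ) A + ∑ B ∈ (Finset.univ.filter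
        (fun B : Finset (Fin n) => B.card = A.card)).erase A,
        (m - Finsupp.single A 1 : Finset (Fin n) →₀ ℕ) B
        = prof (m - Finsupp.single A 1) A.card :=
      Finset.add_sum_erase _ (fun B => (m - Finsupp.single A 1 : Finset (Fin n) →₀ ℕ) B) hAf
    have e3 : ∑ B ∈ (Finset.univ.filter
        (fun B : Finset (Fin n) => B.card = A.card)).erase A,
        (m - Finsupp.single A 1 : Finset (Fin n) →₀ ℕ) B = ∑ B ∈ (Finset.univ.filter
        (fun B : Finset (Fin n) => B.card = A.card)).erase A, m B := by
      apply Finset.sum_congr rfl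
      intro B hB
      rw [hterm B, if_neg (Finset.ne_of_mem_erase hB).symm, Nat.sub_zero]
    have e4 : (m - Finsupp.single A 1 : Finset (Fin n) →₀ ℕ) A = m A - 1 := by
      rw [hterm A, if_pos rfl]
    have hA1 : 1 ≤ m A := Nat.one_le_iff_ne_zero.2 (Finsupp.mem_support_iff.1 hA)
    rw [e3] at e2
    omega
  · rw [if_neg hj, prof, prof]
    apply Finset.sum_congr rfl
    intro B hB
    rw [Finset.mem_filter] at hB
    rw [hterm B, if_neg (by rintro rfl; exact hj hB.2.symm), Nat.sub_zero]

lemma supp_sub_single {m : Finset (Fin n) →₀ ℕ} {A : Finset (Fin n)} :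
    (m - Finsupp.single A 1).support ⊆ m.support := by
  intro B hB
  rw [Finsupp.mem_support_iff] at hB ⊢
  rw [Finsupp.tsub_apply] at hB
  omega

/-- The key coefficient computation: coefficients of products of rank polynomials
at chain monomials. -/
lemma coeff_Th : ∀ (N : ℕ) (e : ℕ → ℕ), (∑ i ∈ Finset.range (n+1), e i) = N →
    ∀ m : Finset (Fin n) →₀ ℕ, Ch m →
    (Th F n e).coeff m = if (∀ i < n + 1, prof m i = e i) then 1 else 0 := by
  intro N
  induction N with
  | zero =>
    intro e he m hm
    have he0 : ∀ i ∈ Finset.range (n+1), e i = 0 :=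
      (Finset.sum_eq_zero_iff).1 he
    have hTh : Th F n e = 1 := by
      rw [Th]
      rw [Finset.prod_congr rfl (fun i hi => by rw [he0 i hi, pow_zero])]
      exact Finset.prod_const_one
    rw [hTh, MvPolynomial.coeff_one]
    by_cases h0 : m = 0
    · subst h0
      rw [if_pos rfl, if_pos]
      intro i hi
      rw [he0 i (Finset.mem_range.2 hi)]
      simp [prof]
    · rw [if_neg (fun h => h0 h.symm), if_neg]
      intro hcon
      refine h0 (eq_zero_of_prof hm (fun i hi => ?_))
      rw [hcon i hi, he0 i (Finset.mem_range.2 hi)]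
  | succ N ih =>
    intro e he m hm
    have hex : ∃ i ∈ Finset.range (n+1), e i ≠ 0 := by
      by_contra hcon
      push_neg at hcon
      rw [Finset.sum_eq_zero hcon] at he
      omega
    obtain ⟨i, hi, hei⟩ := hex
    set e' : ℕ → ℕ := fun j => if j = i then e i - 1 else e j with he'
    have he'sum : ∑ j ∈ Finset.range (n+1), e' j = N := by
      have d1 : e i + ∑ j ∈ (Finset.range (n+1)).erase i, e j
          = ∑ j ∈ Finset.range (n+1), e j := Finset.add_sum_erase _ _ hi
      have d2 : e' i + ∑ j ∈ (Finset.range (n+1)).erase i, e' j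
          = ∑ j ∈ Finset.range (n+1), e' j := Finset.add_sum_erase _ _ hi
      have d3 : ∑ j ∈ (Finset.range (n+1)).erase i, e' j
          = ∑ j ∈ (Finset.range (n+1)).erase i, e j := by
        apply Finset.sum_congr rfl
        intro j hj
        rw [he']
        simp only [if_neg (Finset.ne_of_mem_erase hj)]
      have d4 : e' i = e i - 1 := by rw [he']; simp
      omega
    have hsplit : Th F n e = tp F n i * Th F n e' := by
      rw [Th, Th, ← Finset.mul_prod_erase _ _ hi, ← Finset.mul_prod_erase _ _ hi]
      have hpow : tp F n i ^ e i = tp F n i * tp F n i ^ e' i := by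
        have : e i = e' i + 1 := by rw [he']; simp; omega
        rw [this, pow_succ']
      rw [hpow]
      have hrest : ∏ j ∈ (Finset.range (n+1)).erase i, tp F n j ^ e j
          = ∏ j ∈ (Finset.range (n+1)).erase i, tp F n j ^ e' j := by
        apply Finset.prod_congr rfl
        intro j hj
        rw [he']
        simp only [if_neg (Finset.ne_of_mem_erase hj)]
      rw [hrest, mul_assoc]
    rw [hsplit]
    have hmul : (tp F n i * Th F n e').coeff m
        = ∑ A ∈ Finset.univ.filter (fun A : Finset (Fin n) => A.card = i),
          (if A ∈ m.support then (Th F n e').coeff (m - Finsupp.single A 1) else 0) := by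
      rw [tp, Finset.sum_mul, MvPolynomial.coeff_sum]
      apply Finset.sum_congr rfl
      intro A _
      rw [MvPolynomial.coeff_X_mul']
    rw [hmul]
    by_cases hexA : ∃ A ∈ m.support, A.card = i
    · obtain ⟨A, hAs, hAcard⟩ := hexA
      have hAf : A ∈ Finset.univ.filter (fun A : Finset (Fin n) => A.card = i) := by
        simp [hAcard]
      rw [Finset.sum_eq_single_of_mem A hAf ?side]
      case side =>
        intro B hB hBA
        rw [Finset.mem_filter] at hB
        rw [if_neg]
        intro hBs
        refine hBA ?_
        rcases hm A hAs B hBs with h' | h'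
        · exact (Finset.eq_of_subset_of_card_le h' (by omega)).symm
        · exact Finset.eq_of_subset_of_card_le h' (by omega)
      rw [if_pos hAs]
      set m₂ := m - Finsupp.single A 1 with hm₂
      have hm₂ch : Ch m₂ := Ch.mono supp_sub_single hm
      rw [ih e' he'sum m₂ hm₂ch]
      have hprofm₂ : ∀ j, prof m₂ j = if j = A.card then prof m j - 1 else prof m j :=
        fun j => prof_sub_single hAs j
      have hprofA : 1 ≤ prof m i := by
        have := prof_ne_zero hm hAs
        rw [hAcard] at this
        omega
      have he'i : e' i = e i - 1 := by simp [he']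
      have he'ne : ∀ j, j ≠ i → e' j = e j := by
        intro j hj
        simp [he', hj]
      have hm₂i : prof m₂ i = prof m i - 1 := by
        rw [hprofm₂ i, if_pos hAcard.symm]
      have hm₂ne : ∀ j, j ≠ i → prof m₂ j = prof m j := by
        intro j hj
        rw [hprofm₂ j, if_neg (fun hc => hj (hc.trans hAcard))]
      have hiff : (∀ j < n + 1, prof m₂ j = e' j) ↔ (∀ j < n + 1, prof m j = e j) := by
        constructor
        · intro h j hj
          by_cases hji : j = i
          · subst hji
            have := h j hj
            rw [hm₂i, he'i] at this
            omega
          · have := h j hj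
            rw [hm₂ne j hji, he'ne j hji] at this
            exact this
        · intro h j hj
          by_cases hji : j = i
          · subst hji
            rw [hm₂i, he'i, h j hj]
          · rw [hm₂ne j hji, he'ne j hji]
            exact h j hj
      rw [if_congr hiff rfl rfl]
    · push_neg at hexA
      rw [Finset.sum_eq_zero, if_neg]
      · intro hcon
        have hprofi : prof m i = 0 := by
          by_contra hne
          obtain ⟨A, hAs, hAcard⟩ := exists_of_prof_ne_zero hne
          exact hexA A hAs hAcard
        have := hcon i (Finset.mem_range.1 hi)
        rw [hprofi] at this
        exact hei this.symm
      · intro A hAf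
        rw [Finset.mem_filter] at hAf
        rw [if_neg]
        intro hAs
        exact hexA A hAs hAf.2

lemma rename_tp (σ : Equiv.Perm (Fin n)) (i : ℕ) :
    MvPolynomial.rename (Finset.image σ) (tp F n i) = tp F n i := by
  rw [tp, map_sum]
  simp_rw [MvPolynomial.rename_X]
  refine Finset.sum_equiv (Equiv.finsetCongr σ) ?_ ?_
  · intro A
    simp only [Finset.mem_filter, Finset.mem_univ, true_and, Equiv.finsetCongr_apply]
    rw [Finset.card_map]
  · intro A _
    rw [Equiv.finsetCongr_apply, Finset.map_eq_image]
    rfl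

lemma rename_Th (σ : Equiv.Perm (Fin n)) (e : ℕ → ℕ) :
    MvPolynomial.rename (Finset.image σ) (Th F n e) = Th F n e := by
  rw [Th, map_prod]
  apply Finset.prod_congr rfl
  intro i _
  rw [map_pow, rename_tp]

lemma coeff_eq_of_prof {p : MvPolynomial (Finset (Fin n)) F}
    (hinv : ∀ σ : Equiv.Perm (Fin n), MvPolynomial.rename (Finset.image σ) p = p)
    {m m' : Finset (Fin n) →₀ ℕ} (hm : Ch m) (hm' : Ch m')
    (hp : ∀ i, prof m i = prof m' i) : p.coeff m' = p.coeff m := by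
  obtain ⟨σ, hσ⟩ := exists_perm_mapDomain hm hm' hp
  conv_lhs => rw [← hinv σ]
  rw [← hσ, MvPolynomial.coeff_rename_mapDomain _ (Finset.image_injective σ.injective)]

lemma mk_tp (i : ℕ) : Ideal.Quotient.mk (SRIdeal F n) (tp F n i) = theta F n i := rfl

/-- Main lemma: chain-supported invariant polynomials map into the adjoin of thetas. -/
lemma main : ∀ (N : ℕ) (p : MvPolynomial (Finset (Fin n)) F), p.support.card ≤ N →
    (∀ d ∈ p.support, Ch d) →
    (∀ σ : Equiv.Perm (Fin n), MvPolynomial.rename (Finset.image σ) p = p) →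
    Ideal.Quotient.mk (SRIdeal F n) p
      ∈ Algebra.adjoin F (Set.range fun i : Fin (n + 1) => theta F n i) := by
  intro N
  induction N with
  | zero =>
    intro p hcard _ _
    have : p = 0 := by
      have h := Finset.card_eq_zero.1 (Nat.le_zero.1 hcard)
      rwa [MvPolynomial.support_eq_empty] at h
    rw [this, map_zero]
    exact Subalgebra.zero_mem _
  | succ N ih =>
    intro p hcard hch hinv
    by_cases hp0 : p = 0
    · rw [hp0, map_zero]
      exact Subalgebra.zero_mem _
    have hsupp : p.support.Nonempty := by
      rw [Finset.nonempty_iff_ne_empty]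
      intro h
      exact hp0 (MvPolynomial.support_eq_empty.1 h)
    obtain ⟨m, hm⟩ := hsupp
    set c := p.coeff m with hc
    set e := prof m with he
    set Θ := Th F n e with hΘ
    have hmch : Ch m := hch m hm
    have hent : ∀ i, n < i → e i = 0 := fun i hi => prof_high hi
    have hcpΘ : ∀ d, Ch d → (cp Θ).coeff d = if (∀ i, prof d i = e i) then 1 else 0 := by
      intro d hd
      rw [coeff_cp, if_pos hd, hΘ, coeff_Th (∑ i ∈ Finset.range (n+1), e i) e rfl d hd]
      have : (∀ i < n + 1, prof d i = e i) ↔ (∀ i, prof d i = e i) := by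
        constructor
        · intro h i
          by_cases hi : i < n + 1
          · exact h i hi
          · rw [prof_high (by omega), hent i (by omega)]
        · intro h i _
          exact h i
      rw [if_congr this rfl rfl]
    set q := p - MvPolynomial.C c * cp Θ with hq
    have hcpsupp : ∀ d ∈ (MvPolynomial.C c * cp Θ).support, Ch d := by
      intro d hd
      have h1 : (MvPolynomial.C c * cp Θ).coeff d = c * (cp Θ).coeff d := by
        rw [MvPolynomial.coeff_C_mul]
      rw [MvPolynomial.mem_support_iff, h1] at hd
      by_contra hcon
      rw [coeff_cp, if_neg hcon, mul_zero] at hd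
      exact hd rfl
    have hqch : ∀ d ∈ q.support, Ch d := by
      intro d hd
      rcases Finset.mem_union.1 (MvPolynomial.support_sub _ _ _ hd) with h | h
      · exact hch d h
      · exact hcpsupp d h
    have hqcoeff : ∀ d, q.coeff d = p.coeff d - c * (cp Θ).coeff d := by
      intro d
      rw [hq, MvPolynomial.coeff_sub, MvPolynomial.coeff_C_mul]
    have hqm : m ∉ q.support := by
      rw [MvPolynomial.notMem_support_iff, hqcoeff, hcpΘ m hmch, if_pos (fun i => rfl),
        mul_one, ← hc, sub_self]
    have hqsupp : q.support ⊆ p.support := by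
      intro d hd
      have hd0 := MvPolynomial.mem_support_iff.1 hd
      rw [hqcoeff] at hd0
      rw [MvPolynomial.mem_support_iff]
      by_cases hchd : Ch d
      · rw [hcpΘ d hchd] at hd0
        by_cases hpr : ∀ i, prof d i = e i
        · exfalso
          rw [if_pos hpr, mul_one] at hd0
          have hce : p.coeff d = c := coeff_eq_of_prof hinv hmch hchd
            (fun i => by rw [hpr i, he])
          rw [hce, sub_self] at hd0
          exact hd0 rfl
        · rw [if_neg hpr, mul_zero, sub_zero] at hd0
          exact hd0
      · rw [coeff_cp, if_neg hchd, mul_zero, sub_zero] at hd0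
        exact hd0
    have hqcard : q.support.card ≤ N := by
      have hsub : q.support ⊆ p.support.erase m := by
        intro d hd
        exact Finset.mem_erase.2 ⟨fun hdm => hqm (hdm ▸ hd), hqsupp hd⟩
      have h1 := Finset.card_le_card hsub
      have h2 := Finset.card_erase_of_mem hm
      omega
    have hqinv : ∀ σ : Equiv.Perm (Fin n), MvPolynomial.rename (Finset.image σ) q = q := by
      intro σ
      rw [hq, map_sub, map_mul, MvPolynomial.rename_C, hinv σ, ← cp_rename, rename_Th]
    have hΘmem : Ideal.Quotient.mk (SRIdeal F n) Θ
        ∈ Algebra.adjoin F (Set.range fun i : Fin (n + 1) => theta F n i) := by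
      rw [hΘ, Th, map_prod]
      apply Subalgebra.prod_mem
      intro i hi
      rw [map_pow, mk_tp]
      apply Subalgebra.pow_mem
      apply Algebra.subset_adjoin
      exact ⟨⟨i, Finset.mem_range.1 hi⟩, rfl⟩
    have hmkcp : Ideal.Quotient.mk (SRIdeal F n) (cp Θ)
        = Ideal.Quotient.mk (SRIdeal F n) Θ := by
      rw [Ideal.Quotient.mk_eq_mk_iff_sub_mem]
      have := sub_cp_mem Θ
      have h2 : cp Θ - Θ = -(Θ - cp Θ) := by ring
      rw [h2]
      exact neg_mem this
    have hdecomp : Ideal.Quotient.mk (SRIdeal F n) p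
        = Ideal.Quotient.mk (SRIdeal F n) q
          + Ideal.Quotient.mk (SRIdeal F n) (MvPolynomial.C c)
            * Ideal.Quotient.mk (SRIdeal F n) Θ := by
      rw [← hmkcp, ← map_mul, ← map_add, hq]
      ring_nf
    rw [hdecomp]
    refine Subalgebra.add_mem _ (ih q hqcard hqch hqinv) (Subalgebra.mul_mem _ ?_ hΘmem)
    have : Ideal.Quotient.mk (SRIdeal F n) (MvPolynomial.C c)
        = algebraMap F (SRRing F n) c := rfl
    rw [this]
    exact Subalgebra.algebraMap_mem _ c

lemma srPerm_mk (σ : Equiv.Perm (Fin n)) (x : MvPolynomial (Finset (Fin n)) F) :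
    srPerm F n σ (Ideal.Quotient.mk (SRIdeal F n) x)
      = Ideal.Quotient.mk (SRIdeal F n) (MvPolynomial.rename (Finset.image σ) x) := rfl

end SRAux

open SRAux in
/-- The invariant algebra `F[Bₙ]^{Sₙ}` equals the subalgebra generated by the rank
polynomials `θ₀, θ₁, …, θₙ`. -/
theorem stmt_4 (F : Type*) [Field F] (n : ℕ) :
    {f : SRRing F n | ∀ σ : Equiv.Perm (Fin n), srPerm F n σ f = f} =
      (↑(Algebra.adjoin F (Set.range fun i : Fin (n + 1) => theta F n i)) :
        Set (SRRing F n)) := by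
  ext f
  simp only [Set.mem_setOf_eq, SetLike.mem_coe]
  constructor
  · intro hf
    obtain ⟨p, rfl⟩ := Ideal.Quotient.mk_surjective f
    have h1 : Ideal.Quotient.mk (SRIdeal F n) (cp p)
        = Ideal.Quotient.mk (SRIdeal F n) p := by
      rw [Ideal.Quotient.mk_eq_mk_iff_sub_mem]
      have := sub_cp_mem p
      have h2 : cp p - p = -(p - cp p) := by ring
      rw [h2]
      exact neg_mem this
    have hcpch : ∀ d ∈ (cp p).support, Ch d := by
      intro d hd
      have := MvPolynomial.mem_support_iff.1 hd
      rw [coeff_cp] at this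
      by_contra hcon
      rw [if_neg hcon] at this
      exact this rfl
    have hinv : ∀ σ : Equiv.Perm (Fin n),
        MvPolynomial.rename (Finset.image σ) (cp p) = cp p := by
      intro σ
      have h2 : Ideal.Quotient.mk (SRIdeal F n)
          (MvPolynomial.rename (Finset.image σ) (cp p))
          = Ideal.Quotient.mk (SRIdeal F n) (cp p) := by
        rw [← srPerm_mk, h1, hf σ, ← h1]
      have h3 : MvPolynomial.rename (Finset.image σ) (cp p) - cp p ∈ SRIdeal F n :=
        (Ideal.Quotient.mk_eq_mk_iff_sub_mem _ _).1 h2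
      have h4 : ∀ d ∈ (MvPolynomial.rename (Finset.image σ) (cp p) - cp p).support, Ch d := by
        intro d hd
        rcases Finset.mem_union.1 (MvPolynomial.support_sub _ _ _ hd) with h | h
        · have h5 := MvPolynomial.mem_support_iff.1 h
          obtain ⟨u, hu, hu0⟩ := MvPolynomial.coeff_rename_ne_zero _ _ _ h5
          rw [← hu]
          exact (ch_mapDomain σ).2 (hcpch u (MvPolynomial.mem_support_iff.2 hu0))
        · exact hcpch d h
      have h5 := eq_zero_of_chain_mem h3 h4
      have := sub_eq_zero.1 h5
      exact this
    rw [← h1]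
    exact main (cp p).support.card (cp p) le_rfl hcpch hinv
  · intro hf σ
    have hle : Algebra.adjoin F (Set.range fun i : Fin (n + 1) => theta F n i)
        ≤ AlgHom.equalizer (srPerm F n σ) (AlgHom.id F (SRRing F n)) := by
      rw [Algebra.adjoin_le_iff]
      rintro x ⟨i, rfl⟩
      show srPerm F n σ (theta F n ↑i) = theta F n ↑i
      rw [← mk_tp, srPerm_mk, rename_tp]
    exact hle hf
end
end

section
/- For any multichain M in the Boolean algebra Bₙ and any i ∈ [n-1]: an element f ∈ F[Bₙ] satisfies π̄ᵢ(f) = 0 if and only if sᵢ(f) = f. Consequently, the 0-Hecke invariant algebra F[Bₙ]^{Hₙ(0)} = {f : π̄ᵢf = 0 for all i} equals the Sₙ-invariant algebra F[Bₙ]^{Sₙ}. -/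
set_option synthInstance.maxHeartbeats 1000000
set_option maxHeartbeats 1000000

open scoped Classical

/-- The `Sₙ`-action on the Stanley-Reisner ring `F[Bₙ]`, permuting `1,…,n`. -/
noncomputable def permAct {F : Type*} [Field F] {n : ℕ} (σ : Equiv.Perm (Fin n)) :
    (MChain n →₀ F) →ₗ[F] (MChain n →₀ F) :=
  Finsupp.lmapDomain F F (permChain σ)

/- ### Auxiliary lemmas -/

lemma permChain_mul {n : ℕ} (σ τ : Equiv.Perm (Fin n)) (m : MChain n) :
    permChain (σ * τ) m = permChain σ (permChain τ m) := by
  apply Subtype.ext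
  show m.1.map _ = (m.1.map _).map _
  rw [Multiset.map_map]
  apply Multiset.map_congr rfl
  intro A _
  show Finset.image _ A = Finset.image _ (Finset.image _ A)
  rw [Finset.image_image]
  rfl

lemma permChain_one {n : ℕ} (m : MChain n) : permChain (1 : Equiv.Perm (Fin n)) m = m := by
  apply Subtype.ext
  show m.1.map _ = m.1
  have h : ∀ A ∈ m.1, Finset.image (⇑(1 : Equiv.Perm (Fin n))) A = id A := by
    intro A _; simp
  rw [Multiset.map_congr rfl h, Multiset.map_id]

lemma permChain_swap_invol {n : ℕ} (a b : Fin n) (m : MChain n) :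
    permChain (Equiv.swap a b) (permChain (Equiv.swap a b) m) = m := by
  rw [← permChain_mul, Equiv.swap_mul_self, permChain_one]

lemma mem_image_swap {n : ℕ} (a b x : Fin n) (A : Finset (Fin n)) :
    x ∈ A.image (Equiv.swap a b) ↔ Equiv.swap a b x ∈ A := by
  simp only [Finset.mem_image]
  constructor
  · rintro ⟨y, hy, rfl⟩; rwa [Equiv.swap_apply_self]
  · intro h; exact ⟨_, h, Equiv.swap_apply_self _ _ _⟩

section SwapLemmas

variable {n : ℕ} (a b : Fin n)

/-- The "descent" predicate. -/
def Dpred (m : MChain n) : Prop := ∃ A ∈ m.1, b ∈ A ∧ a ∉ A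

/-- The "ascent" predicate. -/
def Upred (m : MChain n) : Prop := ∃ A ∈ m.1, a ∈ A ∧ b ∉ A

/-- The "equal" predicate. -/
def Epred (m : MChain n) : Prop := ∀ A ∈ m.1, (a ∈ A ↔ b ∈ A)

lemma not_D_and_U (m : MChain n) : ¬ (Dpred a b m ∧ Upred a b m) := by
  rintro ⟨⟨A, hA, hbA, haA⟩, ⟨B, hB, haB, hbB⟩⟩
  rcases m.2 A hA B hB with h | h
  · exact hbB (h hbA)
  · exact haA (h haB)

lemma U_of_not_D_not_E {m : MChain n} (hD : ¬ Dpred a b m) (hE : ¬ Epred a b m) :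
    Upred a b m := by
  simp only [Epred, not_forall] at hE
  obtain ⟨A, hA, hne⟩ := hE
  by_cases ha : a ∈ A
  · by_cases hb : b ∈ A
    · exact absurd (iff_of_true ha hb) hne
    · exact ⟨A, hA, ha, hb⟩
  · by_cases hb : b ∈ A
    · exact absurd ⟨A, hA, hb, ha⟩ hD
    · exact absurd (iff_of_false ha hb) hne

lemma D_permChain_swap (m : MChain n) :
    Dpred a b (permChain (Equiv.swap a b) m) ↔ Upred a b m := by
  unfold Dpred Upred
  constructor
  · rintro ⟨A', hA', hb, ha⟩
    obtain ⟨A, hA, rfl⟩ := Multiset.mem_map.mp hA'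
    rw [mem_image_swap, Equiv.swap_apply_right] at hb
    rw [mem_image_swap, Equiv.swap_apply_left] at ha
    exact ⟨A, hA, hb, ha⟩
  · rintro ⟨A, hA, ha, hb⟩
    refine ⟨A.image (Equiv.swap a b), Multiset.mem_map_of_mem _ hA, ?_, ?_⟩
    · rw [mem_image_swap, Equiv.swap_apply_right]; exact ha
    · rw [mem_image_swap, Equiv.swap_apply_left]; exact hb

lemma E_permChain_swap (m : MChain n) :
    Epred a b (permChain (Equiv.swap a b) m) ↔ Epred a b m := by
  unfold Epred
  constructor
  · intro h A hA
    have := h (A.image (Equiv.swap a b)) (Multiset.mem_map_of_mem _ hA)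
    rwa [mem_image_swap, mem_image_swap, Equiv.swap_apply_left, Equiv.swap_apply_right,
      Iff.comm] at this
  · intro h A' hA'
    obtain ⟨A, hA, rfl⟩ := Multiset.mem_map.mp hA'
    rw [mem_image_swap, mem_image_swap, Equiv.swap_apply_left, Equiv.swap_apply_right]
    exact (h A hA).symm

lemma permChain_swap_of_E {m : MChain n} (h : Epred a b m) :
    permChain (Equiv.swap a b) m = m := by
  apply Subtype.ext
  show m.1.map _ = m.1
  have hc : ∀ A ∈ m.1, Finset.image (⇑(Equiv.swap a b)) A = id A := by
    intro A hA
    ext x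
    rw [id_eq, mem_image_swap, Equiv.swap_apply_def]
    split_ifs with h1 h2
    · subst h1; exact (h A hA).symm
    · subst h2; exact h A hA
    · rfl
  rw [Multiset.map_congr rfl hc, Multiset.map_id]

lemma D_ne_permChain {m : MChain n} (h : Dpred a b m) :
    m ≠ permChain (Equiv.swap a b) m := by
  intro heq
  have hU : Upred a b m := by
    rw [← D_permChain_swap, ← heq]; exact h
  exact not_D_and_U a b m ⟨h, hU⟩

end SwapLemmas

lemma pibar_apply {F : Type*} [Field F] {n : ℕ} (i : ℕ) (hi : i + 1 < n)
    (f : MChain n →₀ F) (d : MChain n) :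
    pibarOp i hi f d =
      if Dpred (⟨i, Nat.lt_of_succ_lt hi⟩ : Fin n) ⟨i + 1, hi⟩ d then
        f (permChain (Equiv.swap ⟨i, Nat.lt_of_succ_lt hi⟩ ⟨i + 1, hi⟩) d) - f d
      else 0 := by
  set a : Fin n := ⟨i, Nat.lt_of_succ_lt hi⟩ with ha
  set b : Fin n := ⟨i + 1, hi⟩ with hb
  set s : Equiv.Perm (Fin n) := Equiv.swap a b with hs
  have key : ∀ m : MChain n, ∀ c : F,
      (((if ∃ A ∈ m.1, (⟨i + 1, hi⟩ : Fin n) ∈ A ∧ (⟨i, Nat.lt_of_succ_lt hi⟩ : Fin n) ∉ A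
          then -(Finsupp.lsingle m)
        else if ∀ A ∈ m.1,
            ((⟨i, Nat.lt_of_succ_lt hi⟩ : Fin n) ∈ A ↔ (⟨i + 1, hi⟩ : Fin n) ∈ A) then 0
        else Finsupp.lsingle
          (permChain (Equiv.swap ⟨i, Nat.lt_of_succ_lt hi⟩ ⟨i + 1, hi⟩) m)
          : F →ₗ[F] (MChain n →₀ F)) c) d) =
      (if Dpred a b d then
        ((if m = d then -c else 0) + (if m = permChain s d then c else 0)) else 0) := by
    intro m c
    by_cases hDm : ∃ A ∈ m.1, (⟨i + 1, hi⟩ : Fin n) ∈ A ∧ (⟨i, Nat.lt_of_succ_lt hi⟩ : Fin n) ∉ A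
    · rw [if_pos hDm]
      have hDm' : Dpred a b m := hDm
      by_cases hmd : m = d
      · subst hmd
        have hne : m ≠ permChain s m := D_ne_permChain a b hDm'
        rw [LinearMap.neg_apply, Finsupp.lsingle_apply, Finsupp.neg_apply,
          Finsupp.single_apply, if_pos rfl, if_pos hDm', if_pos rfl, if_neg hne, add_zero]
      · by_cases hDd : Dpred a b d
        · have hms : m ≠ permChain s d := by
            intro heq
            have hUd : Upred a b d := by
              rw [← D_permChain_swap]; rw [heq] at hDm'; exact hDm'
            exact not_D_and_U a b d ⟨hDd, hUd⟩
          rw [LinearMap.neg_apply, Finsupp.lsingle_apply, Finsupp.neg_apply,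
            Finsupp.single_apply, if_neg hmd, neg_zero, if_pos hDd, if_neg hmd,
            if_neg hms, add_zero]
        · rw [LinearMap.neg_apply, Finsupp.lsingle_apply, Finsupp.neg_apply,
            Finsupp.single_apply, if_neg hmd, neg_zero, if_neg hDd]
    · rw [if_neg hDm]
      have hDm' : ¬ Dpred a b m := hDm
      by_cases hEm : ∀ A ∈ m.1,
          ((⟨i, Nat.lt_of_succ_lt hi⟩ : Fin n) ∈ A ↔ (⟨i + 1, hi⟩ : Fin n) ∈ A)
      · rw [if_pos hEm]
        have hEm' : Epred a b m := hEm
        by_cases hDd : Dpred a b d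
        · have hmd : m ≠ d := fun h => hDm' (h ▸ hDd)
          have hms : m ≠ permChain s d := by
            intro heq
            have h2 : permChain s m = m := permChain_swap_of_E a b hEm'
            exact hmd (h2.symm.trans (by rw [heq, permChain_swap_invol]))
          rw [LinearMap.zero_apply, Finsupp.coe_zero, Pi.zero_apply, if_pos hDd,
            if_neg hmd, if_neg hms, add_zero]
        · rw [LinearMap.zero_apply, Finsupp.coe_zero, Pi.zero_apply, if_neg hDd]
      · rw [if_neg hEm]
        have hEm' : ¬ Epred a b m := hEm
        have hUm : Upred a b m := U_of_not_D_not_E a b hDm' hEm'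
        by_cases hsm : permChain s m = d
        · have hDd : Dpred a b d := by rw [← hsm, D_permChain_swap]; exact hUm
          have hmd : m ≠ d := by
            intro h
            subst h
            exact not_D_and_U a b m ⟨hDd, hUm⟩
          have hms : m = permChain s d := by rw [← hsm, permChain_swap_invol]
          have hsd : permChain (Equiv.swap (⟨i, Nat.lt_of_succ_lt hi⟩ : Fin n) ⟨i + 1, hi⟩) m = d := hsm
          rw [Finsupp.lsingle_apply, Finsupp.single_apply, if_pos hsd, if_pos hDd,
            if_neg hmd, if_pos hms, zero_add]
        · by_cases hDd : Dpred a b d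
          · have hmd : m ≠ d := fun h => hDm' (h ▸ hDd)
            have hms : m ≠ permChain s d := by
              intro heq
              apply hsm
              rw [heq, permChain_swap_invol]
            have hsd : permChain (Equiv.swap (⟨i, Nat.lt_of_succ_lt hi⟩ : Fin n) ⟨i + 1, hi⟩) m ≠ d := hsm
            rw [Finsupp.lsingle_apply, Finsupp.single_apply, if_neg hsd, if_pos hDd,
              if_neg hmd, if_neg hms, add_zero]
          · have hsd : permChain (Equiv.swap (⟨i, Nat.lt_of_succ_lt hi⟩ : Fin n) ⟨i + 1, hi⟩) m ≠ d := hsm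
            rw [Finsupp.lsingle_apply, Finsupp.single_apply, if_neg hsd, if_neg hDd]
  have h1 : pibarOp i hi f d = f.sum fun m c =>
      (((if ∃ A ∈ m.1, (⟨i + 1, hi⟩ : Fin n) ∈ A ∧ (⟨i, Nat.lt_of_succ_lt hi⟩ : Fin n) ∉ A
          then -(Finsupp.lsingle m)
        else if ∀ A ∈ m.1,
            ((⟨i, Nat.lt_of_succ_lt hi⟩ : Fin n) ∈ A ↔ (⟨i + 1, hi⟩ : Fin n) ∈ A) then 0
        else Finsupp.lsingle
          (permChain (Equiv.swap ⟨i, Nat.lt_of_succ_lt hi⟩ ⟨i + 1, hi⟩) m)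
          : F →ₗ[F] (MChain n →₀ F)) c) d) := by
    rw [pibarOp, Finsupp.lsum_apply, Finsupp.sum_apply]
  rw [h1, Finsupp.sum_congr (g2 := fun m c =>
    if Dpred a b d then
      ((if m = d then -c else 0) + (if m = permChain s d then c else 0)) else 0)
    (fun m _ => key m (f m))]
  by_cases hDd : Dpred a b d
  · simp only [if_pos hDd]
    rw [Finsupp.sum_add]
    have e1 : (f.sum fun m c => if m = d then -c else 0) = -(f d) := by
      rw [Finsupp.sum_ite_eq' f d (fun _ c => -c)]
      by_cases h : d ∈ f.support
      · rw [if_pos h]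
      · rw [if_neg h, Finsupp.notMem_support_iff.mp h, neg_zero]
    have e2 : (f.sum fun m c => if m = permChain s d then c else 0) = f (permChain s d) :=
      Finsupp.sum_ite_self_eq' f _
    rw [e1, e2]
    ring
  · simp only [if_neg hDd, Finsupp.sum_fun_zero, if_neg hDd]

lemma adjacent_gen {n : ℕ} (σ : Equiv.Perm (Fin n)) :
    σ ∈ Submonoid.closure {τ : Equiv.Perm (Fin n) |
      ∃ (i : ℕ) (hi : i + 1 < n),
        τ = Equiv.swap ⟨i, Nat.lt_of_succ_lt hi⟩ ⟨i + 1, hi⟩} := by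
  match n with
  | 0 =>
    have : σ = 1 := Subsingleton.elim _ _
    rw [this]
    exact Submonoid.one_mem _
  | (k+1) =>
    have h0 : σ ∈ Submonoid.closure
        (Set.range fun i : Fin k => Equiv.swap i.castSucc i.succ) := by
      rw [Equiv.Perm.mclosure_swap_castSucc_succ]
      trivial
    refine Submonoid.closure_mono ?_ h0
    rintro _ ⟨j, rfl⟩
    refine ⟨(j : ℕ), Nat.succ_lt_succ j.2, ?_⟩
    rfl

lemma permAct_swap_apply {F : Type*} [Field F] {n : ℕ} (a b : Fin n)
    (f : MChain n →₀ F) (d : MChain n) :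
    permAct (Equiv.swap a b) f d = f (permChain (Equiv.swap a b) d) := by
  have hinj : Function.Injective (permChain (Equiv.swap a b) : MChain n → MChain n) :=
    Function.LeftInverse.injective (permChain_swap_invol a b)
  have h := Finsupp.mapDomain_apply hinj f (permChain (Equiv.swap a b) d)
  rw [permChain_swap_invol] at h
  rw [permAct, Finsupp.lmapDomain_apply]
  exact h

/-- For each `i ∈ [n-1]`, an element `f ∈ F[Bₙ]` satisfies `π̄ᵢ(f) = 0` iff `sᵢ(f) = f`;
consequently the 0-Hecke invariants `{f : π̄ᵢ f = 0 ∀ i}` coincide with the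
`Sₙ`-invariants `{f : σ f = f ∀ σ}`. -/
theorem stmt_5 {F : Type*} [Field F] (n : ℕ) :
    (∀ (i : ℕ) (hi : i + 1 < n) (f : MChain n →₀ F),
      pibarOp i hi f = 0 ↔
        permAct (Equiv.swap ⟨i, Nat.lt_of_succ_lt hi⟩ ⟨i + 1, hi⟩) f = f) ∧
    {f : MChain n →₀ F | ∀ (i : ℕ) (hi : i + 1 < n), pibarOp i hi f = 0} =
      {f : MChain n →₀ F | ∀ σ : Equiv.Perm (Fin n), permAct σ f = f} := by
  have permAct_one : ∀ f : MChain n →₀ F, permAct (1 : Equiv.Perm (Fin n)) f = f := by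
    intro f
    rw [permAct, Finsupp.lmapDomain_apply]
    have : (permChain (1 : Equiv.Perm (Fin n)) : MChain n → MChain n) = id :=
      funext permChain_one
    rw [this, Finsupp.mapDomain_id]
  have permAct_mul : ∀ (σ τ : Equiv.Perm (Fin n)) (f : MChain n →₀ F),
      permAct (σ * τ) f = permAct σ (permAct τ f) := by
    intro σ τ f
    simp only [permAct, Finsupp.lmapDomain_apply]
    have : (permChain (σ * τ) : MChain n → MChain n) = permChain σ ∘ permChain τ :=
      funext (permChain_mul σ τ)
    rw [this, Finsupp.mapDomain_comp]
  have main : ∀ (i : ℕ) (hi : i + 1 < n) (f : MChain n →₀ F),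
      pibarOp i hi f = 0 ↔
        permAct (Equiv.swap ⟨i, Nat.lt_of_succ_lt hi⟩ ⟨i + 1, hi⟩) f = f := by
    intro i hi f
    set a : Fin n := ⟨i, Nat.lt_of_succ_lt hi⟩
    set b : Fin n := ⟨i + 1, hi⟩
    set s : Equiv.Perm (Fin n) := Equiv.swap a b
    have h1 : pibarOp i hi f = 0 ↔ ∀ d, Dpred a b d → f (permChain s d) = f d := by
      constructor
      · intro h d hD
        have := DFunLike.congr_fun h d
        rw [pibar_apply, if_pos hD] at this
        simpa [sub_eq_zero] using this
      · intro h
        ext d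
        rw [pibar_apply]
        by_cases hD : Dpred a b d
        · rw [if_pos hD, h d hD, sub_self]; rfl
        · rw [if_neg hD]; rfl
    have h2 : permAct s f = f ↔ ∀ d, f (permChain s d) = f d := by
      constructor
      · intro h d
        have := DFunLike.congr_fun h d
        rwa [permAct_swap_apply] at this
      · intro h
        ext d
        rw [permAct_swap_apply]
        exact h d
    rw [h1, h2]
    constructor
    · intro h d
      by_cases hD : Dpred a b d
      · exact h d hD
      · by_cases hE : Epred a b d
        · rw [permChain_swap_of_E a b hE]
        · have hU : Upred a b d := U_of_not_D_not_E a b hD hE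
          have hD' : Dpred a b (permChain s d) := (D_permChain_swap a b d).mpr hU
          have := h _ hD'
          rw [permChain_swap_invol] at this
          exact this.symm
    · intro h d _
      exact h d
  refine ⟨main, ?_⟩
  ext f
  simp only [Set.mem_setOf_eq]
  constructor
  · intro h σ
    have hfix : ∀ (i : ℕ) (hi : i + 1 < n),
        permAct (Equiv.swap ⟨i, Nat.lt_of_succ_lt hi⟩ ⟨i + 1, hi⟩) f = f := by
      intro i hi
      exact (main i hi f).mp (h i hi)
    have hσ := adjacent_gen σ
    induction hσ using Submonoid.closure_induction with
    | mem x hx =>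
      obtain ⟨i, hi, rfl⟩ := hx
      exact hfix i hi
    | one => exact permAct_one f
    | mul x y _ _ hx hy => rw [permAct_mul, hy, hx]
  · intro h i hi
    exact (main i hi f).mpr (h _)
end

section
/- The action of the 0-Hecke algebra Hₙ(0) on the Stanley-Reisner ring F[Bₙ] is Θ-linear: π̄ᵢ(θᵣ · f) = θᵣ · π̄ᵢ(f) for all i ∈ [n-1], all r ∈ {0,1,...,n}, and all f ∈ F[Bₙ]. -/
set_option synthInstance.maxHeartbeats 1000000
set_option maxHeartbeats 1000000

open scoped Classical

/-- Multiplication by the rank polynomial `θᵣ = Σ_{|A|=r} y_A` on the Stanley-Reisner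
ring `F[Bₙ]`: on a basis element `y_M` it yields the sum of `y_{M ∪ {A}}` over all
subsets `A` of cardinality `r` compatible with the multichain `M`. -/
noncomputable def thetaMul {F : Type*} [Field F] {n : ℕ} (r : ℕ) :
    (MChain n →₀ F) →ₗ[F] (MChain n →₀ F) :=
  Finsupp.lsum F (fun m : MChain n =>
    ∑ A ∈ (Finset.univ.filter
        (fun A : Finset (Fin n) => A.card = r ∧ ∀ B ∈ m.1, A ⊆ B ∨ B ⊆ A)).attach,
      Finsupp.lsingle (⟨A.1 ::ₘ m.1, by
        have hA := (Finset.mem_filter.mp A.2).2.2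
        intro X hX Y hY
        rcases Multiset.mem_cons.mp hX with rfl | hX' <;>
          rcases Multiset.mem_cons.mp hY with rfl | hY'
        · exact Or.inl subset_rfl
        · exact hA Y hY'
        · exact (hA X hX').symm
        · exact m.2 X hX' Y hY'⟩ : MChain n))


namespace Stmt6Aux

variable {n : ℕ}

lemma MChain.ext {m m' : MChain n} (h : m.1 = m'.1) : m = m' := Subtype.ext h

lemma mem_swap_image {a b : Fin n} {S : Finset (Fin n)} {x : Fin n} :
    x ∈ S.image ⇑(Equiv.swap a b) ↔ Equiv.swap a b x ∈ S := by
  constructor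
  · rintro h
    obtain ⟨y, hy, rfl⟩ := Finset.mem_image.mp h
    simpa using hy
  · intro h
    exact Finset.mem_image.mpr ⟨_, h, by simp⟩

lemma swap_image_image {a b : Fin n} (S : Finset (Fin n)) :
    (S.image ⇑(Equiv.swap a b)).image ⇑(Equiv.swap a b) = S := by
  rw [Finset.image_image]
  ext x
  simp [Finset.mem_image]

lemma swap_image_eq {a b : Fin n} {S : Finset (Fin n)} (h : a ∈ S ↔ b ∈ S) :
    S.image ⇑(Equiv.swap a b) = S := by
  ext x
  rw [mem_swap_image]
  rcases eq_or_ne x a with rfl | hxa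
  · simp [Equiv.swap_apply_left, h]
  rcases eq_or_ne x b with rfl | hxb
  · simp [Equiv.swap_apply_right, h]
  · rw [Equiv.swap_apply_of_ne_of_ne hxa hxb]

/-- Compatibility of a set with a multichain. -/
def Compat (A : Finset (Fin n)) (m : MChain n) : Prop := ∀ B ∈ m.1, A ⊆ B ∨ B ⊆ A

lemma compat_image (σ : Equiv.Perm (Fin n)) {A : Finset (Fin n)} {m : MChain n}
    (h : Compat A m) : Compat (A.image ⇑σ) (permChain σ m) := by
  intro B' hB'
  obtain ⟨B, hB, rfl⟩ := Multiset.mem_map.mp hB'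
  rcases h B hB with h' | h'
  · exact Or.inl (Finset.image_subset_image h')
  · exact Or.inr (Finset.image_subset_image h')

/-- Adjoin a compatible set to a multichain (identity if incompatible). -/
noncomputable def consChain (A : Finset (Fin n)) (m : MChain n) : MChain n :=
  if h : Compat A m then
    ⟨A ::ₘ m.1, by
      intro X hX Y hY
      rcases Multiset.mem_cons.mp hX with rfl | hX' <;>
        rcases Multiset.mem_cons.mp hY with rfl | hY'
      · exact Or.inl subset_rfl
      · exact h Y hY'
      · exact (h X hX').symm
      · exact m.2 X hX' Y hY'⟩
  else m

lemma consChain_val {A : Finset (Fin n)} {m : MChain n} (h : Compat A m) :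
    (consChain A m).1 = A ::ₘ m.1 := by
  unfold consChain; exact congrArg Subtype.val (dif_pos h)

lemma mem_consChain {A X : Finset (Fin n)} {m : MChain n} (h : Compat A m)
    (hX : X ∈ (consChain A m).1) : X = A ∨ X ∈ m.1 := by
  rw [consChain_val h] at hX
  exact Multiset.mem_cons.mp hX

lemma self_mem_consChain {A : Finset (Fin n)} {m : MChain n} (h : Compat A m) :
    A ∈ (consChain A m).1 := by
  rw [consChain_val h]; exact Multiset.mem_cons_self _ _

lemma mem_consChain_of_mem {A X : Finset (Fin n)} {m : MChain n} (h : Compat A m)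
    (hX : X ∈ m.1) : X ∈ (consChain A m).1 := by
  rw [consChain_val h]; exact Multiset.mem_cons_of_mem hX

lemma permChain_swap_swap (a b : Fin n) (m : MChain n) :
    permChain (Equiv.swap a b) (permChain (Equiv.swap a b) m) = m := by
  apply MChain.ext
  show (m.1.map _).map _ = m.1
  rw [Multiset.map_map]
  refine Eq.trans (Multiset.map_congr rfl fun B _ => ?_) (Multiset.map_id _)
  simpa using swap_image_image (a := a) (b := b) B

lemma permChain_eqc {a b : Fin n} {m : MChain n} (h : ∀ A ∈ m.1, (a ∈ A ↔ b ∈ A)) :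
    permChain (Equiv.swap a b) m = m := by
  apply MChain.ext
  show m.1.map _ = m.1
  refine Eq.trans (Multiset.map_congr rfl fun B hB => ?_) (Multiset.map_id _)
  exact swap_image_eq (h B hB)

lemma permChain_cons (σ : Equiv.Perm (Fin n)) {A : Finset (Fin n)} {m : MChain n}
    (h : Compat A m) :
    permChain σ (consChain A m) = consChain (A.image ⇑σ) (permChain σ m) := by
  apply MChain.ext
  rw [consChain_val (compat_image σ h)]
  show (consChain A m).1.map _ = _
  rw [consChain_val h, Multiset.map_cons]
  rfl

end Stmt6Aux

open Stmt6Aux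

/-- A version of `pibarOp` parameterized by the two swapped elements. -/
noncomputable def pibarGen {F : Type*} [Field F] {n : ℕ} (a b : Fin n) :
    (MChain n →₀ F) →ₗ[F] (MChain n →₀ F) :=
  Finsupp.lsum F (fun m : MChain n =>
    if ∃ A ∈ m.1, b ∈ A ∧ a ∉ A then -(Finsupp.lsingle m)
    else if ∀ A ∈ m.1, (a ∈ A ↔ b ∈ A) then 0
    else Finsupp.lsingle (permChain (Equiv.swap a b) m))

lemma pibarGen_single {F : Type*} [Field F] {n : ℕ} (a b : Fin n) (m : MChain n) (c : F) :
    pibarGen a b (Finsupp.single m c) =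
      if ∃ A ∈ m.1, b ∈ A ∧ a ∉ A then -Finsupp.single m c
      else if ∀ A ∈ m.1, (a ∈ A ↔ b ∈ A) then 0
      else Finsupp.single (permChain (Equiv.swap a b) m) c := by
  simp only [pibarGen, Finsupp.lsum_single]
  split_ifs <;> simp

lemma theta_single {F : Type*} [Field F] {n : ℕ} (r : ℕ) (m : MChain n) (c : F) :
    thetaMul r (Finsupp.single m c) =
      ∑ A ∈ Finset.univ.filter
          (fun A : Finset (Fin n) => A.card = r ∧ ∀ B ∈ m.1, A ⊆ B ∨ B ⊆ A),
        Finsupp.single (consChain A m) c := by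
  simp only [thetaMul, Finsupp.lsum_single]
  rw [LinearMap.sum_apply]
  rw [← Finset.sum_attach (Finset.univ.filter
      (fun A : Finset (Fin n) => A.card = r ∧ ∀ B ∈ m.1, A ⊆ B ∨ B ⊆ A))
      (fun A => Finsupp.single (consChain A m) c)]
  refine Finset.sum_congr rfl fun A _ => ?_
  show Finsupp.single _ c = _
  congr 1
  exact (MChain.ext (consChain_val (Finset.mem_filter.mp A.2).2.2)).symm

lemma pibarGen_theta {F : Type*} [Field F] {n : ℕ} (a b : Fin n) (r : ℕ)
    (m : MChain n) (c : F) :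
    pibarGen a b (thetaMul r (Finsupp.single m c)) =
      thetaMul r (pibarGen a b (Finsupp.single m c)) := by
  rw [theta_single, pibarGen_single, map_sum]
  by_cases hdesc : ∃ A ∈ m.1, b ∈ A ∧ a ∉ A
  · -- descent case: both sides are the negated sum
    rw [if_pos hdesc, map_neg, theta_single, ← Finset.sum_neg_distrib]
    refine Finset.sum_congr rfl fun A hA => ?_
    obtain ⟨-, -, hcomp⟩ := Finset.mem_filter.mp hA
    obtain ⟨B, hB, hbB, haB⟩ := hdesc
    rw [pibarGen_single, if_pos ⟨B, mem_consChain_of_mem hcomp hB, hbB, haB⟩]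
  rw [if_neg hdesc]
  by_cases heq : ∀ A ∈ m.1, (a ∈ A ↔ b ∈ A)
  · -- equal case: both sides vanish; LHS by a sign-reversing involution
    rw [if_pos heq, map_zero]
    refine Finset.sum_involution (fun A _ => A.image ⇑(Equiv.swap a b)) ?_ ?_ ?_ ?_
    · -- paired terms sum to zero
      intro A hA
      beta_reduce
      obtain ⟨-, hcard, hcomp⟩ := Finset.mem_filter.mp hA
      have hcomp' : Compat (A.image ⇑(Equiv.swap a b)) m := by
        have h := compat_image (Equiv.swap a b) hcomp
        rwa [permChain_eqc heq] at h
      have haiA : a ∈ A.image ⇑(Equiv.swap a b) ↔ b ∈ A := by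
        rw [mem_swap_image, Equiv.swap_apply_left]
      have hbiA : b ∈ A.image ⇑(Equiv.swap a b) ↔ a ∈ A := by
        rw [mem_swap_image, Equiv.swap_apply_right]
      by_cases hiff : a ∈ A ↔ b ∈ A
      · -- fixed point with a vanishing term
        have hnd : ¬ ∃ X ∈ (consChain A m).1, b ∈ X ∧ a ∉ X := by
          rintro ⟨X, hX, hbX, haX⟩
          rcases mem_consChain hcomp hX with rfl | hX'
          · exact haX (hiff.mpr hbX)
          · exact haX ((heq X hX').mpr hbX)
        have he : ∀ X ∈ (consChain A m).1, (a ∈ X ↔ b ∈ X) := by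
          intro X hX
          rcases mem_consChain hcomp hX with rfl | hX'
          · exact hiff
          · exact heq X hX'
        rw [swap_image_eq hiff, pibarGen_single, if_neg hnd, if_pos he, add_zero]
      · rcases Classical.em (a ∈ A) with haA | haA
        · -- A is (a∈, b∉)-type; its image is (b∈, a∉)-type
          have hbA : b ∉ A := fun h => hiff (iff_of_true haA h)
          have hnd : ¬ ∃ X ∈ (consChain A m).1, b ∈ X ∧ a ∉ X := by
            rintro ⟨X, hX, hbX, haX⟩
            rcases mem_consChain hcomp hX with rfl | hX'
            · exact hbA hbX
            · exact hdesc ⟨X, hX', hbX, haX⟩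
          have hne : ¬ ∀ X ∈ (consChain A m).1, (a ∈ X ↔ b ∈ X) := by
            intro hall
            exact hbA ((hall A (self_mem_consChain hcomp)).mp haA)
          have hd' : ∃ X ∈ (consChain (A.image ⇑(Equiv.swap a b)) m).1, b ∈ X ∧ a ∉ X :=
            ⟨A.image ⇑(Equiv.swap a b), self_mem_consChain hcomp',
              hbiA.mpr haA, fun h => hbA (haiA.mp h)⟩
          rw [pibarGen_single, if_neg hnd, if_neg hne, pibarGen_single, if_pos hd',
            permChain_cons (Equiv.swap a b) hcomp, permChain_eqc heq]
          abel
        · -- A is (b∈, a∉)-type (b ∈ A since ¬hiff); its image is (a∈, b∉)-type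
          have hbA : b ∈ A := by
            rcases Classical.em (b ∈ A) with h | h
            · exact h
            · exact absurd (iff_of_false haA h) hiff
          have hd : ∃ X ∈ (consChain A m).1, b ∈ X ∧ a ∉ X :=
            ⟨A, self_mem_consChain hcomp, hbA, haA⟩
          have hnd' : ¬ ∃ X ∈ (consChain (A.image ⇑(Equiv.swap a b)) m).1, b ∈ X ∧ a ∉ X := by
            rintro ⟨X, hX, hbX, haX⟩
            rcases mem_consChain hcomp' hX with rfl | hX'
            · exact haA (hbiA.mp hbX)
            · exact hdesc ⟨X, hX', hbX, haX⟩
          have hne' : ¬ ∀ X ∈ (consChain (A.image ⇑(Equiv.swap a b)) m).1, (a ∈ X ↔ b ∈ X) := by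
            intro hall
            exact haA (hbiA.mp ((hall (A.image ⇑(Equiv.swap a b))
              (self_mem_consChain hcomp')).mp (haiA.mpr hbA)))
          have hkey : permChain (Equiv.swap a b) (consChain (A.image ⇑(Equiv.swap a b)) m) = consChain A m := by
            rw [permChain_cons (Equiv.swap a b) hcomp', swap_image_image, permChain_eqc heq]
          rw [pibarGen_single, if_pos hd, pibarGen_single, if_neg hnd', if_neg hne',
            hkey]
          abel
    · -- nonzero terms are not fixed
      intro A hA hne hfix
      replace hfix : Finset.image ⇑(Equiv.swap a b) A = A := hfix
      apply hne
      obtain ⟨-, -, hcomp⟩ := Finset.mem_filter.mp hA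
      have hiff : a ∈ A ↔ b ∈ A := by
        constructor
        · intro h
          have hb : b ∈ A.image ⇑(Equiv.swap a b) := by
            rw [mem_swap_image, Equiv.swap_apply_right]; exact h
          rwa [hfix] at hb
        · intro h
          have ha' : a ∈ A.image ⇑(Equiv.swap a b) := by
            rw [mem_swap_image, Equiv.swap_apply_left]; exact h
          rwa [hfix] at ha'
      have hnd : ¬ ∃ X ∈ (consChain A m).1, b ∈ X ∧ a ∉ X := by
        rintro ⟨X, hX, hbX, haX⟩
        rcases mem_consChain hcomp hX with rfl | hX'
        · exact haX (hiff.mpr hbX)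
        · exact haX ((heq X hX').mpr hbX)
      have he : ∀ X ∈ (consChain A m).1, (a ∈ X ↔ b ∈ X) := by
        intro X hX
        rcases mem_consChain hcomp hX with rfl | hX'
        · exact hiff
        · exact heq X hX'
      rw [pibarGen_single, if_neg hnd, if_pos he]
    · -- the involution maps the index set to itself
      intro A hA
      obtain ⟨-, hcard, hcomp⟩ := Finset.mem_filter.mp hA
      refine Finset.mem_filter.mpr ⟨Finset.mem_univ _, ?_, ?_⟩
      · rw [Finset.card_image_of_injective _ (Equiv.injective _)]; exact hcard
      · have h := compat_image (Equiv.swap a b) hcomp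
        rwa [permChain_eqc heq] at h
    · intro A _
      exact swap_image_image A
  · -- ascent case: the sums match via the bijection A ↦ s·A
    rw [if_neg heq, theta_single]
    obtain ⟨B, hBprop⟩ := not_forall.mp heq
    have hB : B ∈ m.1 ∧ ¬(a ∈ B ↔ b ∈ B) := by tauto
    have haB : a ∈ B ∧ b ∉ B := by
      rcases Classical.em (a ∈ B) with h | h
      · exact ⟨h, fun hb => hB.2 (iff_of_true h hb)⟩
      · rcases Classical.em (b ∈ B) with h' | h'
        · exact absurd ⟨B, hB.1, h', h⟩ hdesc
        · exact absurd (iff_of_false h h') hB.2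
    refine Finset.sum_nbij' (fun A => A.image ⇑(Equiv.swap a b)) (fun A => A.image ⇑(Equiv.swap a b))
      ?_ ?_ ?_ ?_ ?_
    · intro A hA
      obtain ⟨-, hcard, hcomp⟩ := Finset.mem_filter.mp hA
      exact Finset.mem_filter.mpr ⟨Finset.mem_univ _,
        by rw [Finset.card_image_of_injective _ (Equiv.injective _)]; exact hcard,
        compat_image (Equiv.swap a b) hcomp⟩
    · intro A hA
      obtain ⟨-, hcard, hcomp⟩ := Finset.mem_filter.mp hA
      refine Finset.mem_filter.mpr ⟨Finset.mem_univ _,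
        by rw [Finset.card_image_of_injective _ (Equiv.injective _)]; exact hcard, ?_⟩
      have h := compat_image (Equiv.swap a b) hcomp
      rwa [permChain_swap_swap] at h
    · intro A _; exact swap_image_image A
    · intro A _; exact swap_image_image A
    · intro A hA
      obtain ⟨-, hcard, hcomp⟩ := Finset.mem_filter.mp hA
      have hnotba : ¬(b ∈ A ∧ a ∉ A) := by
        rintro ⟨hbA, haA⟩
        rcases hcomp B hB.1 with h | h
        · exact haB.2 (h hbA)
        · exact haA (h haB.1)
      have hnd : ¬ ∃ X ∈ (consChain A m).1, b ∈ X ∧ a ∉ X := by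
        rintro ⟨X, hX, hbX, haX⟩
        rcases mem_consChain hcomp hX with rfl | hX'
        · exact hnotba ⟨hbX, haX⟩
        · exact hdesc ⟨X, hX', hbX, haX⟩
      have hne : ¬ ∀ X ∈ (consChain A m).1, (a ∈ X ↔ b ∈ X) := by
        intro hall
        exact haB.2 ((hall B (mem_consChain_of_mem hcomp hB.1)).mp haB.1)
      rw [pibarGen_single, if_neg hnd, if_neg hne, permChain_cons (Equiv.swap a b) hcomp]

/-- The 0-Hecke action on the Stanley-Reisner ring `F[Bₙ]` is `Θ`-linear:
`π̄ᵢ(θᵣ · f) = θᵣ · π̄ᵢ(f)` for all `i ∈ [n-1]`, `r ∈ {0,1,…,n}`, and `f ∈ F[Bₙ]`. -/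
theorem stmt_6 {F : Type*} [Field F] (n : ℕ) :
    ∀ (i : ℕ) (hi : i + 1 < n) (r : ℕ), r ≤ n → ∀ f : MChain n →₀ F,
      pibarOp i hi (thetaMul r f) = thetaMul r (pibarOp i hi f) := by
  intro i hi r _ f
  induction f using Finsupp.induction_linear with
  | zero => simp
  | add f g hf hg => simp [map_add, hf, hg]
  | single m c =>
    exact pibarGen_theta (⟨i, Nat.lt_of_succ_lt hi⟩ : Fin n) ⟨i + 1, hi⟩ r m c
end

section
/- The map M ↦ (α(M), σ(M)) is a bijection between multichains of length k in the Boolean algebra Bₙ and pairs (α, σ) where α is a weak composition of n with length k+1 and σ ∈ Sₙ has descent set contained in D(α). -/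
/-- The partial sum `α₁ + ⋯ + α_j` of a weak composition `α` of length `k+1`. -/
def psum {k : ℕ} (a : Fin (k + 1) → ℕ) (j : ℕ) : ℕ :=
  ∑ l ∈ Finset.univ.filter (fun l : Fin (k + 1) => (l : ℕ) < j), a l

/-- The descent set `D(w) = {i ∈ [n-1] : w(i) > w(i+1)}` of a permutation,
with 1-based positions. -/
def DpermSet {n : ℕ} (w : Equiv.Perm (Fin n)) : Set ℕ :=
  {i | ∃ (j : ℕ) (h : j + 1 < n),
    i = j + 1 ∧ w ⟨j + 1, h⟩ < w ⟨j, Nat.lt_of_succ_lt h⟩}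

open Finset

namespace Stmt8

lemma psum_zero {k : ℕ} (a : Fin (k+1) → ℕ) : psum a 0 = 0 := by simp [psum]

lemma psum_succ {k : ℕ} (a : Fin (k+1) → ℕ) {m : ℕ} (h : m < k+1) :
    psum a (m+1) = psum a m + a ⟨m, h⟩ := by
  unfold psum
  have he : (univ.filter fun l : Fin (k+1) => (l:ℕ) < m+1)
      = insert ⟨m, h⟩ (univ.filter fun l : Fin (k+1) => (l:ℕ) < m) := by
    ext l
    simp [Fin.ext_iff]
    omega
  rw [he, Finset.sum_insert (by simp)]
  omega

lemma psum_mono {k : ℕ} (a : Fin (k+1) → ℕ) : Monotone (psum a) := by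
  intro m m' h
  apply Finset.sum_le_sum_of_subset
  intro l hl
  simp at hl ⊢
  omega

lemma psum_total {k : ℕ} (a : Fin (k+1) → ℕ) : psum a (k+1) = ∑ j, a j := by
  unfold psum
  rw [Finset.filter_true_of_mem]
  intro l _
  exact l.isLt

lemma psum_le {k : ℕ} (a : Fin (k+1) → ℕ) (m : ℕ) : psum a m ≤ ∑ j, a j :=
  Finset.sum_le_sum_of_subset (Finset.filter_subset _ _)

lemma card_filter_lt {N m : ℕ} (h : m ≤ N) :
    (univ.filter fun x : Fin N => (x:ℕ) < m).card = m := by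
  have himg : Finset.image Fin.val (univ.filter fun x : Fin N => (x:ℕ) < m)
      = Finset.range m := by
    ext y
    simp only [Finset.mem_image, Finset.mem_filter, Finset.mem_univ, true_and,
      Finset.mem_range]
    constructor
    · rintro ⟨x, hx, rfl⟩; exact hx
    · intro hy; exact ⟨⟨y, lt_of_lt_of_le hy h⟩, hy, rfl⟩
  rw [← Finset.card_image_of_injective _ Fin.val_injective, himg, Finset.card_range]

lemma mem_iff_lt_card {N : ℕ} {S : Finset (Fin N)}
    (hd : ∀ ⦃i j : Fin N⦄, i ≤ j → j ∈ S → i ∈ S) (j : Fin N) :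
    j ∈ S ↔ (j : ℕ) < S.card := by
  constructor
  · intro hj
    have hsub : Finset.Iic j ⊆ S := fun i hi => hd (Finset.mem_Iic.mp hi) hj
    have hc := Finset.card_le_card hsub
    rw [Fin.card_Iic] at hc
    omega
  · intro h
    by_contra hj
    have hsub : S ⊆ Finset.Iio j := by
      intro i hi
      rw [Finset.mem_Iio]
      by_contra hij
      exact hj (hd (le_of_not_gt hij) hi)
    have hc := Finset.card_le_card hsub
    rw [Fin.card_Iio] at hc
    omega

lemma mono_step {N : ℕ} {α : Type*} [Preorder α] {f : Fin N → α}
    (h : ∀ (j : ℕ) (hj : j+1 < N), f ⟨j, Nat.lt_of_succ_lt hj⟩ ≤ f ⟨j+1, hj⟩) :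
    Monotone f := by
  cases N with
  | zero => intro i; exact absurd i.isLt (by omega)
  | succ m =>
    rw [Fin.monotone_iff_le_succ]
    intro i
    have := h i.val (Nat.succ_lt_succ i.isLt)
    convert this using 2 <;> simp [Fin.ext_iff]

/-- block index of a position -/
def bfun {k : ℕ} (a : Fin (k+1) → ℕ) (i : ℕ) : ℕ :=
  (univ.filter fun j : Fin k => psum a ((j:ℕ)+1) ≤ i).card

lemma bfun_mono {k : ℕ} (a : Fin (k+1) → ℕ) : Monotone (bfun a) := by
  intro m m' h
  apply Finset.card_le_card
  intro j hj
  simp at hj ⊢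
  omega

lemma key {n k : ℕ} {a : Fin (k+1) → ℕ} {σ : Equiv.Perm (Fin n)}
    (hd : DpermSet σ ⊆ {s | ∃ j < k, s = psum a (j + 1)}) :
    Monotone (fun i : Fin n => toLex (bfun a (i:ℕ), σ i)) := by
  apply mono_step
  intro j hj
  rcases lt_or_eq_of_le (bfun_mono a (show j ≤ j + 1 by omega)) with hlt | heq
  · exact le_of_lt (Prod.Lex.lt_iff.mpr (Or.inl hlt))
  · rcases lt_trichotomy (σ ⟨j, Nat.lt_of_succ_lt hj⟩) (σ ⟨j+1, hj⟩) with h1 | h1 | h1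
    · exact le_of_lt (Prod.Lex.lt_iff.mpr (Or.inr ⟨heq, h1⟩))
    · exact le_of_eq (by rw [heq, h1])
    · exfalso
      have hmem : (j+1) ∈ DpermSet σ := ⟨j, hj, rfl, h1⟩
      obtain ⟨m, hm, hs⟩ := hd hmem
      have hstrict : bfun a j < bfun a (j+1) := by
        apply Finset.card_lt_card
        rw [Finset.ssubset_iff_of_subset]
        · exact ⟨⟨m, hm⟩, by simp [← hs], by simp [← hs]⟩
        · intro l hl
          simp at hl ⊢
          omega
      omega

lemma cval {n k : ℕ} (a : Fin (k+1) → ℕ) (σ : Equiv.Perm (Fin n)) (i : Fin n) :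
    (univ.filter fun j : Fin k =>
        σ i ∉ Finset.image σ (univ.filter fun x : Fin n => (x:ℕ) < psum a ((j:ℕ)+1))).card
      = bfun a (i:ℕ) := by
  unfold bfun
  congr 1
  apply Finset.filter_congr
  intro j _
  simp [Finset.mem_image, σ.injective.eq_iff, not_lt]

end Stmt8

/-- Multichains of length `k` in `Bₙ` biject with pairs `(α, σ)` of a weak composition
`α` of `n` with length `k+1` and a permutation `σ ∈ S^α` (i.e. `D(σ) ⊆ D(α)`): the pair
`(α, σ)` corresponds to the multichain `A_j = σ([α₁+⋯+α_j])`, the image under `σ` of the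
standard multichain of `α`. -/
theorem stmt_8 (n k : ℕ) :
    Set.BijOn
      (fun p : (Fin (k + 1) → ℕ) × Equiv.Perm (Fin n) =>
        fun j : Fin k =>
          Finset.image p.2
            (Finset.univ.filter fun x : Fin n => (x : ℕ) < psum p.1 ((j : ℕ) + 1)))
      {p | (∑ j, p.1 j) = n ∧
        DpermSet p.2 ⊆ {s | ∃ j < k, s = psum p.1 (j + 1)}}
      {M : Fin k → Finset (Fin n) | Monotone M} := by
  classical
  refine ⟨?_, ?_, ?_⟩
  · -- MapsTo
    rintro ⟨a, σ⟩ _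
    intro j j' hjj'
    apply Finset.image_subset_image
    intro x hx
    simp only [Finset.mem_filter, Finset.mem_univ, true_and] at hx ⊢
    exact lt_of_lt_of_le hx (Stmt8.psum_mono a (by
      have : (j : ℕ) ≤ (j' : ℕ) := hjj'
      omega))
  · -- InjOn
    rintro ⟨a, σ⟩ ⟨ha1, ha2⟩ ⟨b, τ⟩ ⟨hb1, hb2⟩ himg
    simp only at himg ha1 hb1 ha2 hb2
    -- partial sums agree
    have hps : ∀ m, m ≤ k + 1 → psum a m = psum b m := by
      intro m hm
      rcases Nat.eq_zero_or_pos m with rfl | hm0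
      · simp [Stmt8.psum_zero]
      rcases Nat.lt_or_ge m (k + 1) with hmk | hmk
      · have h1 := congrFun himg ⟨m - 1, by omega⟩
        have hc := congrArg Finset.card h1
        rw [Finset.card_image_of_injective _ σ.injective,
          Finset.card_image_of_injective _ τ.injective,
          Stmt8.card_filter_lt ((Stmt8.psum_le a _).trans ha1.le),
          Stmt8.card_filter_lt ((Stmt8.psum_le b _).trans hb1.le)] at hc
        simp only [Fin.val_mk] at hc
        rw [show m - 1 + 1 = m by omega] at hc
        exact hc
      · have hmeq : m = k + 1 := by omega
        subst hmeq
        rw [Stmt8.psum_total, Stmt8.psum_total, ha1, hb1]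
    have hab : a = b := by
      funext l
      have h1 := Stmt8.psum_succ a l.isLt
      have h2 := Stmt8.psum_succ b l.isLt
      simp only [Fin.eta] at h1 h2
      have e1 := hps l.val (by omega)
      have e2 := hps (l.val + 1) (by omega)
      omega
    subst hab
    -- permutations agree
    set g : Fin n → ℕ ×ₗ Fin n := fun x =>
      toLex ((Finset.univ.filter fun j : Fin k =>
        x ∉ Finset.image σ
          (Finset.univ.filter fun y : Fin n => (y : ℕ) < psum a ((j : ℕ) + 1))).card, x)
      with hg
    have hginj : Function.Injective g := fun x y hxy => congrArg (fun z => (ofLex z).2) hxy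
    have hgσ : Monotone (g ∘ σ) := by
      have he : (g ∘ σ) = fun i : Fin n => toLex (Stmt8.bfun a (i : ℕ), σ i) := by
        funext i
        simp only [Function.comp, hg]
        rw [Stmt8.cval a σ i]
      rw [he]
      exact Stmt8.key ha2
    have hgτ : Monotone (g ∘ τ) := by
      have he : (g ∘ τ) = fun i : Fin n => toLex (Stmt8.bfun a (i : ℕ), τ i) := by
        funext i
        simp only [Function.comp, hg]
        have hrw : ∀ j : Fin k,
            Finset.image σ (Finset.univ.filter fun y : Fin n => (y : ℕ) < psum a ((j : ℕ) + 1))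
              = Finset.image τ (Finset.univ.filter fun y : Fin n => (y : ℕ) < psum a ((j : ℕ) + 1)) :=
          fun j => congrFun himg j
        have : (Finset.univ.filter fun j : Fin k =>
              τ i ∉ Finset.image σ
                (Finset.univ.filter fun y : Fin n => (y : ℕ) < psum a ((j : ℕ) + 1)))
            = (Finset.univ.filter fun j : Fin k =>
              τ i ∉ Finset.image τ
                (Finset.univ.filter fun y : Fin n => (y : ℕ) < psum a ((j : ℕ) + 1))) := by
          apply Finset.filter_congr
          intro j _
          rw [hrw j]
        rw [this, Stmt8.cval a τ i]
      rw [he]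
      exact Stmt8.key hb2
    have huniq := Tuple.unique_monotone hgσ hgτ
    have hστ : σ = τ := Equiv.ext fun i => hginj (congrFun huniq i)
    simp [hστ]
  · -- SurjOn
    rintro M hM
    have hMmono : Monotone M := hM
    set c : Fin n → ℕ := fun x => (Finset.univ.filter fun j : Fin k => x ∉ M j).card with hc
    have hck : ∀ x, c x ≤ k := by
      intro x
      calc c x ≤ (Finset.univ : Finset (Fin k)).card := Finset.card_filter_le _ _
      _ = k := by simp
    have hmem : ∀ (x : Fin n) (j : Fin k), x ∈ M j ↔ c x ≤ (j : ℕ) := by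
      intro x j
      have hd : ∀ ⦃i j' : Fin k⦄, i ≤ j' →
          j' ∈ (Finset.univ.filter fun j => x ∉ M j) →
          i ∈ (Finset.univ.filter fun j => x ∉ M j) := by
        intro i j' hij' hj'
        simp only [Finset.mem_filter, Finset.mem_univ, true_and] at hj' ⊢
        intro hxi
        exact hj' (Finset.le_iff_subset.mp (hMmono hij') hxi)
      have hiff := Stmt8.mem_iff_lt_card hd j
      simp only [Finset.mem_filter, Finset.mem_univ, true_and] at hiff
      constructor
      · intro hx
        by_contra hcx
        push_neg at hcx
        exact (hiff.mpr hcx) hx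
      · intro hcx
        by_contra hx
        exact absurd (hiff.mp hx) (not_lt.mpr hcx)
    set a : Fin (k + 1) → ℕ := fun l =>
      (Finset.univ.filter fun x : Fin n => c x = (l : ℕ)).card with ha
    have hpsum : ∀ m, psum a m = (Finset.univ.filter fun x : Fin n => c x < m).card := by
      intro m
      rw [Finset.card_eq_sum_card_fiberwise
        (f := fun x : Fin n => (⟨c x, Nat.lt_succ_of_le (hck x)⟩ : Fin (k + 1)))
        (t := Finset.univ.filter fun l : Fin (k + 1) => (l : ℕ) < m)
        (by intro x hx; simp only [Finset.mem_coe, Finset.mem_filter, Finset.mem_univ, true_and] at hx ⊢; exact hx)]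
      unfold psum
      apply Finset.sum_congr rfl
      intro l hl
      simp only [Finset.mem_filter, Finset.mem_univ, true_and] at hl
      simp only [ha]
      congr 1
      ext x
      simp only [Finset.mem_filter, Finset.mem_univ, true_and, Fin.ext_iff, Fin.val_mk]
      omega
    have hsum : (∑ j, a j) = n := by
      have h1 := hpsum (k + 1)
      rw [Stmt8.psum_total] at h1
      rw [h1]
      rw [Finset.filter_true_of_mem (fun x _ => Nat.lt_succ_of_le (hck x))]
      simp
    set g : Fin n → ℕ ×ₗ Fin n := fun x => toLex (c x, x) with hg
    have hginj : Function.Injective g := fun x y hxy => congrArg (fun z => (ofLex z).2) hxy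
    set σ : Equiv.Perm (Fin n) := Tuple.sort g with hσ
    have hmono : Monotone (g ∘ σ) := Tuple.monotone_sort g
    have hcmono : Monotone (fun i : Fin n => c (σ i)) := by
      intro i i' h
      have hle := hmono h
      rcases Prod.Lex.le_iff.mp hle with h' | h'
      · exact le_of_lt h'
      · exact le_of_eq h'.1
    have hseg : ∀ j : ℕ,
        (Finset.univ.filter fun i : Fin n => c (σ i) ≤ j)
          = Finset.univ.filter fun i : Fin n =>
              (i : ℕ) < (Finset.univ.filter fun x : Fin n => c x ≤ j).card := by
      intro j
      have hd : ∀ ⦃i i' : Fin n⦄, i ≤ i' →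
          i' ∈ (Finset.univ.filter fun i : Fin n => c (σ i) ≤ j) →
          i ∈ (Finset.univ.filter fun i : Fin n => c (σ i) ≤ j) := by
        intro i i' hii' hi'
        simp only [Finset.mem_filter, Finset.mem_univ, true_and] at hi' ⊢
        exact le_trans (hcmono hii') hi'
      have hcard : (Finset.univ.filter fun i : Fin n => c (σ i) ≤ j).card
          = (Finset.univ.filter fun x : Fin n => c x ≤ j).card := by
        have himage : Finset.image σ (Finset.univ.filter fun i : Fin n => c (σ i) ≤ j)
            = Finset.univ.filter fun x : Fin n => c x ≤ j := by
          ext x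
          simp only [Finset.mem_image, Finset.mem_filter, Finset.mem_univ, true_and]
          constructor
          · rintro ⟨i, hi, rfl⟩; exact hi
          · intro hx
            refine ⟨σ.symm x, ?_, σ.apply_symm_apply x⟩
            rw [σ.apply_symm_apply]
            exact hx
        rw [← himage, Finset.card_image_of_injective _ σ.injective]
      ext i
      have hiff := Stmt8.mem_iff_lt_card hd i
      rw [hcard] at hiff
      simp only [Finset.mem_filter, Finset.mem_univ, true_and] at hiff ⊢
      exact hiff
    have himage : ∀ j : Fin k,
        Finset.image σ (Finset.univ.filter fun x : Fin n => (x : ℕ) < psum a ((j : ℕ) + 1))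
          = M j := by
      intro j
      have h1 : psum a ((j : ℕ) + 1)
          = (Finset.univ.filter fun x : Fin n => c x ≤ (j : ℕ)).card := by
        rw [hpsum]
        congr 1
        ext x
        simp [Nat.lt_succ_iff]
      rw [h1, ← hseg (j : ℕ)]
      ext x
      simp only [Finset.mem_image, Finset.mem_filter, Finset.mem_univ, true_and]
      constructor
      · rintro ⟨i, hi, rfl⟩
        exact (hmem _ j).mpr hi
      · intro hx
        refine ⟨σ.symm x, ?_, σ.apply_symm_apply x⟩
        rw [σ.apply_symm_apply]
        exact (hmem x j).mp hx
    have hdesc : DpermSet σ ⊆ {s | ∃ j < k, s = psum a (j + 1)} := by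
      rintro s ⟨j, hj, rfl, hlt⟩
      set i0 : Fin n := ⟨j, Nat.lt_of_succ_lt hj⟩ with hi0
      set i1 : Fin n := ⟨j + 1, hj⟩ with hi1
      have hle : (g ∘ σ) i0 ≤ (g ∘ σ) i1 := hmono (by simp [hi0, hi1])
      have hcc : c (σ i0) < c (σ i1) := by
        rcases Prod.Lex.le_iff.mp hle with h' | ⟨h1, h2⟩
        · exact h'
        · exact absurd h2 (not_le.mpr hlt)
      refine ⟨c (σ i0), lt_of_lt_of_le hcc (hck _), ?_⟩
      have hsg := hseg (c (σ i0))
      have hmem0 : i0 ∈ Finset.univ.filter fun i : Fin n => c (σ i) ≤ c (σ i0) := by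
        simp
      have hmem1 : i1 ∉ Finset.univ.filter fun i : Fin n => c (σ i) ≤ c (σ i0) := by
        simp only [Finset.mem_filter, Finset.mem_univ, true_and]
        exact not_le.mpr hcc
      rw [hsg] at hmem0 hmem1
      simp only [Finset.mem_filter, Finset.mem_univ, true_and] at hmem0 hmem1
      rw [hpsum]
      have heq : (Finset.univ.filter fun x : Fin n => c x < c (σ i0) + 1)
          = Finset.univ.filter fun x : Fin n => c x ≤ c (σ i0) := by
        ext x
        simp [Nat.lt_succ_iff]
      rw [heq]
      have e0 : ((⟨j, Nat.lt_of_succ_lt hj⟩ : Fin n) : ℕ) = j := rfl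
      have e1 : ((⟨j + 1, hj⟩ : Fin n) : ℕ) = j + 1 := rfl
      omega
    refine ⟨(a, σ), ⟨hsum, hdesc⟩, ?_⟩
    funext j
    exact himage j
end

section
/- In the algebra NSym of noncommutative symmetric functions, for any compositions α and β: s_α · s_β = s_{αβ} + s_{α▷β}, where αβ is concatenation and α▷β is near-concatenation obtained by merging the last part of α with the first part of β. -/
noncomputable section

/-- The generator `h_i` of `NSym = ℤ⟨h₁, h₂, …⟩`, modeled as the free associative
algebra over `ℤ` on generators indexed by `ℕ`. -/
def hgen (i : ℕ) : FreeAlgebra ℤ ℕ := FreeAlgebra.ι ℤ i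

/-- The complete homogeneous noncommutative symmetric function
`h_α = h_{α₁} ⋯ h_{α_ℓ}`, for a composition given as a list of parts. -/
def hprod (α : List ℕ) : FreeAlgebra ℤ ℕ := (α.map hgen).prod

/-- The coarsening `β ≼ α` of `α` determined by a composition `c` of `ℓ(α)`:
merge consecutive blocks of `α` according to `c` and sum them.  As `c` ranges over
compositions of `ℓ(α)`, this enumerates exactly the compositions `β` with
`D(β) ⊆ D(α)`. -/
def coarsen (α : List ℕ) (c : Composition α.length) : List ℕ :=
  (α.splitWrtComposition c).map List.sum

/-- The noncommutative ribbon Schur function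
`s_α = Σ_{β ≼ α} (-1)^{ℓ(α)-ℓ(β)} h_β`. -/
def ribbon (α : List ℕ) : FreeAlgebra ℤ ℕ :=
  ∑ c : Composition α.length,
    ((-1 : ℤ) ^ (α.length - c.length)) • hprod (coarsen α c)

/-- The near-concatenation `α ▷ β = (α₁,…,α_{ℓ-1}, α_ℓ + β₁, β₂,…,β_k)`. -/
def nearConcat (α β : List ℕ) : List ℕ :=
  α.dropLast ++ (α.getLast! + β.headI) :: β.tail

-- auxiliary

lemma blocks_ne_nil {n : ℕ} (c : Composition (n + 1)) : c.blocks ≠ [] := by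
  intro h
  have := c.blocks_sum
  rw [h] at this
  simp at this

lemma blocks_eq {n : ℕ} (c : Composition (n + 1)) :
    c.blocks = c.blocks.headI :: c.blocks.tail := by
  cases hb : c.blocks with
  | nil => exact absurd hb (blocks_ne_nil c)
  | cons a l => simp

lemma headI_blocks_pos {n : ℕ} (c : Composition (n + 1)) : 0 < c.blocks.headI := by
  apply c.blocks_pos
  rw [blocks_eq c]
  exact List.mem_cons_self

/-- prepend a block of size 1 -/
def prepend1 {n : ℕ} (c : Composition n) : Composition (n + 1) where
  blocks := 1 :: c.blocks
  blocks_pos := by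
    intro i hi
    rcases List.mem_cons.1 hi with h | h
    · omega
    · exact c.blocks_pos h
  blocks_sum := by simp [c.blocks_sum]; omega

/-- increment the first block -/
def incrFirst {n : ℕ} (c : Composition (n + 1)) : Composition (n + 2) where
  blocks := (c.blocks.headI + 1) :: c.blocks.tail
  blocks_pos := by
    intro i hi
    rcases List.mem_cons.1 hi with h | h
    · omega
    · exact c.blocks_pos (by rw [blocks_eq c]; exact List.mem_cons_of_mem _ h)
  blocks_sum := by
    have := c.blocks_sum
    rw [blocks_eq c] at this
    simp only [List.sum_cons] at this ⊢
    omega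

def compEquiv (n : ℕ) :
    (Composition (n + 1)) ⊕ (Composition (n + 1)) ≃ Composition (n + 2) where
  toFun x := Sum.elim prepend1 incrFirst x
  invFun c :=
    if h : c.blocks.headI = 1 then
      Sum.inl ⟨c.blocks.tail,
        fun hi => c.blocks_pos (by rw [blocks_eq c]; exact List.mem_cons_of_mem _ hi),
        by have := c.blocks_sum; rw [blocks_eq c] at this; simp only [List.sum_cons] at this; omega⟩
    else
      Sum.inr ⟨(c.blocks.headI - 1) :: c.blocks.tail,
        by
          intro i hi
          rcases List.mem_cons.1 hi with h' | h'
          · have := headI_blocks_pos c; omega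
          · exact c.blocks_pos (by rw [blocks_eq c]; exact List.mem_cons_of_mem _ h'),
        by
          have := c.blocks_sum
          rw [blocks_eq c] at this
          have hp := headI_blocks_pos c
          simp only [List.sum_cons] at this ⊢
          omega⟩
  left_inv x := by
    rcases x with c | c
    · simp [prepend1]
    · have hp := headI_blocks_pos c
      simp only [Sum.elim_inr, incrFirst, List.headI_cons, List.tail_cons]
      change (if h : c.blocks.headI + 1 = 1 then _ else _) = Sum.inr c
      rw [dif_neg (by omega)]
      congr 1
      apply Composition.ext
      simp only [List.headI_cons, List.tail_cons]
      rw [Nat.add_sub_cancel, ← blocks_eq c]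
  right_inv c := by
    dsimp only
    by_cases h : c.blocks.headI = 1
    · rw [dif_pos h]
      simp only [Sum.elim_inl]
      apply Composition.ext
      simp only [prepend1]
      conv_rhs => rw [blocks_eq c]
      rw [h]
    · rw [dif_neg h]
      simp only [Sum.elim_inr, incrFirst]
      apply Composition.ext
      have hp := headI_blocks_pos c
      simp only [List.headI_cons, List.tail_cons]
      conv_rhs => rw [blocks_eq c]
      congr 1
      omega

lemma hprod_cons (b : ℕ) (l : List ℕ) : hprod (b :: l) = hgen b * hprod l := by
  simp [hprod]

lemma length_prepend1 {n : ℕ} (c : Composition n) :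
    (prepend1 c).length = c.length + 1 := by
  simp [prepend1, Composition.length]

lemma length_incrFirst {n : ℕ} (c : Composition (n + 1)) :
    (incrFirst c).length = c.length := by
  simp only [incrFirst, Composition.length]
  conv_rhs => rw [blocks_eq c]
  simp

lemma coarsen_prepend1 (b h : ℕ) (t : List ℕ) (c : Composition (h :: t).length) :
    coarsen (b :: h :: t) (prepend1 c) = b :: coarsen (h :: t) c := by
  simp [coarsen, List.splitWrtComposition, prepend1, List.splitWrtCompositionAux_cons]

lemma coarsen_incrFirst (b h : ℕ) (t : List ℕ) (c : Composition (h :: t).length) :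
    coarsen (b :: h :: t) (incrFirst c) = coarsen ((b + h) :: t) c := by
  have hp := headI_blocks_pos c
  obtain ⟨a, ha⟩ : ∃ a, c.blocks.headI = a + 1 := ⟨c.blocks.headI - 1, by omega⟩
  simp only [coarsen, List.splitWrtComposition, incrFirst, ha]
  conv_rhs => rw [blocks_eq c, ha]
  rw [List.splitWrtCompositionAux_cons, List.splitWrtCompositionAux_cons]
  simp [List.take_succ_cons, List.drop_succ_cons, Nat.add_assoc]

lemma ribbon_cons (b h : ℕ) (t : List ℕ) :
    ribbon (b :: h :: t) = hgen b * ribbon (h :: t) - ribbon ((b + h) :: t) := by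
  have h1 : ribbon (b :: h :: t) =
      ∑ c : Composition (t.length + 2),
        ((-1:ℤ) ^ (t.length + 2 - c.length)) • hprod (coarsen (b :: h :: t) c) := rfl
  have key := (Equiv.sum_comp (compEquiv t.length)
      (fun c : Composition (t.length + 2) =>
        ((-1:ℤ) ^ (t.length + 2 - c.length)) • hprod (coarsen (b :: h :: t) c))).symm
  rw [h1, key, Fintype.sum_sum_type]
  have hA : (∑ c : Composition (t.length + 1),
      ((-1:ℤ) ^ (t.length + 2 - ((compEquiv t.length) (Sum.inl c)).length)) •
        hprod (coarsen (b :: h :: t) ((compEquiv t.length) (Sum.inl c))))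
      = hgen b * ribbon (h :: t) := by
    rw [ribbon, Finset.mul_sum]
    apply Finset.sum_congr rfl
    intro c _
    have hc : ((compEquiv t.length) (Sum.inl c)) = prepend1 c := rfl
    rw [hc, coarsen_prepend1, length_prepend1, hprod_cons, mul_smul_comm]
    have he : t.length + 2 - (c.length + 1) = t.length + 1 - c.length := by omega
    rw [he]
    rfl
  have hB : (∑ c : Composition (t.length + 1),
      ((-1:ℤ) ^ (t.length + 2 - ((compEquiv t.length) (Sum.inr c)).length)) •
        hprod (coarsen (b :: h :: t) ((compEquiv t.length) (Sum.inr c))))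
      = - ribbon ((b + h) :: t) := by
    rw [ribbon, ← Finset.sum_neg_distrib]
    apply Finset.sum_congr rfl
    intro c _
    have hc : ((compEquiv t.length) (Sum.inr c)) = incrFirst c := rfl
    rw [hc, coarsen_incrFirst, length_incrFirst, ← neg_smul]
    congr 1
    show ((-1:ℤ)) ^ (t.length + 2 - c.length) = -(-1) ^ (t.length + 1 - c.length)
    have he : t.length + 2 - c.length = (t.length + 1 - c.length) + 1 := by
      have := c.length_le; omega
    rw [he, pow_succ]
    ring
  rw [hA, hB, sub_eq_add_neg]

lemma comp_one_blocks (c : Composition 1) : c.blocks = [1] := by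
  have hs := c.blocks_sum
  have hb := blocks_eq (n := 0) c
  have hp := headI_blocks_pos (n := 0) c
  rw [hb] at hs
  simp only [List.sum_cons] at hs
  have h1 : c.blocks.headI = 1 := by omega
  have h2 : c.blocks.tail = [] := by
    by_contra hne
    obtain ⟨a, l, hal⟩ := List.exists_cons_of_ne_nil hne
    have := c.blocks_pos (by rw [hb, hal]; exact List.mem_cons_of_mem _ List.mem_cons_self)
    rw [hal] at hs
    simp only [List.sum_cons] at hs
    omega
  rw [hb, h1, h2]

lemma ribbon_single (n : ℕ) : ribbon [n] = hgen n := by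
  have huniq : ∀ c : Composition 1, c = ⟨[1], by simp, by simp⟩ := fun c =>
    Composition.ext (comp_one_blocks c)
  have : ribbon [n] = ∑ c : Composition 1,
      ((-1:ℤ) ^ (1 - c.length)) • hprod (coarsen [n] c) := rfl
  rw [this]
  rw [Finset.sum_eq_single_of_mem (⟨[1], by simp, by simp⟩ : Composition 1)
    (Finset.mem_univ _) (fun c _ hne => absurd (huniq c) hne)]
  have hc : coarsen [n] (⟨[1], by simp, by simp⟩ : Composition 1) = [n] := by
    simp [coarsen, List.splitWrtComposition, List.splitWrtCompositionAux]
  rw [hc]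
  simp [Composition.length, hprod]

lemma getLast!_concat' (l : List ℕ) (a : ℕ) : (l ++ [a]).getLast! = a :=
  List.getLast!_of_getLast? List.getLast?_concat

lemma getLast!_single (a : ℕ) : [a].getLast! = a := rfl

lemma nearConcat_cons_cons (x y : ℕ) (t β : List ℕ) :
    nearConcat (x :: y :: t) β = x :: nearConcat (y :: t) β := by
  simp only [nearConcat, List.getLast!_cons_eq_getLastD, List.getLastD_cons, List.dropLast_cons₂,
    List.cons_append]

lemma nearConcat_concat (α : List ℕ) (b : ℕ) (β : List ℕ) :
    nearConcat (α ++ [b]) β = α ++ (b + β.headI) :: β.tail := by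
  simp [nearConcat, getLast!_concat']

lemma ribbon_snoc_aux (k : ℕ) : ∀ (γ : List ℕ), γ.length ≤ k → γ ≠ [] → ∀ n : ℕ,
    ribbon (γ ++ [n]) = ribbon γ * hgen n - ribbon (nearConcat γ [n]) := by
  induction k with
  | zero =>
    intro γ hl hne
    rw [List.length_eq_zero_iff.mp (Nat.le_zero.mp hl)] at hne
    exact absurd rfl hne
  | succ k ih =>
    intro γ hl hne n
    obtain ⟨a, γ', rfl⟩ := List.exists_cons_of_ne_nil hne
    cases γ' with
    | nil =>
      have e2 : nearConcat [a] [n] = [a + n] := by simp [nearConcat, getLast!_single]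
      rw [show ([a] ++ [n] : List ℕ) = a :: n :: [] from rfl, ribbon_cons, e2]
      simp [ribbon_single]
    | cons g t =>
      have hlen : (g :: t).length ≤ k := by simp at hl ⊢; omega
      rw [show ((a :: g :: t) ++ [n] : List ℕ) = a :: g :: (t ++ [n]) from rfl]
      rw [ribbon_cons a g (t ++ [n])]
      rw [show (g : ℕ) :: (t ++ [n]) = (g :: t) ++ [n] from rfl]
      rw [show ((a + g) :: (t ++ [n]) : List ℕ) = ((a + g) :: t) ++ [n] from rfl]
      rw [ih (g :: t) hlen (by simp) n, ih ((a + g) :: t) (by simpa using hlen) (by simp) n]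
      rw [nearConcat_cons_cons a g t [n]]
      have key : hgen a * ribbon (nearConcat (g :: t) [n]) -
          ribbon (nearConcat ((a + g) :: t) [n]) = ribbon (a :: nearConcat (g :: t) [n]) := by
        cases t with
        | nil =>
          have e1 : nearConcat [g] [n] = [g + n] := by simp [nearConcat, getLast!_single]
          have e2 : nearConcat [a + g] [n] = [a + g + n] := by simp [nearConcat, getLast!_single]
          rw [e1, e2, show ((a : ℕ) :: [g + n]) = a :: (g + n) :: [] from rfl,
            ribbon_cons a (g + n) [], ← Nat.add_assoc a g n]
        | cons u s =>
          rw [nearConcat_cons_cons g u s [n], nearConcat_cons_cons (a + g) u s [n]]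
          have h2 : nearConcat (u :: s) [n] ≠ [] := by simp [nearConcat]
          obtain ⟨w, ws, hw⟩ := List.exists_cons_of_ne_nil h2
          rw [hw, ribbon_cons a g (w :: ws)]
      rw [← key, ribbon_cons a g t]
      noncomm_ring

lemma ribbon_snoc (γ : List ℕ) (hne : γ ≠ []) (n : ℕ) :
    ribbon (γ ++ [n]) = ribbon γ * hgen n - ribbon (nearConcat γ [n]) :=
  ribbon_snoc_aux γ.length γ le_rfl hne n

lemma nearConcat_single_append (α : List ℕ) (b : ℕ) (δ : List ℕ) :
    nearConcat α [b] ++ δ = α.dropLast ++ (α.getLast! + b) :: δ := by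
  simp [nearConcat]

lemma main_aux (k : ℕ) : ∀ (β α : List ℕ), β.length ≤ k → α ≠ [] → β ≠ [] →
    ribbon α * ribbon β = ribbon (α ++ β) + ribbon (nearConcat α β) := by
  induction k with
  | zero =>
    intro β α hl hα hβ
    rw [List.length_eq_zero_iff.mp (Nat.le_zero.mp hl)] at hβ
    exact absurd rfl hβ
  | succ k ih =>
    intro β α hl hα hβ
    obtain ⟨b, β', rfl⟩ := List.exists_cons_of_ne_nil hβ
    cases β' with
    | nil =>
      rw [ribbon_single b, ribbon_snoc α hα b]
      abel
    | cons g t =>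
      have hlen : (g :: t).length ≤ k := by simp at hl ⊢; omega
      rw [ribbon_cons b g t, mul_sub, ← mul_assoc]
      have h1 : ribbon α * hgen b = ribbon (α ++ [b]) + ribbon (nearConcat α [b]) := by
        rw [ribbon_snoc α hα b]; abel
      rw [h1, add_mul]
      rw [ih (g :: t) (α ++ [b]) hlen (by simp) (by simp)]
      rw [ih (g :: t) (nearConcat α [b]) hlen (by simp [nearConcat]) (by simp)]
      rw [ih ((b + g) :: t) α (by simpa using hlen) hα (by simp)]
      -- list identities
      have l1 : (α ++ [b]) ++ (g :: t) = α ++ (b :: g :: t) := by simp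
      have l2 : nearConcat (α ++ [b]) (g :: t) = α ++ ((b + g) :: t) := by
        rw [nearConcat_concat]; rfl
      have l3 : nearConcat α [b] ++ (g :: t) = nearConcat α (b :: g :: t) := by
        rw [nearConcat_single_append]; rfl
      have l4 : nearConcat (nearConcat α [b]) (g :: t) = nearConcat α ((b + g) :: t) := by
        simp only [nearConcat, List.headI_cons, List.tail_cons, List.dropLast_concat,
          getLast!_concat', Nat.add_assoc]
      rw [l1, l2, l3, l4]
      abel


/-- In `NSym`, the noncommutative ribbon Schur functions satisfy
`s_α · s_β = s_{αβ} + s_{α▷β}`. -/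
theorem stmt_11 (α β : List ℕ) (hα : ∀ x ∈ α, 0 < x) (hβ : ∀ x ∈ β, 0 < x)
    (hα0 : α ≠ []) (hβ0 : β ≠ []) :
    ribbon α * ribbon β = ribbon (α ++ β) + ribbon (nearConcat α β) :=
  main_aux β.length β α le_rfl hα0 hβ0
end
end

section
/- The functions H_α(x; 0,...,0) = s_α and H_α(x; 1,...,1) = h_α, and the set {H_α : α a composition of n} is a basis of the n-th homogeneous component NSymₙ[t₁,...,t_{n-1}] (it is triangularly related to the ribbon basis {s_α} with respect to the refinement order). -/
noncomputable section
open scoped Classical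

/-- Coefficient ring `ℚ[t₁, t₂, …]` (with `tᵢ = X i`). -/
abbrev Rng : Type := MvPolynomial ℕ ℚ

/-- The descent set `D(α)` of a composition `α` of `n`. -/
def Dset {n : ℕ} (α : Composition n) : Finset ℕ :=
  Finset.image α.sizeUpTo (Finset.Ioo 0 α.length)

/-- The multivariate noncommutative Hall-Littlewood function
`H_α = Σ_{β ≼ α} t^{D(α)∖D(β)} s_β`, in coordinates with respect to the ribbon basis
`{s_β}` of `NSymₙ`. -/
def HL {n : ℕ} (α : Composition n) : Composition n →₀ Rng :=
  ∑ β ∈ Finset.univ.filter (fun β : Composition n => Dset β ⊆ Dset α),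
    Finsupp.single β (∏ i ∈ Dset α \ Dset β, MvPolynomial.X i)

lemma HL_apply {n : ℕ} (α β : Composition n) :
    HL α β = if Dset β ⊆ Dset α then ∏ i ∈ Dset α \ Dset β, MvPolynomial.X i else 0 := by
  classical
  rw [HL, Finsupp.finset_sum_apply]
  simp [Finsupp.single_apply, Finset.sum_ite_eq]

lemma Dset_subset_Ioo {n : ℕ} (α : Composition n) : Dset α ⊆ Finset.Ioo 0 n := by
  intro x hx
  simp only [Dset, Finset.mem_image, Finset.mem_Ioo] at hx ⊢
  obtain ⟨i, ⟨hi0, hil⟩, rfl⟩ := hx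
  constructor
  · calc 0 = α.sizeUpTo 0 := (α.sizeUpTo_zero).symm
      _ < α.sizeUpTo 1 := α.sizeUpTo_strict_mono (lt_of_le_of_lt (Nat.zero_le _) hil)
      _ ≤ α.sizeUpTo i := α.monotone_sizeUpTo hi0
  · calc α.sizeUpTo i < α.sizeUpTo (i+1) := α.sizeUpTo_strict_mono hil
      _ ≤ α.sizeUpTo α.length := α.monotone_sizeUpTo hil
      _ = n := α.sizeUpTo_length

lemma image_boundaries {n : ℕ} (α : Composition n) :
    (Composition.boundaries α).image Fin.val = insert 0 (insert n (Dset α)) := by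
  classical
  ext x
  simp only [Composition.boundaries, Finset.mem_image, Finset.mem_map, Finset.mem_univ,
    true_and, Finset.mem_insert, Dset, Finset.mem_Ioo]
  constructor
  · rintro ⟨y, ⟨i, rfl⟩, rfl⟩
    have hcoe : ((α.boundary.toEmbedding i : Fin (n+1)) : ℕ) = α.sizeUpTo i := rfl
    rw [hcoe]
    rcases Nat.eq_zero_or_pos i.val with h0 | h0
    · left; rw [h0]; exact α.sizeUpTo_zero
    rcases eq_or_lt_of_le (Nat.lt_succ_iff.mp i.isLt) with hl | hl
    · right; left; rw [hl]; exact α.sizeUpTo_length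
    · right; right; exact ⟨i, ⟨h0, hl⟩, rfl⟩
  · rintro (rfl | rfl | ⟨i, ⟨hi0, hil⟩, rfl⟩)
    · exact ⟨α.boundary 0, ⟨0, rfl⟩, by simp⟩
    · exact ⟨α.boundary (Fin.last _), ⟨Fin.last _, rfl⟩, by simp⟩
    · exact ⟨α.boundary ⟨i, Nat.lt_succ_of_lt hil⟩, ⟨_, rfl⟩, rfl⟩

lemma Dset_injective {n : ℕ} : Function.Injective (Dset (n := n)) := by
  intro α β h
  have hb : α.boundaries = β.boundaries := by
    apply Finset.image_injective (Fin.val_injective)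
    rw [image_boundaries, image_boundaries, h]
  have : α.toCompositionAsSet = β.toCompositionAsSet := by
    ext1
    simpa using hb
  exact (compositionEquiv n).injective this

/-- Setting all `tᵢ = 0` gives `H_α = s_α`, setting all `tᵢ = 1` gives
`H_α = h_α = Σ_{β ≼ α} s_β`, and `{H_α : α ⊨ n}` is a basis of the `n`-th homogeneous
component `NSymₙ[t₁,…,t_{n-1}]` as a module over the polynomial coefficient ring. -/
theorem stmt_13 (n : ℕ) :
    (∀ α β : Composition n,
      MvPolynomial.eval (fun _ => (0 : ℚ)) (HL α β) = if β = α then 1 else 0) ∧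
    (∀ α β : Composition n,
      MvPolynomial.eval (fun _ => (1 : ℚ)) (HL α β) =
        if Dset β ⊆ Dset α then 1 else 0) ∧
    LinearIndependent Rng (HL (n := n)) ∧
    Submodule.span Rng (Set.range (HL (n := n))) = ⊤ := by
  classical
  refine ⟨?_, ?_, ?_, ?_⟩
  · intro α β
    rw [HL_apply]
    by_cases hsub : Dset β ⊆ Dset α
    · rw [if_pos hsub]
      by_cases hba : β = α
      · subst hba
        simp [if_pos rfl]
      · rw [if_neg hba]
        have hne : (Dset α \ Dset β).Nonempty := by
          rw [Finset.sdiff_nonempty]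
          intro hle
          exact hba (Dset_injective (le_antisymm hsub hle))
        obtain ⟨i, hi⟩ := hne
        rw [map_prod]
        exact Finset.prod_eq_zero hi (by simp)
    · have hne : β ≠ α := fun h => hsub (by rw [h])
      rw [if_neg hsub, if_neg hne]
      simp
  · intro α β
    rw [HL_apply]
    by_cases hsub : Dset β ⊆ Dset α
    · rw [if_pos hsub, if_pos hsub, map_prod]
      simp
    · rw [if_neg hsub, if_neg hsub]; simp
  · rw [linearIndependent_iff]
    intro l hl
    have coord : ∀ β : Composition n,
        (∑ γ ∈ l.support, l γ * HL γ β) = 0 := by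
      intro β
      have := congrArg (fun f : Composition n →₀ Rng => f β) hl
      simpa [Finsupp.linearCombination_apply, Finsupp.sum, Finsupp.finset_sum_apply] using this
    have key : ∀ k : ℕ, ∀ α : Composition n, n - (Dset α).card < k → l α = 0 := by
      intro k
      induction k with
      | zero => intro α hα; omega
      | succ k ih =>
        intro α hα
        by_cases hαs : α ∈ l.support
        · have hsum := coord α
          rw [Finset.sum_eq_single_of_mem α hαs] at hsum
          · rw [HL_apply, if_pos (subset_refl _)] at hsum
            simpa using hsum
          · intro γ hγ hne
            rw [HL_apply]
            by_cases hsub : Dset α ⊆ Dset γ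
            · have hssub : Dset α ⊂ Dset γ :=
                lt_of_le_of_ne hsub (fun h => hne (Dset_injective h.symm))
              have hc1 : (Dset α).card < (Dset γ).card := Finset.card_lt_card hssub
              have hc2 : (Dset γ).card ≤ n - 1 := by
                have := Finset.card_le_card (Dset_subset_Ioo γ)
                simpa [Nat.card_Ioo] using this
              have : l γ = 0 := ih γ (by omega)
              rw [this, zero_mul]
            · rw [if_neg hsub, mul_zero]
        · exact Finsupp.notMem_support_iff.mp hαs
    exact Finsupp.ext fun α => key (n - (Dset α).card + 1) α (Nat.lt_succ_self _)
  · have key : ∀ k : ℕ, ∀ α : Composition n, (Dset α).card < k →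
        Finsupp.single α (1 : Rng) ∈ Submodule.span Rng (Set.range (HL (n := n))) := by
      intro k
      induction k with
      | zero => intro α hα; omega
      | succ k ih =>
        intro α hα
        have hmem : α ∈ Finset.univ.filter (fun β : Composition n => Dset β ⊆ Dset α) := by
          simp
        have hsplit : HL α = Finsupp.single α (1 : Rng) +
            ∑ β ∈ (Finset.univ.filter
              (fun β : Composition n => Dset β ⊆ Dset α)).erase α,
              Finsupp.single β (∏ i ∈ Dset α \ Dset β, MvPolynomial.X i) := by
          rw [HL, ← Finset.add_sum_erase _ _ hmem]
          simp
        have h1 : Finsupp.single α (1 : Rng) = HL α -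
            ∑ β ∈ (Finset.univ.filter
              (fun β : Composition n => Dset β ⊆ Dset α)).erase α,
              Finsupp.single β (∏ i ∈ Dset α \ Dset β, MvPolynomial.X i) := by
          rw [hsplit]; abel
        rw [h1]
        apply Submodule.sub_mem
        · exact Submodule.subset_span ⟨α, rfl⟩
        · apply Submodule.sum_mem
          intro β hβ
          obtain ⟨hne, hβ'⟩ := Finset.mem_erase.mp hβ
          have hsub : Dset β ⊆ Dset α := (Finset.mem_filter.mp hβ').2
          have hssub : Dset β ⊂ Dset α :=
            lt_of_le_of_ne hsub (fun h => hne (Dset_injective h))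
          have hc : (Dset β).card < (Dset α).card := Finset.card_lt_card hssub
          have : (Finsupp.single β (∏ i ∈ Dset α \ Dset β, MvPolynomial.X i) : Composition n →₀ Rng)
              = ((∏ i ∈ Dset α \ Dset β, MvPolynomial.X i : Rng) • Finsupp.single β (1 : Rng) : Composition n →₀ Rng) := by
            rw [Finsupp.smul_single', mul_one]
          rw [this]
          exact Submodule.smul_mem _ _ (ih β (by omega))
    rw [eq_top_iff]
    intro f _
    rw [← Finsupp.sum_single f]
    rw [Finsupp.sum]
    apply Submodule.sum_mem
    intro α _
    have : (Finsupp.single α (f α) : Composition n →₀ Rng) = ((f α : Rng) • Finsupp.single α (1 : Rng) : Composition n →₀ Rng) := by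
      rw [Finsupp.smul_single', mul_one]
    rw [this]
    exact Submodule.smul_mem _ _ (key ((Dset α).card + 1) α (Nat.lt_succ_self _))
end
end

section
/- The MacMahon–Carlitz identity: Σ_{w∈Sₙ} q^{maj(w)} u^{des(w)} / ∏_{i=0}^{n} (1 - q^i u) = Σ_{k≥0} ([k+1]_q)ⁿ u^k, as an identity of formal power series in u and q. -/
noncomputable section
open scoped Classical

/-- The descent set `D(w) = {i ∈ [n-1] : w(i) > w(i+1)}` of a permutation,
with 1-based positions. -/
def DpermF {n : ℕ} (w : Equiv.Perm (Fin n)) : Finset ℕ :=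
  Finset.image (fun j : Fin n => (j : ℕ) + 1)
    (Finset.univ.filter (fun j : Fin n =>
      ∃ h : (j : ℕ) + 1 < n, w ⟨(j : ℕ) + 1, h⟩ < w j))

namespace MC15

open Finset PowerSeries

lemma coeff_monomial_mul' {R : Type*} [CommSemiring R] (d m : ℕ) (a : R) (f : PowerSeries R) :
    (PowerSeries.coeff m) ((PowerSeries.monomial d) a * f)
      = if d ≤ m then a * PowerSeries.coeff (m - d) f else 0 := by
  rw [PowerSeries.coeff_mul]
  have h1 : ∀ p ∈ Finset.HasAntidiagonal.antidiagonal m,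
      (PowerSeries.coeff p.1) ((PowerSeries.monomial d) a) * (PowerSeries.coeff p.2) f
        = if p.1 = d then a * (PowerSeries.coeff p.2) f else 0 := by
    intro p _
    rw [PowerSeries.coeff_monomial]
    split <;> simp
  rw [Finset.sum_congr rfl h1]
  by_cases h : d ≤ m
  · rw [if_pos h, Finset.sum_eq_single (d, m - d)]
    · simp
    · rintro ⟨p1, p2⟩ hp hne
      rw [Finset.HasAntidiagonal.mem_antidiagonal] at hp
      have : p1 ≠ d := by rintro rfl; exact hne (by simp; omega)
      simp [this]
    · intro hmem
      exact absurd (Finset.HasAntidiagonal.mem_antidiagonal.2 (by omega)) hmem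
  · rw [if_neg h, Finset.sum_eq_zero]
    rintro ⟨p1, p2⟩ hp
    rw [Finset.HasAntidiagonal.mem_antidiagonal] at hp
    have : p1 ≠ d := by omega
    simp [this]

lemma geom_inv (i : ℕ) :
    (1 - (PowerSeries.monomial (R := Polynomial ℚ) 1) ((Polynomial.X : Polynomial ℚ) ^ i)) *
      PowerSeries.mk (fun m => (Polynomial.X : Polynomial ℚ) ^ (i * m)) = 1 := by
  ext m
  rw [sub_mul, one_mul, map_sub, coeff_monomial_mul', PowerSeries.coeff_mk]
  rcases m with _ | m
  · simp
  · rw [if_pos (by omega)]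
    simp only [Nat.add_sub_cancel, PowerSeries.coeff_mk, PowerSeries.coeff_one]
    rw [if_neg (by omega), ← pow_add]
    rw [show i + i * m = i * (m + 1) by ring, sub_self]

lemma card_filter_val_lt {n i : ℕ} (hi : i ≤ n) :
    (Finset.filter (fun j : Fin n => (j : ℕ) < i) Finset.univ).card = i := by
  apply Finset.card_eq_of_bijective
    (fun m hm => (⟨m, lt_of_lt_of_le hm hi⟩ : Fin n))
  · intro a ha
    simp only [Finset.mem_filter] at ha
    exact ⟨(a : ℕ), ha.2, Fin.eta a _⟩
  · intro m hm
    simp [hm]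
  · intro a b _ _ h
    exact congrArg Fin.val h

lemma mem_DpermF {n : ℕ} {w : Equiv.Perm (Fin n)} {d : ℕ} :
    d ∈ DpermF w ↔ ∃ j : Fin n, d = (j : ℕ) + 1 ∧
      ∃ h : (j : ℕ) + 1 < n, w ⟨(j : ℕ) + 1, h⟩ < w j := by
  simp only [DpermF, Finset.mem_image, Finset.mem_filter, Finset.mem_univ, true_and]
  constructor
  · rintro ⟨j, hj, rfl⟩; exact ⟨j, rfl, hj⟩
  · rintro ⟨j, rfl, hj⟩; exact ⟨j, hj, rfl⟩

lemma DpermF_bounds {n : ℕ} {w : Equiv.Perm (Fin n)} {d : ℕ} (hd : d ∈ DpermF w) :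
    1 ≤ d ∧ d < n := by
  rw [mem_DpermF] at hd
  obtain ⟨j, rfl, hj, -⟩ := hd
  exact ⟨by omega, hj⟩

lemma mem_DpermF_iff {n : ℕ} (w : Equiv.Perm (Fin n)) (j : ℕ) (hj : j + 1 < n) :
    (j + 1 ∈ DpermF w) ↔ w ⟨j + 1, hj⟩ < w ⟨j, by omega⟩ := by
  rw [mem_DpermF]
  constructor
  · rintro ⟨j', hj', h', hlt⟩
    have : (j' : ℕ) = j := by omega
    subst this
    exact hlt
  · intro h
    exact ⟨⟨j, by omega⟩, rfl, hj, h⟩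

variable {n : ℕ}

/-- `stair w j = #{d ∈ D(w) : d > j}`. -/
def stair (w : Equiv.Perm (Fin n)) (j : ℕ) : ℕ :=
  ((DpermF w).filter (fun d => j < d)).card

lemma stair_zero (w : Equiv.Perm (Fin n)) : stair w 0 = (DpermF w).card := by
  unfold stair
  rw [Finset.filter_true_of_mem]
  intro d hd
  exact (DpermF_bounds hd).1

lemma stair_of_ge (w : Equiv.Perm (Fin n)) {j : ℕ} (hj : n ≤ j + 1) : stair w j = 0 := by
  unfold stair
  rw [Finset.card_eq_zero, Finset.filter_eq_empty_iff]
  intro d hd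
  have := (DpermF_bounds hd).2
  omega

lemma stair_succ (w : Equiv.Perm (Fin n)) (j : ℕ) :
    stair w j = stair w (j + 1) + (if j + 1 ∈ DpermF w then 1 else 0) := by
  unfold stair
  have h1 : (DpermF w).filter (fun d => j < d)
      = ((DpermF w).filter (fun d => j + 1 < d)) ∪ ((DpermF w).filter (fun d => d = j + 1)) := by
    rw [← Finset.filter_or]
    apply Finset.filter_congr
    intro d _
    constructor
    · intro h; omega
    · intro h; omega
  rw [h1, Finset.card_union_of_disjoint]
  · congr 1
    rw [Finset.filter_eq']
    split <;> simp
  · rw [Finset.disjoint_filter]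
    intro d _ h1 h2
    omega

lemma stair_le (w : Equiv.Perm (Fin n)) (j : ℕ) : stair w j ≤ (DpermF w).card :=
  Finset.card_filter_le _ _

lemma sum_stair (w : Equiv.Perm (Fin n)) :
    ∑ j : Fin n, stair w (j : ℕ) = ∑ d ∈ DpermF w, d := by
  unfold stair
  have h1 : ∀ j : Fin n, ((DpermF w).filter (fun d => (j : ℕ) < d)).card
      = ∑ d ∈ DpermF w, if (j : ℕ) < d then 1 else 0 := by
    intro j; rw [Finset.card_filter]
  rw [Finset.sum_congr rfl (fun j _ => h1 j), Finset.sum_comm]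
  apply Finset.sum_congr rfl
  intro d hd
  rw [← Finset.sum_filter, Finset.sum_const, smul_eq_mul, mul_one,
    card_filter_val_lt (le_of_lt (DpermF_bounds hd).2)]

/-- partial sums from above of `l` : `Hp n l j = ∑_{j < i ≤ n} l i`. -/
def Hp (n : ℕ) (l : ℕ →₀ ℕ) (j : ℕ) : ℕ :=
  ∑ i ∈ (Finset.range (n + 1)).filter (fun i => j < i), l i

lemma Hp_of_ge (l : ℕ →₀ ℕ) {j : ℕ} (hj : n ≤ j) : Hp n l j = 0 := by
  unfold Hp
  rw [Finset.sum_eq_zero]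
  intro i hi
  simp only [Finset.mem_filter, Finset.mem_range] at hi
  omega

lemma Hp_succ (l : ℕ →₀ ℕ) (hsupp : l.support ⊆ Finset.range (n + 1)) (j : ℕ) :
    Hp n l j = l (j + 1) + Hp n l (j + 1) := by
  by_cases hj : j + 1 ≤ n
  · unfold Hp
    have h1 : (Finset.range (n + 1)).filter (fun i => j < i)
        = insert (j + 1) ((Finset.range (n + 1)).filter (fun i => j + 1 < i)) := by
      ext i
      simp only [Finset.mem_insert, Finset.mem_filter, Finset.mem_range]
      omega
    rw [h1, Finset.sum_insert]
    simp only [Finset.mem_filter, Finset.mem_range]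
    omega
  · rw [Hp_of_ge l (by omega), Hp_of_ge l (by omega)]
    have : l (j + 1) = 0 := by
      by_contra h
      have := hsupp (Finsupp.mem_support_iff.2 h)
      simp only [Finset.mem_range] at this
      omega
    omega

lemma Hp_le (l : ℕ →₀ ℕ) (j : ℕ) : Hp n l j ≤ ∑ i ∈ Finset.range (n + 1), l i :=
  Finset.sum_le_sum_of_subset (Finset.filter_subset _ _)

lemma Hp_antitone_succ (l : ℕ →₀ ℕ) (j : ℕ) : Hp n l (j + 1) ≤ Hp n l j := by
  apply Finset.sum_le_sum_of_subset
  intro i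
  simp only [Finset.mem_filter, Finset.mem_range]
  omega

lemma sum_range_eq_add_Hp (l : ℕ →₀ ℕ) :
    ∑ i ∈ Finset.range (n + 1), l i = l 0 + Hp n l 0 := by
  unfold Hp
  rw [← Finset.add_sum_erase _ _ (Finset.mem_range.2 (by omega) : 0 ∈ Finset.range (n + 1))]
  congr 1
  apply Finset.sum_congr
  · rw [← Finset.filter_ne']
    apply Finset.filter_congr
    intro i _
    omega
  · intro _ _; rfl

/-- Characterization of `Tuple.sort (toDual ∘ g) = w` by adjacent conditions. -/
lemma sort_eq_iff (g : Fin n → ℕ) (w : Equiv.Perm (Fin n)) :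
    Tuple.sort (⇑OrderDual.toDual ∘ g) = w ↔
      ∀ j : ℕ, ∀ hj : j + 1 < n,
        g (w ⟨j + 1, hj⟩) ≤ g (w ⟨j, by omega⟩) ∧
        (g (w ⟨j + 1, hj⟩) = g (w ⟨j, by omega⟩) → w ⟨j, by omega⟩ < w ⟨j + 1, hj⟩) := by
  rw [eq_comm, Tuple.eq_sort_iff]
  constructor
  · rintro ⟨hmono, hties⟩ j hj
    have hab : (⟨j, by omega⟩ : Fin n) ≤ ⟨j + 1, hj⟩ := by
      rw [Fin.mk_le_mk]; omega
    have h1 := hmono hab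
    simp only [Function.comp_apply, OrderDual.toDual_le_toDual] at h1
    refine ⟨h1, fun he => ?_⟩
    apply hties _ _ (by rw [Fin.mk_lt_mk]; omega)
    simp only [Function.comp_apply, OrderDual.toDual_inj]
    exact he.symm
  · intro h
    have aux : ∀ m : ℕ, ∀ a b : Fin n, (b : ℕ) = (a : ℕ) + m → g (w b) ≤ g (w a) := by
      intro m
      induction m with
      | zero =>
        intro a b hb
        have : b = a := Fin.ext (by omega)
        subst this; exact le_refl _
      | succ m ih =>
        intro a b hb
        have hc : (a : ℕ) + m < n := by have := b.isLt; omega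
        have h1 := (h ((a : ℕ) + m) (by omega)).1
        have e1 : (⟨(a : ℕ) + m + 1, by omega⟩ : Fin n) = b := Fin.ext (by simp; omega)
        rw [e1] at h1
        exact h1.trans (ih a ⟨(a : ℕ) + m, hc⟩ (by simp))
    have aux2 : ∀ m : ℕ, ∀ a b : Fin n, (b : ℕ) = (a : ℕ) + (m + 1) →
        g (w a) = g (w b) → w a < w b := by
      intro m
      induction m with
      | zero =>
        intro a b hb he
        have h2 := (h (a : ℕ) (by omega)).2
        have e1 : (⟨(a : ℕ) + 1, by omega⟩ : Fin n) = b := Fin.ext (by simp; omega)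
        have e0 : (⟨(a : ℕ), by omega⟩ : Fin n) = a := Fin.ext rfl
        rw [e1, e0] at h2
        exact h2 he.symm
      | succ m ih =>
        intro a b hb he
        have hc : (a : ℕ) + (m + 1) < n := by have := b.isLt; omega
        set c : Fin n := ⟨(a : ℕ) + (m + 1), hc⟩ with hcdef
        have hba : g (w b) ≤ g (w c) := aux 1 c b (by simp [hcdef]; omega)
        have hca : g (w c) ≤ g (w a) := aux (m + 1) a c (by simp [hcdef])
        have he1 : g (w a) = g (w c) := le_antisymm (by rw [he]; exact hba) hca
        have he2 : g (w c) = g (w b) := le_antisymm (by rw [← he]; exact hca) hba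
        have hlt1 : w a < w c := ih a c (by simp [hcdef]) he1
        have h2 := (h ((a : ℕ) + (m + 1)) (by omega)).2
        have e1 : (⟨(a : ℕ) + (m + 1) + 1, by omega⟩ : Fin n) = b := Fin.ext (by simp; omega)
        have e0 : (⟨(a : ℕ) + (m + 1), by omega⟩ : Fin n) = c := Fin.ext rfl
        rw [e1, e0] at h2
        exact hlt1.trans (h2 he2.symm)
    constructor
    · intro a b hab
      simp only [Function.comp_apply, OrderDual.toDual_le_toDual]
      exact aux ((b : ℕ) - (a : ℕ)) a b (by omega)
    · intro a b hab he
      simp only [Function.comp_apply, OrderDual.toDual_inj] at he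
      exact aux2 ((b : ℕ) - (a : ℕ) - 1) a b (by omega) he

/-- The function built from a permutation `w` and a composition `l`. -/
def gOf (w : Equiv.Perm (Fin n)) (l : ℕ →₀ ℕ) : Fin n → ℕ :=
  fun x => Hp n l ((w.symm x : Fin n) : ℕ) + stair w ((w.symm x : Fin n) : ℕ)

lemma gOf_apply (w : Equiv.Perm (Fin n)) (l : ℕ →₀ ℕ) (j : Fin n) :
    gOf w l (w j) = Hp n l (j : ℕ) + stair w (j : ℕ) := by
  simp [gOf]

lemma sum_gOf (w : Equiv.Perm (Fin n)) (l : ℕ →₀ ℕ) :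
    ∑ x : Fin n, gOf w l x
      = (∑ i ∈ Finset.range (n + 1), i * l i) + ∑ d ∈ DpermF w, d := by
  have h0 : ∑ x : Fin n, gOf w l x = ∑ j : Fin n, (Hp n l (j : ℕ) + stair w (j : ℕ)) :=
    (Equiv.sum_comp w (gOf w l)).symm.trans
      (Finset.sum_congr rfl fun j _ => gOf_apply w l j)
  rw [h0, Finset.sum_add_distrib, sum_stair]
  congr 1
  unfold Hp
  have h1 : ∀ j : Fin n, ∑ i ∈ (Finset.range (n + 1)).filter (fun i => (j : ℕ) < i), l i
      = ∑ i ∈ Finset.range (n + 1), if (j : ℕ) < i then l i else 0 := by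
    intro j; rw [Finset.sum_filter]
  rw [Finset.sum_congr rfl fun j _ => h1 j, Finset.sum_comm]
  apply Finset.sum_congr rfl
  intro i hi
  rw [← Finset.sum_filter, Finset.sum_const, smul_eq_mul,
    card_filter_val_lt (by simp only [Finset.mem_range] at hi; omega : i ≤ n)]

lemma gOf_le {K : ℕ} (w : Equiv.Perm (Fin n)) (l : ℕ →₀ ℕ)
    (hl : l ∈ Finset.finsuppAntidiag (Finset.range (n + 1)) K) (x : Fin n) :
    gOf w l x ≤ K + (DpermF w).card := by
  have hsum : ∑ i ∈ Finset.range (n + 1), l i = K := (Finset.mem_finsuppAntidiag.1 hl).1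
  exact add_le_add ((Hp_le l _).trans_eq hsum) (stair_le w _)

lemma sort_gOf (w : Equiv.Perm (Fin n)) (l : ℕ →₀ ℕ) :
    Tuple.sort (⇑OrderDual.toDual ∘ gOf w l) = w := by
  rw [sort_eq_iff]
  intro j hj
  have e1 : gOf w l (w ⟨j + 1, hj⟩) = Hp n l (j + 1) + stair w (j + 1) :=
    gOf_apply w l ⟨j + 1, hj⟩
  have e0 : gOf w l (w ⟨j, by omega⟩) = Hp n l j + stair w j :=
    gOf_apply w l ⟨j, by omega⟩
  have hss := stair_succ w j
  have hHp := Hp_antitone_succ (n := n) l j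
  rw [e1, e0]
  by_cases hd : j + 1 ∈ DpermF w
  · rw [if_pos hd] at hss
    constructor
    · omega
    · intro he; omega
  · rw [if_neg hd] at hss
    refine ⟨by omega, fun he => ?_⟩
    have hne : w ⟨j, by omega⟩ ≠ w ⟨j + 1, hj⟩ := by
      apply w.injective.ne
      simp only [ne_eq, Fin.mk.injEq]
      omega
    rcases lt_or_gt_of_ne hne with h | h
    · exact h
    · exact absurd ((mem_DpermF_iff w j hj).2 h) hd

/-- `g ∘ w` as a function on naturals, `0` outside of range. -/
def hgf (w : Equiv.Perm (Fin n)) (g : Fin n → ℕ) (j : ℕ) : ℕ :=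
  if hj : j < n then g (w ⟨j, hj⟩) else 0

lemma fiber_conds {w : Equiv.Perm (Fin n)} {g : Fin n → ℕ}
    (hsort : Tuple.sort (⇑OrderDual.toDual ∘ g) = w) :
    ∀ j : ℕ, j + 1 < n →
      (hgf w g (j + 1) ≤ hgf w g j ∧
        (j + 1 ∈ DpermF w → hgf w g (j + 1) < hgf w g j)) := by
  rw [sort_eq_iff] at hsort
  intro j hj
  obtain ⟨h1, h2⟩ := hsort j hj
  unfold hgf
  rw [dif_pos hj, dif_pos (by omega : j < n)]
  refine ⟨h1, fun hd => ?_⟩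
  have wlt := (mem_DpermF_iff w j hj).1 hd
  rcases lt_or_eq_of_le h1 with h | h
  · exact h
  · exact absurd wlt (asymm (h2 h))

lemma stair_le_hgf {w : Equiv.Perm (Fin n)} {g : Fin n → ℕ}
    (hc : ∀ j : ℕ, j + 1 < n →
      (hgf w g (j + 1) ≤ hgf w g j ∧
        (j + 1 ∈ DpermF w → hgf w g (j + 1) < hgf w g j))) :
    ∀ j, stair w j ≤ hgf w g j := by
  have aux : ∀ m, ∀ j, n ≤ j + m → stair w j ≤ hgf w g j := by
    intro m
    induction m with
    | zero => intro j hjn; rw [stair_of_ge w (by omega)]; exact Nat.zero_le _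
    | succ m ih =>
      intro j hjn
      by_cases h : n ≤ j + m
      · exact ih j h
      · by_cases hj : j + 1 < n
        · have h1 := ih (j + 1) (by omega)
          have hss := stair_succ w j
          obtain ⟨hle, hlt⟩ := hc j hj
          by_cases hd : j + 1 ∈ DpermF w
          · rw [if_pos hd] at hss; have := hlt hd; omega
          · rw [if_neg hd] at hss; omega
        · rw [stair_of_ge w (by omega)]; exact Nat.zero_le _
  intro j; exact aux n j (by omega)

/-- The reduced sequence `h'`. -/
def Hg (w : Equiv.Perm (Fin n)) (g : Fin n → ℕ) (j : ℕ) : ℕ :=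
  hgf w g j - stair w j

lemma Hg_of_ge {w : Equiv.Perm (Fin n)} {g : Fin n → ℕ} {j : ℕ} (hj : n ≤ j) :
    Hg w g j = 0 := by
  unfold Hg hgf
  rw [dif_neg (by omega)]
  simp

lemma Hg_antitone_succ {w : Equiv.Perm (Fin n)} {g : Fin n → ℕ}
    (hc : ∀ j : ℕ, j + 1 < n →
      (hgf w g (j + 1) ≤ hgf w g j ∧
        (j + 1 ∈ DpermF w → hgf w g (j + 1) < hgf w g j))) :
    ∀ j, Hg w g (j + 1) ≤ Hg w g j := by
  intro j
  by_cases hj : j + 1 < n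
  · have hss := stair_succ w j
    have s1 := stair_le_hgf hc (j + 1)
    have s0 := stair_le_hgf hc j
    obtain ⟨hle, hlt⟩ := hc j hj
    unfold Hg
    by_cases hd : j + 1 ∈ DpermF w
    · rw [if_pos hd] at hss; have := hlt hd; omega
    · rw [if_neg hd] at hss; omega
  · rw [Hg_of_ge (by omega)]; exact Nat.zero_le _

/-- The composition associated to a compatible function. -/
def lof (w : Equiv.Perm (Fin n)) (g : Fin n → ℕ) (K : ℕ) : ℕ →₀ ℕ :=
  Finsupp.onFinset (Finset.range (n + 1))
    (fun i => if i = 0 then K - Hg w g 0 else Hg w g (i - 1) - Hg w g i)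
    (by
      intro i hi
      by_contra hmem
      simp only [Finset.mem_range, not_lt] at hmem
      apply hi
      rw [if_neg (by omega), Hg_of_ge (by omega : n ≤ i - 1)]
      simp)

lemma lof_apply_zero (w : Equiv.Perm (Fin n)) (g : Fin n → ℕ) (K : ℕ) :
    lof w g K 0 = K - Hg w g 0 := rfl

lemma lof_apply_succ (w : Equiv.Perm (Fin n)) (g : Fin n → ℕ) (K : ℕ) (i : ℕ) :
    lof w g K (i + 1) = Hg w g i - Hg w g (i + 1) := rfl

lemma Hp_lof {w : Equiv.Perm (Fin n)} {g : Fin n → ℕ} {K : ℕ}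
    (hc : ∀ j : ℕ, j + 1 < n →
      (hgf w g (j + 1) ≤ hgf w g j ∧
        (j + 1 ∈ DpermF w → hgf w g (j + 1) < hgf w g j))) :
    ∀ j, Hp n (lof w g K) j = Hg w g j := by
  have hsupp : (lof w g K).support ⊆ Finset.range (n + 1) :=
    Finsupp.support_onFinset_subset
  have aux : ∀ m, ∀ j, n ≤ j + m → Hp n (lof w g K) j = Hg w g j := by
    intro m
    induction m with
    | zero => intro j hjn; rw [Hp_of_ge _ (by omega), Hg_of_ge (by omega)]
    | succ m ih =>
      intro j hjn
      by_cases h : n ≤ j + m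
      · exact ih j h
      · rw [Hp_succ _ hsupp j, ih (j + 1) (by omega), lof_apply_succ,
          Nat.sub_add_cancel (Hg_antitone_succ hc j)]
  intro j; exact aux n j (by omega)

lemma lof_mem {w : Equiv.Perm (Fin n)} {g : Fin n → ℕ} {K : ℕ}
    (hc : ∀ j : ℕ, j + 1 < n →
      (hgf w g (j + 1) ≤ hgf w g j ∧
        (j + 1 ∈ DpermF w → hgf w g (j + 1) < hgf w g j)))
    (hK : Hg w g 0 ≤ K) :
    lof w g K ∈ Finset.finsuppAntidiag (Finset.range (n + 1)) K := by
  rw [Finset.mem_finsuppAntidiag]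
  refine ⟨?_, Finsupp.support_onFinset_subset⟩
  have h1 : ∑ i ∈ Finset.range (n + 1), lof w g K i
      = lof w g K 0 + Hp n (lof w g K) 0 := sum_range_eq_add_Hp _
  rw [h1, Hp_lof hc 0, lof_apply_zero]
  omega

lemma gOf_lof {w : Equiv.Perm (Fin n)} {g : Fin n → ℕ} {K : ℕ}
    (hc : ∀ j : ℕ, j + 1 < n →
      (hgf w g (j + 1) ≤ hgf w g j ∧
        (j + 1 ∈ DpermF w → hgf w g (j + 1) < hgf w g j))) :
    gOf w (lof w g K) = g := by
  funext x
  unfold gOf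
  rw [Hp_lof hc]
  have h1 : Hg w g ((w.symm x : Fin n) : ℕ) + stair w ((w.symm x : Fin n) : ℕ)
      = hgf w g ((w.symm x : Fin n) : ℕ) := by
    unfold Hg
    exact Nat.sub_add_cancel (stair_le_hgf hc _)
  rw [h1]
  unfold hgf
  rw [dif_pos (w.symm x).isLt]
  have h2 : (⟨((w.symm x : Fin n) : ℕ), (w.symm x).isLt⟩ : Fin n) = w.symm x := Fin.eta _ _
  rw [h2, w.apply_symm_apply]

lemma gOf_inj {w : Equiv.Perm (Fin n)} {K : ℕ} {l l' : ℕ →₀ ℕ}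
    (hl : l ∈ Finset.finsuppAntidiag (Finset.range (n + 1)) K)
    (hl' : l' ∈ Finset.finsuppAntidiag (Finset.range (n + 1)) K)
    (he : gOf w l = gOf w l') : l = l' := by
  rw [Finset.mem_finsuppAntidiag] at hl hl'
  have hHp : ∀ j, Hp n l j = Hp n l' j := by
    intro j
    by_cases hj : j < n
    · have h1 : Hp n l j + stair w j = Hp n l' j + stair w j := by
        have h0 := congrFun he (w ⟨j, hj⟩)
        rw [gOf_apply w l ⟨j, hj⟩, gOf_apply w l' ⟨j, hj⟩] at h0
        exact h0
      omega
    · rw [Hp_of_ge l (by omega), Hp_of_ge l' (by omega)]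
  ext i
  match i with
  | 0 =>
    have e1 := sum_range_eq_add_Hp (n := n) l
    have e2 := sum_range_eq_add_Hp (n := n) l'
    rw [hl.1] at e1
    rw [hl'.1] at e2
    have := hHp 0
    omega
  | i + 1 =>
    have e1 := Hp_succ (n := n) l hl.2 i
    have e2 := Hp_succ (n := n) l' hl'.2 i
    have h1 := hHp i
    have h2 := hHp (i + 1)
    omega

lemma core (n k : ℕ) :
    ∑ g ∈ Fintype.piFinset (fun _ : Fin n => Finset.range (k + 1)),
        (Polynomial.X : Polynomial ℚ) ^ (∑ j, g j)
      = ∑ w : Equiv.Perm (Fin n),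
          if (DpermF w).card ≤ k then
            (Polynomial.X : Polynomial ℚ) ^ (∑ d ∈ DpermF w, d) *
              ∑ l ∈ Finset.finsuppAntidiag (Finset.range (n + 1)) (k - (DpermF w).card),
                (Polynomial.X : Polynomial ℚ) ^ (∑ i ∈ Finset.range (n + 1), i * l i)
          else 0 := by
  classical
  rw [← Finset.sum_fiberwise (Fintype.piFinset fun _ : Fin n => Finset.range (k + 1))
    (fun g => Tuple.sort (⇑OrderDual.toDual ∘ g))
    (fun g => (Polynomial.X : Polynomial ℚ) ^ (∑ j, g j))]
  apply Finset.sum_congr rfl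
  intro w _
  by_cases hdes : (DpermF w).card ≤ k
  · rw [if_pos hdes, Finset.mul_sum]
    refine (Finset.sum_bij (fun l _ => gOf w l) ?_ ?_ ?_ ?_).symm
    · intro l hl
      rw [Finset.mem_filter]
      constructor
      · rw [Fintype.mem_piFinset]
        intro x
        rw [Finset.mem_range]
        show gOf w l x < k + 1
        have h1 := gOf_le w l hl x
        omega
      · exact sort_gOf w l
    · intro l₁ hl₁ l₂ hl₂ he
      exact gOf_inj hl₁ hl₂ he
    · intro g hg
      rw [Finset.mem_filter] at hg
      obtain ⟨hgmem, hsort⟩ := hg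
      have hc := fiber_conds hsort
      have hgle : hgf w g 0 ≤ k := by
        unfold hgf
        split
        · rename_i h0
          have := Fintype.mem_piFinset.1 hgmem (w ⟨0, h0⟩)
          rw [Finset.mem_range] at this
          omega
        · omega
      have hK : Hg w g 0 ≤ k - (DpermF w).card := by
        unfold Hg
        rw [stair_zero]
        omega
      exact ⟨lof w g (k - (DpermF w).card), lof_mem hc hK, gOf_lof hc⟩
    · intro l hl
      rw [← pow_add]
      congr 1
      rw [sum_gOf w l]
      ring
  · rw [if_neg hdes]
    have hempty : (Fintype.piFinset fun _ : Fin n => Finset.range (k + 1)).filter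
        (fun g => Tuple.sort (⇑OrderDual.toDual ∘ g) = w) = ∅ := by
      rw [Finset.filter_eq_empty_iff]
      intro g hgmem hsort
      apply hdes
      have hc := fiber_conds hsort
      have s1 := stair_le_hgf hc 0
      rw [stair_zero] at s1
      have hgle : hgf w g 0 ≤ k := by
        unfold hgf
        split
        · rename_i h0
          have := Fintype.mem_piFinset.1 hgmem (w ⟨0, h0⟩)
          rw [Finset.mem_range] at this
          omega
        · omega
      omega
    rw [hempty, Finset.sum_empty]

end MC15

/-- The MacMahon–Carlitz identity
`Σ_w q^{maj(w)} u^{des(w)} / ∏_{i=0}^{n} (1 - qⁱu) = Σ_{k ≥ 0} ([k+1]_q)ⁿ u^k`,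
as an identity of formal power series in `u` over `ℚ[q]` (stated with the denominator
cleared). -/
theorem stmt_15 (n : ℕ) :
    (∑ w : Equiv.Perm (Fin n),
        (PowerSeries.monomial (R := Polynomial ℚ) (DpermF w).card)
          (Polynomial.X ^ (∑ i ∈ DpermF w, i)))
      =
    (PowerSeries.mk fun k =>
        (∑ j ∈ Finset.range (k + 1), (Polynomial.X : Polynomial ℚ) ^ j) ^ n)
      * ∏ i ∈ Finset.range (n + 1),
          (1 - (PowerSeries.monomial (R := Polynomial ℚ) 1) (Polynomial.X ^ i)) := by
  classical
  set Ci : PowerSeries (Polynomial ℚ) :=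
    ∏ i ∈ Finset.range (n + 1),
      PowerSeries.mk fun m => (Polynomial.X : Polynomial ℚ) ^ (i * m) with hCidef
  have hCi : (∏ i ∈ Finset.range (n + 1),
      (1 - (PowerSeries.monomial (R := Polynomial ℚ) 1) ((Polynomial.X : Polynomial ℚ) ^ i)))
        * Ci = 1 := by
    rw [hCidef, ← Finset.prod_mul_distrib]
    exact Finset.prod_eq_one fun i _ => MC15.geom_inv i
  have hCicoeff : ∀ K, PowerSeries.coeff (R := Polynomial ℚ) K Ci
      = ∑ l ∈ Finset.finsuppAntidiag (Finset.range (n + 1)) K,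
          (Polynomial.X : Polynomial ℚ) ^ (∑ i ∈ Finset.range (n + 1), i * l i) := by
    intro K
    rw [hCidef, PowerSeries.coeff_prod]
    apply Finset.sum_congr rfl
    intro l _
    rw [← Finset.prod_pow_eq_pow_sum]
    apply Finset.prod_congr rfl
    intro i _
    rw [PowerSeries.coeff_mk]
  have key : (∑ w : Equiv.Perm (Fin n),
      (PowerSeries.monomial (R := Polynomial ℚ) (DpermF w).card)
        (Polynomial.X ^ (∑ i ∈ DpermF w, i))) * Ci
      = PowerSeries.mk fun k =>
          (∑ j ∈ Finset.range (k + 1), (Polynomial.X : Polynomial ℚ) ^ j) ^ n := by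
    apply PowerSeries.ext
    intro k
    rw [PowerSeries.coeff_mk, Finset.sum_mul, map_sum]
    have h1 : ∀ w : Equiv.Perm (Fin n),
        PowerSeries.coeff (R := Polynomial ℚ) k
          ((PowerSeries.monomial (R := Polynomial ℚ) (DpermF w).card)
            (Polynomial.X ^ (∑ i ∈ DpermF w, i)) * Ci)
        = if (DpermF w).card ≤ k then
            (Polynomial.X : Polynomial ℚ) ^ (∑ d ∈ DpermF w, d) *
              ∑ l ∈ Finset.finsuppAntidiag (Finset.range (n + 1)) (k - (DpermF w).card),
                (Polynomial.X : Polynomial ℚ) ^ (∑ i ∈ Finset.range (n + 1), i * l i)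
          else 0 := by
      intro w
      rw [MC15.coeff_monomial_mul', hCicoeff]
    rw [Finset.sum_congr rfl fun w _ => h1 w, ← MC15.core n k]
    have h2 : (∑ j ∈ Finset.range (k + 1), (Polynomial.X : Polynomial ℚ) ^ j) ^ n
        = ∏ _i : Fin n, ∑ j ∈ Finset.range (k + 1), (Polynomial.X : Polynomial ℚ) ^ j := by
      rw [Finset.prod_const, Finset.card_univ, Fintype.card_fin]
    rw [h2, Finset.prod_univ_sum]
    apply Finset.sum_congr rfl
    intro g _
    rw [Finset.prod_pow_eq_pow_sum]
  rw [← key, mul_assoc, mul_comm Ci, hCi, mul_one]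
end
end

section
/- The identity Σ_{λ∈Par(n)} (n choose m(λ)) ∏_{i=1}^{n} qᵢ^{λᵢ} = (Σ_{w∈Sₙ} ∏_{i∈D(w)} q₁q₂⋯qᵢ) / ∏_{j=1}^{n} (1 - q₁q₂⋯qⱼ) holds as formal power series in q₁,...,qₙ. -/
noncomputable section
open scoped Classical

/-- The monomial `q₁ q₂ ⋯ qᵢ` in `ℚ[[q₁,…,qₙ]]` (1-based `i`). -/
def qprod (n : ℕ) (i : ℕ) : MvPowerSeries (Fin n) ℚ :=
  ∏ l ∈ Finset.univ.filter (fun l : Fin n => (l : ℕ) < i), MvPowerSeries.X l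

/-- The generating function `Σ_{λ ∈ Par(n)} (n choose m(λ)) ∏ᵢ qᵢ^{λᵢ}`, a formal power
series in `q₁,…,qₙ` whose coefficient of `∏ qᵢ^{dᵢ}` is the multinomial coefficient
`n!/∏ⱼ mⱼ(d)!` when `d` is weakly decreasing and `0` otherwise. -/
def lhs16 (n : ℕ) : MvPowerSeries (Fin n) ℚ :=
  fun d =>
    if ∀ i j : Fin n, i ≤ j → d j ≤ d i then
      (Nat.factorial n : ℚ) /
        ∏ v ∈ Finset.image d Finset.univ,
          (Nat.factorial (Finset.univ.filter (fun i => d i = v)).card : ℚ)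
    else 0

open Finset Equiv

variable {n : ℕ}

/-- w is increasing on each fiber of e -/
def CompatP (e : Fin n → ℕ) (w : Equiv.Perm (Fin n)) : Prop :=
  ∀ i j : Fin n, i < j → e i = e j → w i < w j

def fib (e : Fin n → ℕ) (v : ℕ) : Finset (Fin n) := Finset.univ.filter (fun b => e b = v)

lemma mem_fib {e : Fin n → ℕ} {a : Fin n} : a ∈ fib e (e a) := by simp [fib]

lemma card_image_fib (e : Fin n → ℕ) (w : Equiv.Perm (Fin n)) (v : ℕ) :
    ((fib e v).image ⇑w).card = (fib e v).card :=
  Finset.card_image_of_injective _ w.injective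

/-- sort `w` within each fiber of `e` -/
def sortW (e : Fin n → ℕ) (w : Equiv.Perm (Fin n)) (a : Fin n) : Fin n :=
  ((fib e (e a)).image ⇑w).orderEmbOfFin (card_image_fib e w (e a))
    (((fib e (e a)).orderIsoOfFin rfl).symm ⟨a, mem_fib⟩)

lemma sortW_mem (e : Fin n → ℕ) (w : Equiv.Perm (Fin n)) (a : Fin n) :
    sortW e w a ∈ (fib e (e a)).image ⇑w :=
  Finset.orderEmbOfFin_mem _ _ _

lemma sortW_eq_of (e : Fin n → ℕ) (w : Equiv.Perm (Fin n)) (a : Fin n) (v : ℕ) (hv : e a = v) :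
    sortW e w a = ((fib e v).image ⇑w).orderEmbOfFin (card_image_fib e w v)
      (((fib e v).orderIsoOfFin rfl).symm ⟨a, by simp [fib, hv]⟩) := by
  subst hv; rfl

lemma sortW_lt (e : Fin n → ℕ) (w : Equiv.Perm (Fin n)) {a b : Fin n}
    (h : e a = e b) (hab : a < b) : sortW e w a < sortW e w b := by
  rw [sortW_eq_of e w a (e a) rfl, sortW_eq_of e w b (e a) h.symm]
  apply (Finset.orderEmbOfFin _ _).strictMono
  exact ((fib e (e a)).orderIsoOfFin rfl).symm.strictMono (Subtype.mk_lt_mk.mpr hab)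

lemma sortW_injective (e : Fin n → ℕ) (w : Equiv.Perm (Fin n)) :
    Function.Injective (sortW e w) := by
  intro a b hab
  by_cases h : e a = e b
  · rcases lt_trichotomy a b with h1 | h1 | h1
    · exact absurd hab (sortW_lt e w h h1).ne
    · exact h1
    · exact absurd hab.symm (sortW_lt e w h.symm h1).ne
  · exfalso
    have ha := sortW_mem e w a
    have hb := sortW_mem e w b
    rw [hab] at ha
    rcases Finset.mem_image.mp ha with ⟨x, hx, hxe⟩
    rcases Finset.mem_image.mp hb with ⟨y, hy, hye⟩
    have : x = y := w.injective (by rw [hxe, hye])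
    subst this
    simp [fib] at hx hy
    exact h (by rw [← hx, hy])

def sortPerm (e : Fin n → ℕ) (w : Equiv.Perm (Fin n)) : Equiv.Perm (Fin n) :=
  Equiv.ofBijective (sortW e w) (Finite.injective_iff_bijective.mp (sortW_injective e w))

lemma sortPerm_apply (e : Fin n → ℕ) (w : Equiv.Perm (Fin n)) (a : Fin n) :
    sortPerm e w a = sortW e w a := rfl

lemma sortPerm_compat (e : Fin n → ℕ) (w : Equiv.Perm (Fin n)) :
    CompatP e (sortPerm e w) := fun _ _ hij hee => sortW_lt e w hee hij

lemma image_fib_sortPerm (e : Fin n → ℕ) (w : Equiv.Perm (Fin n)) (v : ℕ) :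
    (fib e v).image ⇑(sortPerm e w) = (fib e v).image ⇑w := by
  apply Finset.eq_of_subset_of_card_le
  · intro x hx
    rcases Finset.mem_image.mp hx with ⟨a, ha, rfl⟩
    have hav : e a = v := by simpa [fib] using ha
    have := sortW_mem e w a
    rwa [sortPerm_apply, ← hav]
  · rw [card_image_fib, Finset.card_image_of_injective _ (sortPerm e w).injective]

lemma eq_on_of_strictMonoOn (s : Finset (Fin n)) (f g : Fin n → Fin n)
    (hf : ∀ a ∈ s, ∀ b ∈ s, a < b → f a < f b)
    (hg : ∀ a ∈ s, ∀ b ∈ s, a < b → g a < g b)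
    (him : s.image f = s.image g) : ∀ a ∈ s, f a = g a := by
  have hinjf : Set.InjOn f ↑s := by
    intro a ha b hb hab
    rcases lt_trichotomy a b with h | h | h
    · exact absurd hab (hf a ha b hb h).ne
    · exact h
    · exact absurd hab.symm (hf b hb a ha h).ne
  have hcf : (s.image f).card = s.card := Finset.card_image_of_injOn hinjf
  set F : Fin s.card → Fin n := fun i => f (s.orderEmbOfFin rfl i) with hF
  set G : Fin s.card → Fin n := fun i => g (s.orderEmbOfFin rfl i) with hG
  have hFmono : StrictMono F := fun i j hij =>
    hf _ (Finset.orderEmbOfFin_mem s rfl i) _ (Finset.orderEmbOfFin_mem s rfl j)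
      ((s.orderEmbOfFin rfl).strictMono hij)
  have hGmono : StrictMono G := fun i j hij =>
    hg _ (Finset.orderEmbOfFin_mem s rfl i) _ (Finset.orderEmbOfFin_mem s rfl j)
      ((s.orderEmbOfFin rfl).strictMono hij)
  have hFeq : F = ⇑((s.image f).orderEmbOfFin hcf) :=
    Finset.orderEmbOfFin_unique hcf
      (fun x => Finset.mem_image_of_mem f (Finset.orderEmbOfFin_mem s rfl x)) hFmono
  have hGeq : G = ⇑((s.image f).orderEmbOfFin hcf) :=
    Finset.orderEmbOfFin_unique hcf
      (fun x => him ▸ Finset.mem_image_of_mem g (Finset.orderEmbOfFin_mem s rfl x)) hGmono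
  intro a ha
  have : a ∈ Set.range ⇑(s.orderEmbOfFin rfl) := by
    rw [Finset.range_orderEmbOfFin]; exact ha
  rcases this with ⟨i, rfl⟩
  have : F i = G i := by rw [hFeq, hGeq]
  exact this

lemma fib_image_stab (e : Fin n → ℕ) {σ : Equiv.Perm (Fin n)} (hσ : e ∘ ⇑σ = e) (v : ℕ) :
    (fib e v).image ⇑σ = fib e v := by
  apply Finset.eq_of_subset_of_card_le
  · intro x hx
    rcases Finset.mem_image.mp hx with ⟨a, ha, rfl⟩
    have hav : e a = v := by simpa [fib] using ha
    have : e (σ a) = e a := congrFun hσ a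
    simp [fib, this, hav]
  · rw [Finset.card_image_of_injective _ σ.injective]

theorem compat_card (e : Fin n → ℕ) :
    (Finset.univ.filter (CompatP e)).card *
      ∏ v ∈ Finset.image e Finset.univ, Nat.factorial (Finset.univ.filter (fun i => e i = v)).card = Nat.factorial n := by
  classical
  have Φbij : Function.Bijective
      (fun p : {u : Equiv.Perm (Fin n) // CompatP e u} × {g : Equiv.Perm (Fin n) // e ∘ ⇑g = e} =>
        p.1.1 * p.2.1) := by
    constructor
    · rintro ⟨⟨u, hu⟩, ⟨σ, hσ⟩⟩ ⟨⟨u', hu'⟩, ⟨σ', hσ'⟩⟩ hEq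
      simp only at hEq
      have himage : ∀ v, (fib e v).image ⇑u = (fib e v).image ⇑u' := by
        intro v
        have h1 : (fib e v).image ⇑u = (fib e v).image ⇑(u * σ) := by
          rw [show ⇑(u * σ) = ⇑u ∘ ⇑σ from rfl, ← Finset.image_image, fib_image_stab e hσ]
        have h2 : (fib e v).image ⇑u' = (fib e v).image ⇑(u' * σ') := by
          rw [show ⇑(u' * σ') = ⇑u' ∘ ⇑σ' from rfl, ← Finset.image_image, fib_image_stab e hσ']
        rw [h1, h2, hEq]
      have huu' : u = u' := by
        apply Equiv.ext
        intro a
        refine eq_on_of_strictMonoOn (fib e (e a)) ⇑u ⇑u' ?_ ?_ (himage (e a)) a mem_fib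
        · intro x hx y hy hxy
          exact hu x y hxy (by simp [fib] at hx hy; rw [hx, hy])
        · intro x hx y hy hxy
          exact hu' x y hxy (by simp [fib] at hx hy; rw [hx, hy])
      subst huu'
      have : σ = σ' := mul_left_cancel hEq
      subst this
      rfl
    · intro w
      refine ⟨⟨⟨sortPerm e w, sortPerm_compat e w⟩, ⟨(sortPerm e w)⁻¹ * w, ?_⟩⟩, ?_⟩
      · funext a
        set u := sortPerm e w
        have hw : w a ∈ (fib e (e a)).image ⇑u := by
          rw [image_fib_sortPerm]
          exact Finset.mem_image_of_mem _ mem_fib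
        rcases Finset.mem_image.mp hw with ⟨c, hc, hcu⟩
        have hinv : u⁻¹ (w a) = c := by rw [← hcu]; simp
        have : e c = e a := by simpa [fib] using hc
        show e (u⁻¹ (w a)) = e a
        rw [hinv]; exact this
      · simp [mul_assoc]
  have hcards := Fintype.card_congr (Equiv.ofBijective _ Φbij)
  rw [Fintype.card_prod, Fintype.card_perm, Fintype.card_fin] at hcards
  rw [← hcards]
  congr 1
  · rw [Fintype.card_subtype]
  · rw [DomMulAct.stabilizer_card' e]
    apply Finset.prod_congr rfl
    intro v _
    rw [Fintype.card_subtype]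

lemma antitone_of_adjacent (e : Fin n → ℕ)
    (h : ∀ (k : ℕ) (hk : k + 1 < n), e ⟨k + 1, hk⟩ ≤ e ⟨k, by omega⟩) :
    ∀ i j : Fin n, i ≤ j → e j ≤ e i := by
  have key : ∀ (m k : ℕ) (hm : k + m < n), e ⟨k + m, hm⟩ ≤ e ⟨k, by omega⟩ := by
    intro m
    induction m with
    | zero => intro k hm; exact le_refl _
    | succ m ih =>
      intro k hm
      exact le_trans (h (k + m) hm) (ih k (by omega))
  intro i j hij
  have hij' : (i : ℕ) ≤ (j : ℕ) := hij
  have hj : j = ⟨(i : ℕ) + ((j : ℕ) - (i : ℕ)), by omega⟩ := Fin.ext (by simp; omega)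
  rw [hj]
  exact key _ _ _

lemma compat_of_adjacent (e : Fin n → ℕ) (he : ∀ i j : Fin n, i ≤ j → e j ≤ e i)
    (w : Equiv.Perm (Fin n))
    (h : ∀ (k : ℕ) (hk : k + 1 < n), e ⟨k, by omega⟩ = e ⟨k + 1, hk⟩ →
      w ⟨k, by omega⟩ < w ⟨k + 1, hk⟩) :
    CompatP e w := by
  have key : ∀ (m k : ℕ) (hm : k + m + 1 < n),
      e ⟨k, by omega⟩ = e ⟨k + m + 1, hm⟩ → w ⟨k, by omega⟩ < w ⟨k + m + 1, hm⟩ := by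
    intro m
    induction m with
    | zero => intro k hm hee; exact h k hm hee
    | succ m ih =>
      intro k hm hee
      have h1 : k + m + 1 < n := by omega
      have hle1 : (⟨k, by omega⟩ : Fin n) ≤ ⟨k + m + 1, h1⟩ := by
        simp only [Fin.mk_le_mk]; omega
      have hle2 : (⟨k + m + 1, h1⟩ : Fin n) ≤ ⟨k + (m + 1) + 1, hm⟩ := by
        simp only [Fin.mk_le_mk]; omega
      have ha : e ⟨k + (m + 1) + 1, hm⟩ ≤ e ⟨k + m + 1, h1⟩ := he _ _ hle2
      have hb : e ⟨k + m + 1, h1⟩ ≤ e ⟨k, by omega⟩ := he _ _ hle1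
      have he1 : e ⟨k, by omega⟩ = e ⟨k + m + 1, h1⟩ :=
        le_antisymm (by rw [hee]; exact ha) hb
      have he2 : e ⟨k + m + 1, h1⟩ = e ⟨k + (m + 1) + 1, hm⟩ := by rw [← he1, hee]
      exact lt_trans (ih k h1 he1) (h (k + m + 1) hm he2)
  intro i j hij hee
  have hij' : (i : ℕ) < (j : ℕ) := hij
  have hj : j = ⟨(i : ℕ) + ((j : ℕ) - (i : ℕ) - 1) + 1, by omega⟩ := Fin.ext (by simp; omega)
  rw [hj] at hee ⊢
  exact key _ _ _ hee

lemma mem_DpermF_bounds {w : Equiv.Perm (Fin n)} {i : ℕ} (hi : i ∈ DpermF w) :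
    1 ≤ i ∧ i < n := by
  rcases Finset.mem_image.mp hi with ⟨j, hj, rfl⟩
  simp only [Finset.mem_filter] at hj
  rcases hj.2 with ⟨h, _⟩
  omega

lemma mem_DpermF_iff (w : Equiv.Perm (Fin n)) (k : ℕ) (hk : k + 1 < n) :
    (k + 1) ∈ DpermF w ↔ w ⟨k + 1, hk⟩ < w ⟨k, by omega⟩ := by
  constructor
  · intro hmem
    rcases Finset.mem_image.mp hmem with ⟨j, hj, hjk⟩
    simp only [Finset.mem_filter] at hj
    rcases hj.2 with ⟨h, hlt⟩
    have hjv : (j : ℕ) = k := by omega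
    have hj1 : (⟨(j : ℕ) + 1, h⟩ : Fin n) = ⟨k + 1, hk⟩ := Fin.ext (by simp [hjv])
    have hj2 : j = (⟨k, by omega⟩ : Fin n) := Fin.ext (by simp [hjv])
    rwa [hj1, hj2] at hlt
  · intro hlt
    apply Finset.mem_image.mpr
    refine ⟨⟨k, by omega⟩, ?_, rfl⟩
    simp only [Finset.mem_filter, Finset.mem_univ, true_and]
    exact ⟨hk, hlt⟩

def eQF (n i : ℕ) : Fin n →₀ ℕ :=
  (Finset.univ.filter (fun l : Fin n => (l : ℕ) < i)).sum (fun l => Finsupp.single l 1)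

def ESF (n : ℕ) (S : Finset ℕ) : Fin n →₀ ℕ := S.sum (eQF n)

lemma eQF_apply (i : ℕ) (l : Fin n) : eQF n i l = if (l : ℕ) < i then 1 else 0 := by
  classical
  rw [eQF, Finsupp.finset_sum_apply]
  simp only [Finsupp.single_apply]
  rw [Finset.sum_ite_eq']
  simp

lemma ESF_apply (S : Finset ℕ) (l : Fin n) :
    ESF n S l = ∑ j ∈ S, if (l : ℕ) < j then 1 else 0 := by
  classical
  rw [ESF, Finsupp.finset_sum_apply]
  exact Finset.sum_congr rfl fun j _ => eQF_apply j l

lemma prod_monomial {ι : Type*} (S : Finset ι) (f : ι → (Fin n →₀ ℕ)) (c : ι → ℚ) :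
    ∏ i ∈ S, MvPowerSeries.monomial (f i) (c i) =
      MvPowerSeries.monomial (∑ i ∈ S, f i) (∏ i ∈ S, c i) := by
  classical
  induction S using Finset.cons_induction with
  | empty => simp [MvPowerSeries.monomial_zero_one]
  | cons a s ha ih =>
    rw [Finset.prod_cons, ih, Finset.sum_cons, Finset.prod_cons,
      MvPowerSeries.monomial_mul_monomial]

lemma qprod_eq (i : ℕ) : qprod n i = MvPowerSeries.monomial (eQF n i) 1 := by
  rw [qprod, eQF]
  have : ∀ l : Fin n, (MvPowerSeries.X l : MvPowerSeries (Fin n) ℚ) = MvPowerSeries.monomial (Finsupp.single l 1) 1 :=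
    fun l => MvPowerSeries.X_def l
  rw [Finset.prod_congr rfl (fun l _ => this l), prod_monomial]
  simp

lemma prod_qprod (S : Finset ℕ) :
    ∏ i ∈ S, qprod n i = MvPowerSeries.monomial (ESF n S) 1 := by
  rw [Finset.prod_congr rfl (fun i _ => qprod_eq i), prod_monomial, ESF]
  simp

lemma tele (F : ℕ → ℤ) (a b : ℕ) (hab : a ≤ b) :
    ∑ j ∈ Finset.Icc (a + 1) b, (F (j - 1) - F j) = F a - F b := by
  induction b, hab using Nat.le_induction with
  | base => rw [Finset.Icc_eq_empty (by omega)]; simp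
  | succ b hab ih =>
    rw [← Finset.insert_Icc_right_eq_Icc_add_one (by omega), Finset.sum_insert (by simp [Finset.mem_Icc]),
      ih]
    have : b + 1 - 1 = b := by omega
    rw [this]; ring

lemma TS_nonneg (S : Finset ℕ) (k : ℕ) : (0 : ℤ) ≤ ∑ i ∈ S, (if k < i then (1 : ℤ) else 0) :=
  Finset.sum_nonneg fun i _ => by split <;> norm_num

lemma TS_gap (S : Finset ℕ) (j : ℕ) (hj : 1 ≤ j) :
    (∑ i ∈ S, if j - 1 < i then (1 : ℤ) else 0) - (∑ i ∈ S, if j < i then (1 : ℤ) else 0)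
      = if j ∈ S then 1 else 0 := by
  classical
  rw [← Finset.sum_sub_distrib]
  rw [Finset.sum_congr rfl (fun i _ => show (if j - 1 < i then (1:ℤ) else 0) - (if j < i then (1:ℤ) else 0) = if i = j then 1 else 0 by split_ifs <;> omega)]
  rw [Finset.sum_ite_eq' S j (fun _ => (1 : ℤ))]

lemma TS_telescope (S : Finset ℕ) (hS : ∀ i ∈ S, 1 ≤ i ∧ i ≤ n) (l : ℕ) (hl : l ≤ n) :
    (∑ i ∈ S, if l < i then (1 : ℤ) else 0)
      = ∑ j ∈ Finset.Icc (l + 1) n, (if j ∈ S then (1 : ℤ) else 0) := by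
  have h2 : (∑ i ∈ S, if n < i then (1 : ℤ) else 0) = 0 :=
    Finset.sum_eq_zero fun i hi => by rw [if_neg (by have := (hS i hi).2; omega)]
  have h1 : (∑ j ∈ Finset.Icc (l + 1) n, (if j ∈ S then (1 : ℤ) else 0))
      = (∑ i ∈ S, if l < i then (1 : ℤ) else 0) - (∑ i ∈ S, if n < i then (1 : ℤ) else 0) := by
    rw [← Finset.sum_congr rfl (fun j hj => TS_gap S j (by
      have := Finset.mem_Icc.mp hj; omega))]
    exact tele (fun k => ∑ i ∈ S, if k < i then (1 : ℤ) else 0) l n hl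
  rw [h2, sub_zero] at h1
  exact h1.symm

def dxF (d : Fin n →₀ ℕ) : ℕ → ℤ := fun k => if h : k < n then (d ⟨k, h⟩ : ℤ) else 0

lemma dx_telescope (d : Fin n →₀ ℕ) (l : ℕ) (hl : l ≤ n) :
    ∑ j ∈ Finset.Icc (l + 1) n, (dxF d (j - 1) - dxF d j) = dxF d l := by
  rw [tele (dxF d) l n hl, show dxF d n = 0 from dif_neg (by omega), sub_zero]

lemma K1 (d : Fin n →₀ ℕ) (w : Equiv.Perm (Fin n)) (t : Finset ℕ) (ht : t ⊆ Finset.Icc 1 n) :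
    (ESF n t ≤ d ∧ (∀ i j : Fin n, i ≤ j → (d - ESF n t) j ≤ (d - ESF n t) i) ∧
        CompatP ⇑(d - ESF n t) w)
      ↔ ∀ j ∈ Finset.Icc 1 n,
          (if j ∈ t then (1 : ℤ) else 0)
            ≤ dxF d (j - 1) - dxF d j - (if j ∈ DpermF w then 1 else 0) := by
  constructor
  · rintro ⟨hle, hwd, hcomp⟩ j hj
    obtain ⟨hj1, hjn⟩ := Finset.mem_Icc.mp hj
    have hle' : ∀ l : Fin n, ESF n t l ≤ d l := fun l => Finsupp.le_def.mp hle l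
    have hsub : ∀ l : Fin n, ((d - ESF n t) l : ℤ) = (d l : ℤ) - (ESF n t l : ℤ) := fun l => by
      rw [Finsupp.tsub_apply, Nat.cast_sub (hle' l)]
    by_cases hjn' : j < n
    · set k0 : Fin n := ⟨j - 1, by omega⟩ with hk0
      set k1 : Fin n := ⟨j, hjn'⟩ with hk1
      have hk01 : k0 < k1 := by rw [hk0, hk1, Fin.mk_lt_mk]; omega
      have hgap : dxF d (j - 1) - dxF d j = (d k0 : ℤ) - (d k1 : ℤ) := by
        simp only [dxF]
        rw [dif_pos (show j - 1 < n by omega), dif_pos hjn']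
      have hEgap : (ESF n t k0 : ℤ) - (ESF n t k1 : ℤ) = (if j ∈ t then 1 else 0) := by
        rw [ESF_apply, ESF_apply]
        push_cast
        exact TS_gap t j hj1
      have hwd01 : (d - ESF n t) k1 ≤ (d - ESF n t) k0 := hwd k0 k1 (le_of_lt hk01)
      by_cases hD : j ∈ DpermF w
      · have hjj : j - 1 + 1 = j := by omega
        have hk : j - 1 + 1 < n := by omega
        have hwlt : w k1 < w k0 := by
          have hmem : j - 1 + 1 ∈ DpermF w := by rwa [hjj]
          have hthis := (mem_DpermF_iff w (j - 1) hk).mp hmem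
          have e1 : (⟨j - 1 + 1, hk⟩ : Fin n) = k1 := Fin.ext (by simp [hk1]; omega)
          rwa [e1] at hthis
        have hstrict : (d - ESF n t) k1 < (d - ESF n t) k0 := by
          rcases lt_or_eq_of_le hwd01 with h | h
          · exact h
          · exact absurd (hcomp k0 k1 hk01 h.symm) (lt_asymm hwlt)
        rw [if_pos hD]
        have hcast : ((d - ESF n t) k1 : ℤ) + 1 ≤ ((d - ESF n t) k0 : ℤ) := by exact_mod_cast hstrict
        rw [hsub, hsub] at hcast
        rw [hgap, ← hEgap]
        linarith
      · rw [if_neg hD]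
        have hcast : ((d - ESF n t) k1 : ℤ) ≤ ((d - ESF n t) k0 : ℤ) := by exact_mod_cast hwd01
        rw [hsub, hsub] at hcast
        rw [hgap, ← hEgap]
        linarith
    · have hjeq : j = n := by omega
      have hDn : j ∉ DpermF w := fun hmem => by have := (mem_DpermF_bounds hmem).2; omega
      rw [if_neg hDn]
      have hdx : dxF d j = 0 := dif_neg (by omega)
      have hdx1 : dxF d (j - 1) = (d ⟨j - 1, by omega⟩ : ℤ) := dif_pos (by omega)
      set l : Fin n := ⟨j - 1, by omega⟩ with hl
      have h1 : (ESF n t l : ℤ) ≤ (d l : ℤ) := by exact_mod_cast hle' l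
      have h2 : (if j ∈ t then (1 : ℤ) else 0) ≤ (ESF n t l : ℤ) := by
        rw [ESF_apply]
        push_cast
        by_cases hnt : j ∈ t
        · rw [if_pos hnt]
          have hsingle := Finset.single_le_sum
            (f := fun i => if j - 1 < i then (1 : ℤ) else 0)
            (fun i _ => by split <;> norm_num) hnt
          rwa [if_pos (show j - 1 < j by omega)] at hsingle
        · rw [if_neg hnt]
          exact TS_nonneg t (l : ℕ)
      rw [hdx, hdx1]
      have : (d ⟨j - 1, by omega⟩ : ℤ) = (d l : ℤ) := rfl
      rw [this]
      linarith
  · intro H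
    have hle' : ∀ l : Fin n, ESF n t l ≤ d l := by
      intro l
      have hl : (l : ℕ) ≤ n := le_of_lt l.isLt
      have hTS := TS_telescope t (fun i hi => Finset.mem_Icc.mp (ht hi)) (l : ℕ) hl
      have hdx := dx_telescope d (l : ℕ) hl
      have hsum : ∑ j ∈ Finset.Icc ((l : ℕ) + 1) n, (if j ∈ t then (1 : ℤ) else 0)
          ≤ ∑ j ∈ Finset.Icc ((l : ℕ) + 1) n, (dxF d (j - 1) - dxF d j) := by
        apply Finset.sum_le_sum
        intro j hj
        have hj' : j ∈ Finset.Icc 1 n := by rw [Finset.mem_Icc] at hj ⊢; omega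
        have hH := H j hj'
        have hDnn : (0 : ℤ) ≤ (if j ∈ DpermF w then 1 else 0) := by split <;> norm_num
        linarith
      have hgoal : (ESF n t l : ℤ) ≤ (d l : ℤ) := by
        rw [ESF_apply]
        push_cast
        rw [hTS]
        refine hsum.trans ?_
        rw [hdx]
        simp only [dxF]
        rw [dif_pos l.isLt]
      exact_mod_cast hgoal
    have hle : ESF n t ≤ d := Finsupp.le_def.mpr hle'
    have hsub : ∀ l : Fin n, ((d - ESF n t) l : ℤ) = (d l : ℤ) - (ESF n t l : ℤ) := fun l => by
      rw [Finsupp.tsub_apply, Nat.cast_sub (hle' l)]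
    have hgapE : ∀ (k : ℕ) (hk : k + 1 < n),
        ((d - ESF n t) ⟨k, by omega⟩ : ℤ) - ((d - ESF n t) ⟨k + 1, hk⟩ : ℤ)
          = (dxF d k - dxF d (k + 1)) - (if k + 1 ∈ t then 1 else 0) := by
      intro k hk
      rw [hsub, hsub]
      have h1 : dxF d k = (d ⟨k, by omega⟩ : ℤ) := dif_pos (by omega)
      have h2 : dxF d (k + 1) = (d ⟨k + 1, hk⟩ : ℤ) := dif_pos hk
      have h3 : (ESF n t ⟨k, by omega⟩ : ℤ) - (ESF n t ⟨k + 1, hk⟩ : ℤ)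
          = (if k + 1 ∈ t then 1 else 0) := by
        rw [ESF_apply, ESF_apply]
        push_cast
        have := TS_gap t (k + 1) (by omega)
        simpa using this
      rw [h1, h2]
      linarith
    have hwdadj : ∀ (k : ℕ) (hk : k + 1 < n),
        (d - ESF n t) ⟨k + 1, hk⟩ ≤ (d - ESF n t) ⟨k, by omega⟩ := by
      intro k hk
      have hH := H (k + 1) (by rw [Finset.mem_Icc]; omega)
      rw [show k + 1 - 1 = k from rfl] at hH
      have hg := hgapE k hk
      have hDnn : (0 : ℤ) ≤ (if k + 1 ∈ DpermF w then 1 else 0) := by split <;> norm_num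
      have hfin : ((d - ESF n t) ⟨k + 1, hk⟩ : ℤ) ≤ ((d - ESF n t) ⟨k, by omega⟩ : ℤ) := by
        linarith
      exact_mod_cast hfin
    have hwd : ∀ i j : Fin n, i ≤ j → (d - ESF n t) j ≤ (d - ESF n t) i :=
      antitone_of_adjacent _ hwdadj
    refine ⟨hle, hwd, ?_⟩
    apply compat_of_adjacent _ hwd w
    intro k hk heq
    by_cases hD : (k + 1) ∈ DpermF w
    · exfalso
      have hH := H (k + 1) (by rw [Finset.mem_Icc]; omega)
      rw [show k + 1 - 1 = k from rfl, if_pos hD] at hH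
      have hg := hgapE k hk
      have htnn : (0 : ℤ) ≤ (if k + 1 ∈ t then 1 else 0) := by split <;> norm_num
      have heq' : ((d - ESF n t) ⟨k, by omega⟩ : ℤ) = ((d - ESF n t) ⟨k + 1, hk⟩ : ℤ) := by
        exact_mod_cast congrArg Nat.cast heq
      linarith
    · have hle'' : w ⟨k, by omega⟩ ≤ w ⟨k + 1, hk⟩ :=
        le_of_not_gt (fun hc => hD ((mem_DpermF_iff w k hk).mpr hc))
      refine lt_of_le_of_ne hle'' (fun hc => ?_)
      have := w.injective hc
      rw [Fin.mk.injEq] at this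
      omega

lemma K2 (d : Fin n →₀ ℕ) (w : Equiv.Perm (Fin n)) :
    ESF n (DpermF w) = d ↔
      ∀ j ∈ Finset.Icc 1 n, dxF d (j - 1) - dxF d j = (if j ∈ DpermF w then (1 : ℤ) else 0) := by
  constructor
  · intro h j hj
    obtain ⟨hj1, hjn⟩ := Finset.mem_Icc.mp hj
    subst h
    by_cases hjn' : j < n
    · rw [show dxF (ESF n (DpermF w)) (j - 1) = ((ESF n (DpermF w)) ⟨j - 1, by omega⟩ : ℤ)
          from dif_pos (by omega),
        show dxF (ESF n (DpermF w)) j = ((ESF n (DpermF w)) ⟨j, hjn'⟩ : ℤ) from dif_pos hjn']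
      rw [ESF_apply, ESF_apply]
      push_cast
      exact TS_gap _ j hj1
    · have hjeq : j = n := by omega
      have hDn : j ∉ DpermF w := fun hmem => by have := (mem_DpermF_bounds hmem).2; omega
      rw [if_neg hDn, show dxF (ESF n (DpermF w)) j = 0 from dif_neg (by omega)]
      rw [show dxF (ESF n (DpermF w)) (j - 1) = ((ESF n (DpermF w)) ⟨j - 1, by omega⟩ : ℤ)
          from dif_pos (by omega)]
      rw [ESF_apply]
      push_cast
      rw [sub_zero]
      exact Finset.sum_eq_zero fun i hi =>
        if_neg (by have := (mem_DpermF_bounds hi).2; omega)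
  · intro H
    apply Finsupp.ext
    intro l
    have hl : (l : ℕ) ≤ n := le_of_lt l.isLt
    have hb : ∀ i ∈ DpermF w, 1 ≤ i ∧ i ≤ n := fun i hi =>
      ⟨(mem_DpermF_bounds hi).1, le_of_lt (mem_DpermF_bounds hi).2⟩
    have h1 := TS_telescope (DpermF w) hb (l : ℕ) hl
    have h2 := dx_telescope d (l : ℕ) hl
    have hgoal : ((ESF n (DpermF w)) l : ℤ) = (d l : ℤ) := by
      rw [ESF_apply]
      push_cast
      rw [h1]
      rw [Finset.sum_congr rfl fun j hj =>
        (H j (by rw [Finset.mem_Icc] at hj ⊢; omega)).symm]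
      rw [h2]
      simp only [dxF]
      rw [dif_pos l.isLt]
    exact_mod_cast hgoal

lemma lhs16_coeff (x : Fin n →₀ ℕ) :
    MvPowerSeries.coeff x (lhs16 n) =
      if ∀ i j : Fin n, i ≤ j → x j ≤ x i
      then ((Finset.univ.filter (fun w : Equiv.Perm (Fin n) => CompatP ⇑x w)).card : ℚ)
      else 0 := by
  rw [MvPowerSeries.coeff_apply]
  show (if ∀ i j : Fin n, i ≤ j → x j ≤ x i then _ else 0) = _
  split_ifs with h
  · have hprod_ne : (∏ v ∈ Finset.image ⇑x Finset.univ,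
        (Nat.factorial (Finset.univ.filter (fun i => x i = v)).card : ℚ)) ≠ 0 :=
      Finset.prod_ne_zero_iff.mpr fun v _ =>
        Nat.cast_ne_zero.mpr (Nat.factorial_ne_zero _)
    rw [div_eq_iff hprod_ne]
    exact_mod_cast (compat_card (n := n) ⇑x).symm
  · rfl

lemma key_sum (d : Fin n →₀ ℕ) (w : Equiv.Perm (Fin n)) :
    ∑ t ∈ (Finset.Icc 1 n).powerset,
        (if ESF n t ≤ d ∧ (∀ i j : Fin n, i ≤ j → (d - ESF n t) j ≤ (d - ESF n t) i) ∧
            CompatP ⇑(d - ESF n t) w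
          then (-1 : ℚ) ^ t.card else 0)
      = if ESF n (DpermF w) = d then 1 else 0 := by
  classical
  by_cases hneg : ∀ j ∈ Finset.Icc 1 n,
      (0 : ℤ) ≤ dxF d (j - 1) - dxF d j - (if j ∈ DpermF w then 1 else 0)
  · set U := (Finset.Icc 1 n).filter
      (fun j => 1 ≤ dxF d (j - 1) - dxF d j - (if j ∈ DpermF w then 1 else 0)) with hU
    have hcond : ∀ t ∈ (Finset.Icc 1 n).powerset,
        ((ESF n t ≤ d ∧ (∀ i j : Fin n, i ≤ j → (d - ESF n t) j ≤ (d - ESF n t) i) ∧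
          CompatP ⇑(d - ESF n t) w) ↔ t ⊆ U) := by
      intro t htp
      have ht := Finset.mem_powerset.mp htp
      rw [K1 d w t ht]
      constructor
      · intro h a ha
        have haI : a ∈ Finset.Icc 1 n := ht ha
        have h2 := h a haI
        rw [if_pos ha] at h2
        exact Finset.mem_filter.mpr ⟨haI, h2⟩
      · intro hsub j hj
        by_cases hjt : j ∈ t
        · rw [if_pos hjt]; exact (Finset.mem_filter.mp (hsub hjt)).2
        · rw [if_neg hjt]; exact hneg j hj
    rw [Finset.sum_congr rfl (fun t htp => by rw [if_congr (hcond t htp) rfl rfl])]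
    rw [← Finset.sum_filter]
    have hUsub : U ⊆ Finset.Icc 1 n := Finset.filter_subset _ _
    have hfeq : (Finset.Icc 1 n).powerset.filter (fun t => t ⊆ U) = U.powerset := by
      ext t
      simp only [Finset.mem_powerset, Finset.mem_filter]
      exact ⟨fun h => h.2, fun h => ⟨h.trans hUsub, h⟩⟩
    rw [hfeq]
    have hcast : ∑ t ∈ U.powerset, (-1 : ℚ) ^ t.card
        = ((∑ t ∈ U.powerset, (-1 : ℤ) ^ t.card : ℤ) : ℚ) := by push_cast; rfl
    rw [hcast, Finset.sum_powerset_neg_one_pow_card]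
    have hiff : U = ∅ ↔ ESF n (DpermF w) = d := by
      rw [K2 d w]
      constructor
      · intro hUe j hj
        have h0 := hneg j hj
        have h1 : ¬ (1 ≤ dxF d (j - 1) - dxF d j - (if j ∈ DpermF w then 1 else 0)) := by
          intro hc
          have : j ∈ U := Finset.mem_filter.mpr ⟨hj, hc⟩
          rw [hUe] at this
          simp at this
        omega
      · intro hEq
        rw [Finset.eq_empty_iff_forall_notMem]
        intro j hjU
        obtain ⟨hjI, hj1⟩ := Finset.mem_filter.mp hjU
        have := hEq j hjI
        omega
    by_cases hem : ESF n (DpermF w) = d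
    · rw [if_pos hem, if_pos (hiff.mpr hem)]; norm_num
    · rw [if_neg hem, if_neg (fun hc => hem (hiff.mp hc))]; norm_num
  · push_neg at hneg
    obtain ⟨j0, hj0I, hj0⟩ := hneg
    rw [Finset.sum_eq_zero, eq_comm, if_neg]
    · intro hc
      rw [K2 d w] at hc
      have := hc j0 hj0I
      omega
    · intro t htp
      rw [if_neg]
      intro hcond
      rw [K1 d w t (Finset.mem_powerset.mp htp)] at hcond
      have h1 := hcond j0 hj0I
      have h2 : (0 : ℤ) ≤ if j0 ∈ t then (1 : ℤ) else 0 := by split <;> norm_num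
      omega


/-- Adin–Brenti–Roichman:
`Σ_{λ∈Par(n)} (n choose m(λ)) ∏ qᵢ^{λᵢ}
  = (Σ_{w∈Sₙ} ∏_{i∈D(w)} q₁⋯qᵢ) / ∏_{j=1}^n (1 - q₁⋯qⱼ)`,
as formal power series in `q₁,…,qₙ` (stated with the denominator cleared). -/
theorem stmt_16 (n : ℕ) :
    lhs16 n * ∏ j ∈ Finset.Icc 1 n, (1 - qprod n j)
      = ∑ w : Equiv.Perm (Fin n), ∏ i ∈ DpermF w, qprod n i := by
  apply MvPowerSeries.ext
  intro d
  have hR : MvPowerSeries.coeff d (∑ w : Equiv.Perm (Fin n), ∏ i ∈ DpermF w, qprod n i)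
      = ∑ w : Equiv.Perm (Fin n), (if ESF n (DpermF w) = d then (1 : ℚ) else 0) := by
    rw [map_sum]
    apply Finset.sum_congr rfl
    intro w _
    rw [prod_qprod, MvPowerSeries.coeff_monomial]
    exact if_congr eq_comm rfl rfl
  have hden : (∏ j ∈ Finset.Icc 1 n, (1 - qprod n j))
      = ∑ t ∈ (Finset.Icc 1 n).powerset,
          MvPowerSeries.monomial (ESF n t) ((-1) ^ t.card) := by
    have h1 : ∀ j ∈ Finset.Icc 1 n, (1 - qprod n j) = (-(qprod n j)) + 1 := fun j _ => by ring
    rw [Finset.prod_congr rfl h1, Finset.prod_add]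
    apply Finset.sum_congr rfl
    intro t htp
    rw [Finset.prod_const_one, mul_one]
    have h2 : ∀ i ∈ t, -(qprod n i) = MvPowerSeries.monomial (eQF n i) (-1) := by
      intro i _
      rw [qprod_eq]
      exact (map_neg (MvPowerSeries.monomial (eQF n i)) 1).symm
    rw [Finset.prod_congr rfl h2, prod_monomial, Finset.prod_const]
    rfl
  rw [hR, hden, Finset.mul_sum, map_sum]
  have hterm : ∀ t ∈ (Finset.Icc 1 n).powerset,
      MvPowerSeries.coeff d (lhs16 n * MvPowerSeries.monomial (ESF n t) ((-1) ^ t.card))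
        = ∑ w : Equiv.Perm (Fin n),
            (if ESF n t ≤ d ∧ (∀ i j : Fin n, i ≤ j → (d - ESF n t) j ≤ (d - ESF n t) i) ∧
                CompatP ⇑(d - ESF n t) w
              then (-1 : ℚ) ^ t.card else 0) := by
    intro t _
    rw [MvPowerSeries.coeff_mul_monomial]
    by_cases h1 : ESF n t ≤ d
    · rw [if_pos h1, lhs16_coeff]
      by_cases h2 : ∀ i j : Fin n, i ≤ j → (d - ESF n t) j ≤ (d - ESF n t) i
      · rw [if_pos h2, Finset.card_filter]
        push_cast
        rw [Finset.sum_mul]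
        apply Finset.sum_congr rfl
        intro w _
        by_cases hc : CompatP ⇑(d - ESF n t) w <;> simp_all
      · rw [if_neg h2, zero_mul]
        symm
        apply Finset.sum_eq_zero
        intro w _
        rw [if_neg (by tauto)]
    · rw [if_neg h1]
      symm
      apply Finset.sum_eq_zero
      intro w _
      rw [if_neg (by tauto)]
  rw [Finset.sum_congr rfl hterm, Finset.sum_comm]
  exact Finset.sum_congr rfl fun w _ => key_sum d w
end
end
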